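/- arXiv:2311.10583 — 7 statements merged into one kernel-verified Lean document; each statement's English description precedes it below -/
import Mathlib

section
/- For any formula A of the bimodal language L₂, GR ⊢ A if and only if GR° ⊢ □A. -/
/-- Formulas of the bimodal language `L₂`: countably many propositional
variables, `⊥`, `¬`, `∨`, and two modal operators `□` (`box`) and `■` (`bb`). -/
inductive Formula : Type
  | var : ℕ → Formula
  | falsum : Formula
  | neg : Formula → Formula
  | or : Formula → Formula → Formula
  | box : Formula → Formula
  | bb : Formula → Formula

namespace Formula

/-- `A → B` is defined as `¬A ∨ B`. -/
def imp (A B : Formula) : Formula := (A.neg).or B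

/-- `A ∧ B` is defined as `¬(¬A ∨ ¬B)`. -/
def and (A B : Formula) : Formula := ((A.neg).or B.neg).neg

/-- `◇A` abbreviates `¬□¬A`. -/
def dia (A : Formula) : Formula := ((A.neg).box).neg

end Formula

/-- Propositional evaluation: variables and formulas of the form `□A`, `■A`
are treated as atoms whose truth value is given by `v`. -/
def evalProp (v : Formula → Bool) : Formula → Bool
  | .var n => v (.var n)
  | .falsum => false
  | .neg A => !(evalProp v A)
  | .or A B => evalProp v A || evalProp v B
  | .box A => v (.box A)
  | .bb A => v (.bb A)

/-- Propositional tautologies of the bimodal language `L₂`. -/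
def Taut (A : Formula) : Prop := ∀ v : Formula → Bool, evalProp v A = true

/-- The logic GR. -/
inductive GR : Formula → Prop
  | taut {A : Formula} : Taut A → GR A
  | k {A B : Formula} : GR (((A.imp B).box).imp ((A.box).imp (B.box)))
  | loeb {A : Formula} : GR ((((A.box).imp A).box).imp (A.box))
  | bbBox {A : Formula} : GR ((A.bb).imp (A.box))
  | boxBb {A : Formula} : GR ((A.box).imp ((A.bb).box))
  | ros {A : Formula} : GR ((A.box).imp ((Formula.falsum.box).or (A.bb)))
  | diaBb {A : Formula} : GR (((A.bb).dia).imp (A.dia))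
  | mp {A B : Formula} : GR (A.imp B) → GR A → GR B
  | nec {A : Formula} : GR A → GR (A.box)
  | boxElim {A : Formula} : GR (A.box) → GR A

/-- The logic GRcirc. -/
inductive GRcirc : Formula → Prop
  | taut {A : Formula} : Taut A → GRcirc A
  | k {A B : Formula} : GRcirc (((A.imp B).box).imp ((A.box).imp (B.box)))
  | loeb {A : Formula} : GRcirc ((((A.box).imp A).box).imp (A.box))
  | bbBox {A : Formula} : GRcirc ((A.bb).imp (A.box))
  | boxBb {A : Formula} : GRcirc ((A.box).imp ((A.bb).box))
  | ros {A : Formula} : GRcirc ((A.box).imp ((Formula.falsum.box).or (A.bb)))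
  | diaBb {A : Formula} : GRcirc (((A.bb).dia).imp (A.dia))
  | mp {A B : Formula} : GRcirc (A.imp B) → GRcirc A → GRcirc B
  | nec {A : Formula} : GRcirc A → GRcirc (A.box)
  | bbnec {A : Formula} : GRcirc A → GRcirc (A.bb)

deriving instance DecidableEq for Formula

namespace GRProof

/-! ### Propositional toolkit for GRcirc -/

private lemma t_and_l (A B : Formula) : GRcirc ((A.and B).imp A) := by
  apply GRcirc.taut; intro v
  simp only [Formula.imp, Formula.and, evalProp]
  cases evalProp v A <;> cases evalProp v B <;> rfl

private lemma t_and_r (A B : Formula) : GRcirc ((A.and B).imp B) := by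
  apply GRcirc.taut; intro v
  simp only [Formula.imp, Formula.and, evalProp]
  cases evalProp v A <;> cases evalProp v B <;> rfl

private lemma t_trans (A B C : Formula) :
    GRcirc ((A.imp B).imp ((B.imp C).imp (A.imp C))) := by
  apply GRcirc.taut; intro v
  simp only [Formula.imp, Formula.and, evalProp]
  cases evalProp v A <;> cases evalProp v B <;> cases evalProp v C <;> rfl

private lemma t_exfalso (A : Formula) : GRcirc (Formula.falsum.imp A) := by
  apply GRcirc.taut; intro v
  simp only [Formula.imp, Formula.and, evalProp]
  cases evalProp v A <;> rfl

private lemma t_imp_and (G A B : Formula) :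
    GRcirc ((G.imp A).imp ((G.imp B).imp (G.imp (A.and B)))) := by
  apply GRcirc.taut; intro v
  simp only [Formula.imp, Formula.and, evalProp]
  cases evalProp v G <;> cases evalProp v A <;> cases evalProp v B <;> rfl

private lemma t_imp_contra (G A : Formula) :
    GRcirc ((G.imp A).imp ((G.imp A.neg).imp (G.imp Formula.falsum))) := by
  apply GRcirc.taut; intro v
  simp only [Formula.imp, Formula.and, evalProp]
  cases evalProp v G <;> cases evalProp v A <;> rfl

private lemma t_const (A G : Formula) : GRcirc (A.imp (G.imp A)) := by
  apply GRcirc.taut; intro v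
  simp only [Formula.imp, Formula.and, evalProp]
  cases evalProp v G <;> cases evalProp v A <;> rfl

private lemma t_or_elim (A B C : Formula) :
    GRcirc ((A.imp C).imp ((B.imp C).imp ((A.or B).imp C))) := by
  apply GRcirc.taut; intro v
  simp only [Formula.imp, Formula.and, evalProp]
  cases evalProp v A <;> cases evalProp v B <;> cases evalProp v C <;> rfl

private lemma t_contrapos (A B : Formula) :
    GRcirc (((A.neg).imp (B.neg)).imp (B.imp A)) := by
  apply GRcirc.taut; intro v
  simp only [Formula.imp, Formula.and, evalProp]
  cases evalProp v A <;> cases evalProp v B <;> rfl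

private lemma t_imp_or_neg (G A B : Formula) :
    GRcirc ((G.imp (A.or B)).imp ((G.imp A.neg).imp (G.imp B))) := by
  apply GRcirc.taut; intro v
  simp only [Formula.imp, Formula.and, evalProp]
  cases evalProp v G <;> cases evalProp v A <;> cases evalProp v B <;> rfl

private lemma t_curry (A B C : Formula) :
    GRcirc ((A.imp (B.imp C)).imp ((A.and B).imp C)) := by
  apply GRcirc.taut; intro v
  simp only [Formula.imp, Formula.and, evalProp]
  cases evalProp v A <;> cases evalProp v B <;> cases evalProp v C <;> rfl

private lemma t_top : GRcirc (Formula.falsum.neg) := by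
  apply GRcirc.taut; intro v; rfl

private lemma t_refl (A : Formula) : GRcirc (A.imp A) := by
  apply GRcirc.taut; intro v
  simp only [Formula.imp, Formula.and, evalProp]
  cases evalProp v A <;> rfl

private lemma t_shuffle1 (L P B : Formula) :
    GRcirc (((L.and (P.and B.neg)).imp Formula.falsum).imp (L.imp (P.imp B))) := by
  apply GRcirc.taut; intro v
  simp only [Formula.imp, Formula.and, evalProp]
  cases evalProp v L <;> cases evalProp v P <;> cases evalProp v B <;> rfl

private lemma t_and_mono (P P' Q Q' : Formula) :
    GRcirc ((P.imp P').imp ((Q.imp Q').imp ((P.and Q).imp (P'.and Q')))) := by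
  apply GRcirc.taut; intro v
  simp only [Formula.imp, Formula.and, evalProp]
  cases evalProp v P <;> cases evalProp v P' <;> cases evalProp v Q <;>
    cases evalProp v Q' <;> rfl

private lemma t_pair_right (P Q A : Formula) :
    GRcirc ((P.imp Q).imp (A.imp (P.imp (A.and Q)))) := by
  apply GRcirc.taut; intro v
  simp only [Formula.imp, Formula.and, evalProp]
  cases evalProp v P <;> cases evalProp v Q <;> cases evalProp v A <;> rfl

private lemma t_neg_imp (A : Formula) :
    GRcirc (((A.neg).imp Formula.falsum).imp A) := by
  apply GRcirc.taut; intro v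
  simp only [Formula.imp, Formula.and, evalProp]
  cases evalProp v A <;> rfl

private lemma t_and_intro (A B : Formula) : GRcirc (A.imp (B.imp (A.and B))) := by
  apply GRcirc.taut; intro v
  simp only [Formula.imp, Formula.and, evalProp]
  cases evalProp v A <;> cases evalProp v B <;> rfl

/-! derived rules -/

private lemma mp2 {A B C : Formula} (h : GRcirc (A.imp (B.imp C)))
    (ha : GRcirc A) (hb : GRcirc B) : GRcirc C :=
  GRcirc.mp (GRcirc.mp h ha) hb

private lemma imp_trans {A B C : Formula} (h1 : GRcirc (A.imp B))
    (h2 : GRcirc (B.imp C)) : GRcirc (A.imp C) := mp2 (t_trans A B C) h1 h2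

private lemma imp_and {G A B : Formula} (h1 : GRcirc (G.imp A))
    (h2 : GRcirc (G.imp B)) : GRcirc (G.imp (A.and B)) := mp2 (t_imp_and G A B) h1 h2

private lemma imp_contra {G A : Formula} (h1 : GRcirc (G.imp A))
    (h2 : GRcirc (G.imp A.neg)) : GRcirc (G.imp Formula.falsum) :=
  mp2 (t_imp_contra G A) h1 h2

private lemma const_imp {A : Formula} (G : Formula) (h : GRcirc A) :
    GRcirc (G.imp A) := GRcirc.mp (t_const A G) h

private lemma or_elim {A B C : Formula} (h1 : GRcirc (A.imp C))
    (h2 : GRcirc (B.imp C)) : GRcirc ((A.or B).imp C) := mp2 (t_or_elim A B C) h1 h2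

private lemma contrapos {A B : Formula} (h : GRcirc ((A.neg).imp (B.neg))) :
    GRcirc (B.imp A) := GRcirc.mp (t_contrapos A B) h

private lemma imp_or_neg {G A B : Formula} (h1 : GRcirc (G.imp (A.or B)))
    (h2 : GRcirc (G.imp A.neg)) : GRcirc (G.imp B) := mp2 (t_imp_or_neg G A B) h1 h2

private lemma curry {A B C : Formula} (h : GRcirc (A.imp (B.imp C))) :
    GRcirc ((A.and B).imp C) := GRcirc.mp (t_curry A B C) h

private lemma and_mono {P P' Q Q' : Formula} (h1 : GRcirc (P.imp P'))
    (h2 : GRcirc (Q.imp Q')) : GRcirc ((P.and Q).imp (P'.and Q')) :=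
  mp2 (t_and_mono P P' Q Q') h1 h2

/-! modal toolkit -/

private lemma box_mono {A B : Formula} (h : GRcirc (A.imp B)) :
    GRcirc ((A.box).imp (B.box)) := GRcirc.mp GRcirc.k (GRcirc.nec h)

private lemma box_and_intro (A B : Formula) :
    GRcirc (((A.box).and (B.box)).imp ((A.and B).box)) := by
  have h2 := box_mono (t_and_intro A B)
  have h3 : GRcirc (((B.imp (A.and B)).box).imp ((B.box).imp ((A.and B).box))) :=
    GRcirc.k
  exact curry (imp_trans h2 h3)

private lemma four (A : Formula) : GRcirc ((A.box).imp ((A.box).box)) := by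
  have c1 : GRcirc (((A.and (A.box)).box).imp (A.box)) := box_mono (t_and_l A (A.box))
  have d : GRcirc (A.imp (((A.and (A.box)).box).imp (A.and (A.box)))) :=
    GRcirc.mp (t_pair_right ((A.and (A.box)).box) (A.box) A) c1
  have e := box_mono d
  have f := imp_trans e (GRcirc.loeb (A := A.and (A.box)))
  exact imp_trans f (box_mono (t_and_r A (A.box)))

private lemma box_bot_imp (C : Formula) :
    GRcirc ((Formula.falsum.box).imp (C.box)) := box_mono (t_exfalso C)

private lemma ax4_contra (B : Formula) :
    GRcirc (((B.neg).box).imp (((B.bb).neg).box)) := contrapos GRcirc.diaBb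

/-! ### Finite conjunctions and disjunctions -/

def conjL : List Formula → Formula
  | [] => Formula.falsum.neg
  | C :: L => C.and (conjL L)

def disjL : List Formula → Formula
  | [] => Formula.falsum
  | C :: L => C.or (disjL L)

private lemma conj_mem {C : Formula} : ∀ {L : List Formula}, C ∈ L →
    GRcirc ((conjL L).imp C)
  | D :: L, h => by
    rcases List.mem_cons.1 h with rfl | h
    · exact t_and_l _ _
    · exact imp_trans (t_and_r _ _) (conj_mem h)

private lemma conj_intro {G : Formula} : ∀ {L : List Formula},
    (∀ C ∈ L, GRcirc (G.imp C)) → GRcirc (G.imp (conjL L))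
  | [], _ => const_imp G t_top
  | D :: L, h => by
    exact imp_and (h D List.mem_cons_self)
      (conj_intro fun C hC => h C (List.mem_cons_of_mem _ hC))

private lemma disj_elim {G : Formula} : ∀ {L : List Formula},
    (∀ C ∈ L, GRcirc (C.imp G)) → GRcirc ((disjL L).imp G)
  | [], _ => t_exfalso G
  | D :: L, h => by
    exact or_elim (h D List.mem_cons_self)
      (disj_elim fun C hC => h C (List.mem_cons_of_mem _ hC))

private lemma box_conj : ∀ (L : List Formula),
    GRcirc ((conjL (L.map Formula.box)).imp ((conjL L).box))
  | [] => const_imp _ (GRcirc.nec t_top)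
  | D :: L => by
    have h1 : GRcirc ((conjL ((D :: L).map Formula.box)).imp
        ((D.box).and ((conjL L).box))) := and_mono (t_refl _) (box_conj L)
    exact imp_trans h1 (box_and_intro _ _)

private lemma eval_and (v : Formula → Bool) (A B : Formula) :
    evalProp v (A.and B) = (evalProp v A && evalProp v B) := by
  simp only [Formula.and, evalProp]
  cases evalProp v A <;> cases evalProp v B <;> rfl

private lemma eval_imp (v : Formula → Bool) (A B : Formula) :
    evalProp v (A.imp B) = (!evalProp v A || evalProp v B) := rfl

private lemma eval_conjL (v : Formula → Bool) : ∀ (L : List Formula),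
    evalProp v (conjL L) = L.all (evalProp v)
  | [] => rfl
  | D :: L => by
    simp only [conjL, eval_and, eval_conjL v L, List.all_cons]

private lemma eval_disjL (v : Formula → Bool) : ∀ (L : List Formula),
    evalProp v (disjL L) = L.any (evalProp v)
  | [] => rfl
  | D :: L => by
    simp only [disjL, evalProp, eval_disjL v L, List.any_cons]

end GRProof

namespace GRProof

/-! ### Consistency, descriptions, worlds -/

def Con (G : Formula) : Prop := ¬ GRcirc (G.imp Formula.falsum)

section Canonical

variable (Φl : List Formula)

/-- The adequate (finite) set as a finset. -/
def Φs : Finset Formula := Φl.toFinset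

/-- The complete description of a subset `X` of the adequate set. -/
def chi (X : Finset Formula) : Formula :=
  conjL (Φl.map (fun C => if C ∈ X then C else C.neg))

/-- Worlds of the canonical model. -/
structure Wld where
  s : Finset Formula
  sub : s ⊆ Φs Φl
  con : Con (chi Φl s)

variable {Φl}

lemma chi_mem {C : Formula} {X : Finset Formula} (hC : C ∈ Φl) (hX : C ∈ X) :
    GRcirc ((chi Φl X).imp C) := by
  refine conj_mem (List.mem_map.2 ⟨C, hC, ?_⟩)
  simp [hX]

lemma chi_nmem {C : Formula} {X : Finset Formula} (hC : C ∈ Φl) (hX : C ∉ X) :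
    GRcirc ((chi Φl X).imp C.neg) := by
  refine conj_mem (List.mem_map.2 ⟨C, hC, ?_⟩)
  simp [hX]

lemma world_closed (X : Wld Φl) {C : Formula}
    (h : GRcirc ((chi Φl X.s).imp C)) (hC : C ∈ Φl) : C ∈ X.s := by
  by_contra hn
  exact X.con (imp_contra h (chi_nmem hC hn))

/-- Finite Lindenbaum lemma. -/
lemma lind (G : Formula) (hG : Con G) :
    ∃ X : Finset Formula, X ⊆ Φs Φl ∧ Con (G.and (chi Φl X)) := by
  classical
  by_contra h
  push_neg at h
  have h' : ∀ X : Finset Formula, X ⊆ Φs Φl →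
      GRcirc ((G.and (chi Φl X)).imp Formula.falsum) := by
    intro X hX
    by_contra hc
    exact (h X hX) hc
  set L : List Formula :=
    ((Φs Φl).powerset.toList).map (fun X => G.and (chi Φl X)) with hL
  have htaut : GRcirc (G.imp (disjL L)) := by
    apply GRcirc.taut
    intro v
    rw [eval_imp]
    cases hg : evalProp v G
    · rfl
    · rw [eval_disjL]
      have : L.any (evalProp v) = true := by
        rw [List.any_eq_true]
        refine ⟨G.and (chi Φl ((Φs Φl).filter (fun C => evalProp v C = true))),
          List.mem_map.2 ⟨_, ?_, rfl⟩, ?_⟩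
        · rw [Finset.mem_toList, Finset.mem_powerset]
          exact Finset.filter_subset _ _
        · rw [eval_and, hg, Bool.true_and, chi, eval_conjL, List.all_eq_true]
          intro b hb
          rcases List.mem_map.1 hb with ⟨C, hCl, rfl⟩
          by_cases hCX : C ∈ (Φs Φl).filter (fun C => evalProp v C = true)
          · rw [if_pos hCX]
            exact (Finset.mem_filter.1 hCX).2
          · rw [if_neg hCX]
            have : evalProp v C = false := by
              by_contra he
              exact hCX (Finset.mem_filter.2 ⟨List.mem_toFinset.2 hCl,
                by simpa using he⟩)
            simp [evalProp, this]
      simp [this]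
  have hdisj : GRcirc ((disjL L).imp Formula.falsum) := by
    refine disj_elim ?_
    intro C hC
    rcases List.mem_map.1 hC with ⟨X, hX, rfl⟩
    exact h' X (Finset.mem_powerset.1 (Finset.mem_toList.1 hX))
  exact hG (imp_trans htaut hdisj)

lemma lind_world (G : Formula) (hG : Con G) :
    ∃ X : Wld Φl, Con (G.and (chi Φl X.s)) := by
  obtain ⟨X, hsub, hcon⟩ := lind G hG
  have hX : Con (chi Φl X) := by
    intro hc
    exact hcon (imp_trans (t_and_r _ _) hc)
  exact ⟨⟨X, hsub, hX⟩, hcon⟩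

lemma lind_mem {G C : Formula} {X : Wld Φl} (h : Con (G.and (chi Φl X.s)))
    (hGC : GRcirc (G.imp C)) (hC : C ∈ Φl) : C ∈ X.s := by
  by_contra hn
  exact h (imp_contra (imp_trans (t_and_l _ _) hGC)
    (imp_trans (t_and_r _ _) (chi_nmem hC hn)))

lemma world_ncon {C : Formula} {X : Wld Φl} (h1 : C ∈ Φl) (h2 : C.neg ∈ Φl)
    (hC : C ∈ X.s) (hnC : C.neg ∈ X.s) : False :=
  X.con (imp_contra (chi_mem h1 hC) (chi_mem h2 hnC))

/-! ### The accessibility relation -/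

def Rel (X Y : Wld Φl) : Prop :=
  (∀ C : Formula, C.box ∈ Φl → C.box ∈ X.s → C ∈ Y.s ∧ C.box ∈ Y.s) ∧
  (∃ C : Formula, C.box ∈ Φl ∧ C.box ∈ Y.s ∧ C.box ∉ X.s)

lemma Rel_trans {X Y Z : Wld Φl} (h1 : Rel X Y) (h2 : Rel Y Z) : Rel X Z := by
  refine ⟨fun C hC hX => h2.1 C hC (h1.1 C hC hX).2, ?_⟩
  obtain ⟨C, hC, hY, hnX⟩ := h1.2
  exact ⟨C, hC, (h2.1 C hC hY).2, hnX⟩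

/-- The list of formulas `C` with `□C` in the world. -/
def unboxIn (X : Finset Formula) : Formula → Option Formula
  | Formula.box C => if Formula.box C ∈ X then some C else none
  | _ => none

def LbL (X : Finset Formula) : List Formula :=
  Φl.filterMap (unboxIn X)

lemma mem_LbL {C : Formula} {X : Finset Formula} :
    C ∈ LbL (Φl := Φl) X ↔ (C.box ∈ Φl ∧ C.box ∈ X) := by
  constructor
  · intro h
    rcases List.mem_filterMap.1 h with ⟨D, hD, hf⟩
    cases D <;> simp only [unboxIn] at hf
    case box E =>
      by_cases hE : Formula.box E ∈ X
      · rw [if_pos hE] at hf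
        cases hf
        exact ⟨hD, hE⟩
      · rw [if_neg hE] at hf
        cases hf
    all_goals cases hf
  · rintro ⟨h1, h2⟩
    exact List.mem_filterMap.2 ⟨C.box, h1, by simp [unboxIn, h2]⟩

/-- `χ_X → □(⋀ {C ∧ □C : □C ∈ X})`. -/
lemma chi_box_conj (X : Wld Φl) :
    GRcirc ((chi Φl X.s).imp
      ((conjL ((LbL (Φl := Φl) X.s).map (fun C => C.and (C.box)))).box)) := by
  have h : GRcirc ((chi Φl X.s).imp
      (conjL (((LbL (Φl := Φl) X.s).map (fun C => C.and (C.box))).map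
        Formula.box))) := by
    refine conj_intro ?_
    intro D hD
    rw [List.map_map] at hD
    rcases List.mem_map.1 hD with ⟨C, hC, rfl⟩
    have hm := mem_LbL.1 hC
    have h1 : GRcirc ((chi Φl X.s).imp (C.box)) := chi_mem hm.1 hm.2
    have h2 : GRcirc ((chi Φl X.s).imp ((C.box).box)) := imp_trans h1 (four C)
    exact imp_trans (imp_and h1 h2) (box_and_intro C (C.box))
  exact imp_trans h (box_conj _)

/-- The key successor lemma. -/
lemma succ_lemma (X : Wld Φl) (B : Formula) (hB : B.box ∈ Φl) (hnB : B.box ∉ X.s)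
    (hBm : B ∈ Φl) (hclose : ∀ C, C.box ∈ Φl → C ∈ Φl) :
    ∃ Y : Wld Φl, Rel X Y ∧ ¬ GRcirc ((chi Φl Y.s).imp B) := by
  set Lc := conjL ((LbL (Φl := Φl) X.s).map (fun C => C.and (C.box))) with hLc
  set G := Lc.and ((B.box).and B.neg) with hG
  have hConG : Con G := by
    intro hGf
    have h1 : GRcirc (Lc.imp ((B.box).imp B)) :=
      GRcirc.mp (t_shuffle1 Lc (B.box) B) hGf
    have h2 : GRcirc ((Lc.box).imp (B.box)) :=
      imp_trans (box_mono h1) (GRcirc.loeb (A := B))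
    have h3 : GRcirc ((chi Φl X.s).imp (B.box)) := imp_trans (chi_box_conj X) h2
    exact hnB (world_closed X h3 hB)
  obtain ⟨Y, hY⟩ := lind_world G hConG
  have hGLc : GRcirc (G.imp Lc) := t_and_l _ _
  have hGbox : GRcirc (G.imp (B.box)) := imp_trans (t_and_r _ _) (t_and_l _ _)
  have hGnB : GRcirc (G.imp B.neg) := imp_trans (t_and_r _ _) (t_and_r _ _)
  refine ⟨Y, ⟨⟨?_, ⟨B, hB, lind_mem hY hGbox hB, hnB⟩⟩, ?_⟩⟩
  · intro C hCb hCX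
    have hmem : (C.and (C.box)) ∈ (LbL (Φl := Φl) X.s).map (fun C => C.and (C.box)) :=
      List.mem_map.2 ⟨C, mem_LbL.2 ⟨hCb, hCX⟩, rfl⟩
    have hGc : GRcirc (G.imp (C.and (C.box))) := imp_trans hGLc (conj_mem hmem)
    exact ⟨lind_mem hY (imp_trans hGc (t_and_l _ _)) (hclose C hCb),
      lind_mem hY (imp_trans hGc (t_and_r _ _)) hCb⟩
  · intro hYB
    exact hY (imp_contra (imp_trans (t_and_r _ _) hYB)
      (imp_trans (t_and_l _ _) hGnB))

end Canonical

end GRProof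

namespace GRProof

/-! ### Adequate sets -/

structure Adeq (Φl : List Formula) : Prop where
  neg_mem : ∀ B : Formula, B.neg ∈ Φl → B ∈ Φl
  or_mem : ∀ B C : Formula, B.or C ∈ Φl → B ∈ Φl ∧ C ∈ Φl
  box_mem : ∀ B : Formula, B.box ∈ Φl → B ∈ Φl
  bb_mem : ∀ B : Formula, B.bb ∈ Φl → B ∈ Φl ∧ B.box ∈ Φl ∧ (B.neg).box ∈ Φl ∧
    ((B.bb).neg).box ∈ Φl ∧ (B.bb).box ∈ Φl ∧ (B.bb).neg ∈ Φl
  bot_mem : Formula.falsum ∈ Φl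
  boxbot_mem : Formula.falsum.box ∈ Φl

section Model

variable {Φl : List Formula}

lemma dead_succ (ad : Adeq Φl) (X : Wld Φl) (h : Formula.falsum.box ∉ X.s) :
    ∃ Y, Rel X Y := by
  obtain ⟨Y, hY, -⟩ := succ_lemma X Formula.falsum ad.boxbot_mem h ad.bot_mem ad.box_mem
  exact ⟨Y, hY⟩

lemma no_succ (ad : Adeq Φl) {X Y : Wld Φl} (h : Formula.falsum.box ∈ X.s)
    (hR : Rel X Y) : False :=
  Y.con (chi_mem ad.bot_mem (hR.1 Formula.falsum ad.boxbot_mem h).1)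

lemma succ_iff (ad : Adeq Φl) (X : Wld Φl) :
    (∃ Y, Rel X Y) ↔ Formula.falsum.box ∉ X.s := by
  constructor
  · rintro ⟨Y, hY⟩ h
    exact no_succ ad h hY
  · exact dead_succ ad X

/-! ### The model with an extra root -/

/-- Accessibility on the canonical model extended with a root `none`. -/
def Rp (X₀ : Wld Φl) : Option (Wld Φl) → Option (Wld Φl) → Prop
  | some X, some Y => Rel X Y
  | none, some Y => Y = X₀ ∨ Rel X₀ Y
  | _, none => False

def extV : Option (Wld Φl) → ℕ → Prop
  | some X, n => Formula.var n ∈ X.s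
  | none, _ => False

def extS : Option (Wld Φl) → Formula → Prop
  | some X, B => B.bb ∈ X.s
  | none, _ => False

/-- Satisfaction in the extended canonical model. -/
def sat (X₀ : Wld Φl) : Formula → Option (Wld Φl) → Prop
  | Formula.var n, w => extV w n
  | Formula.falsum, _ => False
  | Formula.neg B, w => ¬ sat X₀ B w
  | Formula.or B C, w => sat X₀ B w ∨ sat X₀ C w
  | Formula.box B, w => ∀ v, Rp X₀ w v → sat X₀ B v
  | Formula.bb B, w =>
      ((∃ v, Rp X₀ w v) ∧ ∀ v, Rp X₀ w v → sat X₀ B v) ∨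
      ((¬ ∃ v, Rp X₀ w v) ∧
        (extS w B ∨ (GRcirc B ∧ sat X₀ B w) ∨
          ∃ u, Rp X₀ u w ∧ ∀ v, Rp X₀ u v → sat X₀ B v))

variable {X₀ : Wld Φl}

lemma Rp_none_to (Y : Wld Φl) (h : Rel X₀ Y) : Rp X₀ none (some Y) := Or.inr h

lemma Rp_not_none : ∀ {w : Option (Wld Φl)}, ¬ Rp X₀ w none
  | some _, h => h
  | none, h => h

lemma Rp_trans : ∀ {w v u : Option (Wld Φl)}, Rp X₀ w v → Rp X₀ v u → Rp X₀ w u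
  | _, _, none, _, h2 => absurd h2 Rp_not_none
  | _, none, _, h1, _ => absurd h1 Rp_not_none
  | some X, some Y, some Z, h1, h2 => Rel_trans h1 h2
  | none, some Y, some Z, h1, h2 => by
      rcases h1 with rfl | h1
      · exact Or.inr h2
      · exact Or.inr (Rel_trans h1 h2)

lemma sat_imp {B C : Formula} {w : Option (Wld Φl)} :
    sat X₀ (B.imp C) w ↔ (sat X₀ B w → sat X₀ C w) := by
  simp only [Formula.imp, sat]
  tauto

lemma sat_or {B C : Formula} {w : Option (Wld Φl)} :
    sat X₀ (B.or C) w ↔ (sat X₀ B w ∨ sat X₀ C w) := Iff.rfl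

lemma sat_dia {B : Formula} {w : Option (Wld Φl)} :
    sat X₀ (B.dia) w ↔ ∃ v, Rp X₀ w v ∧ sat X₀ B v := by
  simp only [Formula.dia, sat]
  push_neg
  rfl

/-! ### Ranks -/

def isBoxF : Formula → Bool
  | Formula.box _ => true
  | _ => false

def rank : Option (Wld Φl) → ℕ
  | none => 0
  | some X => (X.s.filter (fun C => isBoxF C = true)).card + 1

lemma rank_lt : ∀ {w v : Option (Wld Φl)}, Rp X₀ w v → rank w < rank v
  | _, none, h => absurd h Rp_not_none
  | none, some Y, _ => Nat.succ_pos _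
  | some X, some Y, h => by
      have hsub : X.s.filter (fun C => isBoxF C = true) ⊆
          Y.s.filter (fun C => isBoxF C = true) := by
        intro C hC
        rcases Finset.mem_filter.1 hC with ⟨hX, hb⟩
        match C, hb with
        | Formula.box D, _ =>
          have hΦ : D.box ∈ Φl := List.mem_toFinset.1 (X.sub hX)
          exact Finset.mem_filter.2 ⟨(h.1 D hΦ hX).2, rfl⟩
      obtain ⟨C, hCΦ, hCY, hCX⟩ := h.2
      have hss : X.s.filter (fun C => isBoxF C = true) ⊂
          Y.s.filter (fun C => isBoxF C = true) := by
        refine ⟨hsub, fun hYX => hCX ?_⟩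
        have := hYX (Finset.mem_filter.2 ⟨hCY, rfl⟩)
        exact (Finset.mem_filter.1 this).1
      simpa [rank] using Finset.card_lt_card hss

lemma rank_le : ∀ v : Option (Wld Φl), rank v ≤ (Φs Φl).card + 1
  | none => Nat.zero_le _
  | some X => by
      have : X.s.filter (fun C => isBoxF C = true) ⊆ Φs Φl :=
        (Finset.filter_subset _ _).trans X.sub
      simpa [rank] using Nat.add_le_add_right (Finset.card_le_card this) 1

end Model

end GRProof

namespace GRProof

private lemma t_or_inl (A B : Formula) : GRcirc (A.imp (A.or B)) := by
  apply GRcirc.taut; intro v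
  simp only [Formula.imp, evalProp]
  cases evalProp v A <;> cases evalProp v B <;> rfl

private lemma t_or_inr (A B : Formula) : GRcirc (B.imp (A.or B)) := by
  apply GRcirc.taut; intro v
  simp only [Formula.imp, evalProp]
  cases evalProp v A <;> cases evalProp v B <;> rfl

section Truth

variable {Φl : List Formula} {A₀ : Formula} {X₀ : Wld Φl}

lemma X0_nobot (ad : Adeq Φl) (hbA₀ : A₀.box ∈ Φl) (hX₀ : A₀.box ∉ X₀.s) : Formula.falsum.box ∉ X₀.s := by
  intro hmem
  exact hX₀ (world_closed X₀
    (imp_trans (chi_mem ad.boxbot_mem hmem) (box_bot_imp A₀)) hbA₀)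

lemma mem_neg_iff (ad : Adeq Φl) {B : Formula} (hB : B ∈ Φl) (hnB : B.neg ∈ Φl) (X : Wld Φl) :
    B.neg ∈ X.s ↔ B ∉ X.s := by
  constructor
  · intro h hB'
    exact world_ncon hB hnB hB' h
  · intro h
    exact world_closed X (chi_nmem hB h) hnB

lemma box_truth (ad : Adeq Φl) {B : Formula} (hbox : B.box ∈ Φl)
    (ih : ∀ X : Wld Φl, sat X₀ B (some X) ↔ B ∈ X.s) (X : Wld Φl) :
    sat X₀ (B.box) (some X) ↔ B.box ∈ X.s := by
  constructor
  · intro h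
    by_contra hn
    obtain ⟨Y, hXY, hYB⟩ := succ_lemma X B hbox hn (ad.box_mem B hbox) ad.box_mem
    have hBY : B ∉ Y.s := fun hm => hYB (chi_mem (ad.box_mem B hbox) hm)
    exact hBY ((ih Y).1 (h (some Y) hXY))
  · intro h v hv
    match v, hv with
    | some Y, hv => exact (ih Y).2 (hv.1 B hbox h).1

theorem truth (ad : Adeq Φl) (hbA₀ : A₀.box ∈ Φl) (hX₀ : A₀.box ∉ X₀.s) :
    ∀ B : Formula, B ∈ Φl → ∀ X : Wld Φl,
    sat X₀ B (some X) ↔ B ∈ X.s := by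
  intro B
  induction B with
  | var n => intro _ X; exact Iff.rfl
  | falsum =>
    intro _ X
    constructor
    · intro hs; exact hs.elim
    · intro hm; exact (X.con (chi_mem ad.bot_mem hm)).elim
  | neg B ih =>
    intro h X
    have hB : B ∈ Φl := ad.neg_mem B h
    have hrfl : sat X₀ (B.neg) (some X) ↔ ¬ sat X₀ B (some X) := Iff.rfl
    rw [hrfl, ih hB X]
    exact (mem_neg_iff ad hB h X).symm
  | or B C ihB ihC =>
    intro h X
    obtain ⟨hB, hC⟩ := ad.or_mem B C h
    have hrfl : sat X₀ (B.or C) (some X) ↔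
        (sat X₀ B (some X) ∨ sat X₀ C (some X)) := Iff.rfl
    rw [hrfl, ihB hB X, ihC hC X]
    constructor
    · rintro (hm | hm)
      · exact world_closed X (imp_trans (chi_mem hB hm) (t_or_inl B C)) h
      · exact world_closed X (imp_trans (chi_mem hC hm) (t_or_inr B C)) h
    · intro hm
      by_contra hc
      push_neg at hc
      exact X.con (imp_contra (imp_or_neg (chi_mem h hm) (chi_nmem hB hc.1))
        (chi_nmem hC hc.2))
  | box B ih =>
    intro h X
    exact box_truth ad h (fun Y => ih (ad.box_mem B h) Y) X
  | bb B ih =>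
    intro h X
    obtain ⟨hBΦ, hboxΦ, hnboxΦ, hnbbboxΦ, hbbboxΦ, hnbbΦ⟩ := ad.bb_mem B h
    have ihB : ∀ Y : Wld Φl, sat X₀ B (some Y) ↔ B ∈ Y.s := fun Y => ih hBΦ Y
    have hbt := box_truth (X₀ := X₀) ad hboxΦ ihB
    by_cases hdead : Formula.falsum.box ∈ X.s
    · have hnosucc : ¬ ∃ v, Rp X₀ (some X) v := by
        rintro ⟨v, hv⟩
        match v, hv with
        | some Y, hv => exact no_succ ad hdead hv
      constructor
      · intro hs
        have key : ∀ Z : Wld Φl, Rel Z X →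
            (∀ v, Rp X₀ (some Z) v → sat X₀ B v) → B.bb ∈ X.s := by
          intro Z hZX hZbox
          have hbZ : B.box ∈ Z.s := (hbt Z).1 hZbox
          have hbbZ : (B.bb).box ∈ Z.s :=
            world_closed Z (imp_trans (chi_mem hboxΦ hbZ) GRcirc.boxBb) hbbboxΦ
          exact (hZX.1 (B.bb) hbbboxΦ hbbZ).1
        rcases hs with ⟨⟨v, hv⟩, -⟩ | ⟨-, hcase⟩
        · exact absurd ⟨v, hv⟩ hnosucc
        rcases hcase with hext | ⟨hthm, -⟩ | ⟨u, hu, hall⟩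
        · exact hext
        · exact world_closed X (const_imp _ (GRcirc.bbnec hthm)) h
        · match u, hu with
          | some Z, hu => exact key Z hu (fun v hv => hall v hv)
          | none, hu =>
            rcases hu with heq | hR
            · subst heq
              exact absurd hdead (X0_nobot ad hbA₀ hX₀)
            · refine key X₀ hR ?_
              intro v hv
              match v, hv with
              | some Y, hv => exact hall (some Y) (Or.inr hv)
      · intro hmem
        exact Or.inr ⟨hnosucc, Or.inl hmem⟩
    · have hsucc : ∃ Y, Rel X Y := dead_succ ad X hdead
      obtain ⟨Y₁, hY₁⟩ := hsucc
      have hsucc' : ∃ v, Rp X₀ (some X) v := ⟨some Y₁, hY₁⟩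
      constructor
      · intro hs
        have hboxsat : sat X₀ (B.box) (some X) := by
          rcases hs with ⟨-, hall⟩ | ⟨hn, -⟩
          · exact fun v hv => hall v hv
          · exact absurd hsucc' hn
        have hbX : B.box ∈ X.s := (hbt X).1 hboxsat
        have h1 : GRcirc ((chi Φl X.s).imp ((Formula.falsum.box).or (B.bb))) :=
          imp_trans (chi_mem hboxΦ hbX) GRcirc.ros
        exact world_closed X (imp_or_neg h1 (chi_nmem ad.boxbot_mem hdead)) h
      · intro hmem
        have hbX : B.box ∈ X.s :=
          world_closed X (imp_trans (chi_mem h hmem) GRcirc.bbBox) hboxΦ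
        refine Or.inl ⟨hsucc', ?_⟩
        intro v hv
        match v, hv with
        | some Y, hv => exact (ihB Y).2 (hv.1 B hboxΦ hbX).1

end Truth

end GRProof

namespace GRProof

section Sound

variable {Φl : List Formula} {A₀ : Formula} {X₀ : Wld Φl}

lemma sat_taut {B : Formula} (hT : Taut B) (w : Option (Wld Φl)) :
    sat X₀ B w := by
  classical
  have key : ∀ C : Formula,
      evalProp (fun D => decide (sat X₀ D w)) C = true ↔ sat X₀ C w := by
    intro C
    induction C with
    | var n => simp [evalProp]
    | falsum => simp [evalProp, sat]
    | neg B ih =>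
      have : sat X₀ (B.neg) w ↔ ¬ sat X₀ B w := Iff.rfl
      rw [this, ← ih]
      simp [evalProp]
    | or B C ihB ihC =>
      have : sat X₀ (B.or C) w ↔ (sat X₀ B w ∨ sat X₀ C w) := Iff.rfl
      rw [this, ← ihB, ← ihC]
      simp [evalProp]
    | box B ih => simp [evalProp]
    | bb B ih => simp [evalProp]
  exact (key B).1 (hT _)

/-- The key semantic step for the axiom `◇■A → ◇A` at a dead end. -/
lemma ext_dia (ad : Adeq Φl) (hbA₀ : A₀.box ∈ Φl) (hX₀ : A₀.box ∉ X₀.s)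
    {w : Option (Wld Φl)} {X : Wld Φl} (hv : Rp X₀ w (some X))
    (hdead : Formula.falsum.box ∈ X.s) {B : Formula} (hext : B.bb ∈ X.s) :
    ∃ u, Rp X₀ w u ∧ sat X₀ B u := by
  have hbbΦ : B.bb ∈ Φl := List.mem_toFinset.1 (X.sub hext)
  obtain ⟨hBΦ, hboxΦ, hnboxΦ, hnbbboxΦ, hbbboxΦ, hnbbΦ⟩ := ad.bb_mem B hbbΦ
  obtain ⟨Z, hZX, hZup⟩ : ∃ Z : Wld Φl, Rel Z X ∧
      ∀ Y : Wld Φl, Rel Z Y → Rp X₀ w (some Y) := by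
    match w, hv with
    | some W, hv => exact ⟨W, hv, fun Y h => h⟩
    | none, hv =>
      rcases hv with heq | hR
      · subst heq
        exact absurd hdead (X0_nobot ad hbA₀ hX₀)
      · exact ⟨X₀, hR, fun Y h => Or.inr h⟩
  have hnb : (B.neg).box ∉ Z.s := by
    intro hmem
    have h1 : GRcirc ((chi Φl Z.s).imp (((B.bb).neg).box)) :=
      imp_trans (chi_mem hnboxΦ hmem) (ax4_contra B)
    have h2 : ((B.bb).neg).box ∈ Z.s := world_closed Z h1 hnbbboxΦ
    have h3 : (B.bb).neg ∈ X.s := (hZX.1 ((B.bb).neg) hnbbboxΦ h2).1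
    exact world_ncon hbbΦ hnbbΦ hext h3
  obtain ⟨Y, hZY, hYnB⟩ :=
    succ_lemma Z (B.neg) hnboxΦ hnb (ad.box_mem (B.neg) hnboxΦ) ad.box_mem
  have hBY : B ∈ Y.s := by
    by_contra hn
    exact hYnB (chi_nmem hBΦ hn)
  exact ⟨some Y, hZup Y hZY, (truth ad hbA₀ hX₀ B hBΦ Y).2 hBY⟩

theorem soundness (ad : Adeq Φl) (hbA₀ : A₀.box ∈ Φl) (hX₀ : A₀.box ∉ X₀.s)
    {B : Formula} (h : GRcirc B) : ∀ w : Option (Wld Φl), sat X₀ B w := by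
  induction h with
  | taut h => exact fun w => sat_taut h w
  | @k A B =>
    intro w
    rw [sat_imp]
    intro h1
    rw [sat_imp]
    intro h2
    exact fun v hv => (sat_imp.1 (h1 v hv)) (h2 v hv)
  | @loeb A =>
    intro w
    rw [sat_imp]
    intro h
    have key : ∀ n, ∀ v : Option (Wld Φl), Rp X₀ w v →
        (Φs Φl).card + 1 - rank v ≤ n → sat X₀ A v := by
      intro n
      induction n with
      | zero =>
        intro v hv hle
        have hbox : sat X₀ (A.box) v := by
          intro u hu
          exfalso
          have h1 := rank_lt hu
          have h2 := rank_le (Φl := Φl) u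
          omega
        exact sat_imp.1 (h v hv) hbox
      | succ n ih =>
        intro v hv hle
        have hbox : sat X₀ (A.box) v := by
          intro u hu
          refine ih u (Rp_trans hv hu) ?_
          have h1 := rank_lt hu
          have h2 := rank_le (Φl := Φl) u
          omega
        exact sat_imp.1 (h v hv) hbox
    exact fun v hv => key ((Φs Φl).card + 1) v hv (by omega)
  | @bbBox A =>
    intro w
    rw [sat_imp]
    rintro (⟨-, hall⟩ | ⟨hno, -⟩)
    · exact hall
    · exact fun v hv => absurd ⟨v, hv⟩ hno
  | @boxBb A =>
    intro w
    rw [sat_imp]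
    intro h v hv
    by_cases hs : ∃ u, Rp X₀ v u
    · exact Or.inl ⟨hs, fun u hu => h u (Rp_trans hv hu)⟩
    · exact Or.inr ⟨hs, Or.inr (Or.inr ⟨w, hv, h⟩)⟩
  | @ros A =>
    intro w
    rw [sat_imp]
    intro h
    by_cases hs : ∃ v, Rp X₀ w v
    · exact Or.inr (Or.inl ⟨hs, h⟩)
    · exact Or.inl (fun v hv => absurd ⟨v, hv⟩ hs)
  | @diaBb A =>
    intro w
    rw [sat_imp]
    intro h
    obtain ⟨v, hv, hsatbb⟩ := sat_dia.1 h
    rw [sat_dia]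
    rcases hsatbb with ⟨⟨u0, hu0⟩, hall⟩ | ⟨hno, hcase⟩
    · exact ⟨u0, Rp_trans hv hu0, hall u0 hu0⟩
    · match v, hv with
      | some X, hv =>
        have hdead : Formula.falsum.box ∈ X.s := by
          by_contra hd
          obtain ⟨Y, hY⟩ := dead_succ ad X hd
          exact hno ⟨some Y, hY⟩
        rcases hcase with hext | ⟨-, hsatA⟩ | ⟨u, hu, hall⟩
        · exact ext_dia ad hbA₀ hX₀ hv hdead hext
        · exact ⟨some X, hv, hsatA⟩
        · exact ⟨some X, hv, hall (some X) hu⟩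
      | none, hv => exact absurd ⟨some X₀, Or.inl rfl⟩ hno
  | mp h1 h2 ih1 ih2 => exact fun w => sat_imp.1 (ih1 w) (ih2 w)
  | nec h ih => exact fun w v _ => ih v
  | @bbnec A h ih =>
    intro w
    by_cases hs : ∃ v, Rp X₀ w v
    · exact Or.inl ⟨hs, fun v _ => ih v⟩
    · exact Or.inr ⟨hs, Or.inr (Or.inl ⟨h, ih w⟩)⟩

end Sound

end GRProof

namespace GRProof

/-! ### A concrete adequate set -/

def clF : Formula → List Formula
  | Formula.var n => [Formula.var n]
  | Formula.falsum => [Formula.falsum]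
  | Formula.neg B => Formula.neg B :: clF B
  | Formula.or B C => Formula.or B C :: (clF B ++ clF C)
  | Formula.box B => Formula.box B :: clF B
  | Formula.bb B => Formula.bb B :: B.box :: (B.neg).box :: B.neg ::
      ((B.bb).neg).box :: (B.bb).neg :: (B.bb).box :: clF B

lemma mem_clF_self (B : Formula) : B ∈ clF B := by
  cases B <;> simp [clF]

lemma clF_sub : ∀ B C : Formula, C ∈ clF B → clF C ⊆ clF B := by
  intro B
  induction B with
  | var n =>
    intro C hC
    simp only [clF, List.mem_singleton] at hC
    subst hC
    exact List.Subset.refl _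
  | falsum =>
    intro C hC
    simp only [clF, List.mem_singleton] at hC
    subst hC
    exact List.Subset.refl _
  | neg B ih =>
    intro C hC
    rcases List.mem_cons.1 hC with rfl | hC
    · exact List.Subset.refl _
    · exact List.Subset.trans (ih C hC) (List.subset_cons_self _ _)
  | or B C ihB ihC =>
    intro D hD
    rcases List.mem_cons.1 hD with rfl | hD
    · exact List.Subset.refl _
    rcases List.mem_append.1 hD with hD | hD
    · exact List.Subset.trans (ihB D hD) (List.Subset.trans (List.subset_append_left _ _)
        (List.subset_cons_self _ _))
    · exact List.Subset.trans (ihC D hD) (List.Subset.trans (List.subset_append_right _ _)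
        (List.subset_cons_self _ _))
  | box B ih =>
    intro C hC
    rcases List.mem_cons.1 hC with rfl | hC
    · exact List.Subset.refl _
    · exact List.Subset.trans (ih C hC) (List.subset_cons_self _ _)
  | bb B ih =>
    intro C hC
    have hsubB : clF B ⊆ clF (B.bb) := by
      intro D hD
      simp only [clF, List.mem_cons]
      exact Or.inr (Or.inr (Or.inr (Or.inr (Or.inr (Or.inr (Or.inr hD))))))
    simp only [clF, List.mem_cons] at hC
    rcases hC with rfl | rfl | rfl | rfl | rfl | rfl | rfl | hC
    · exact List.Subset.refl _
    · intro D hD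
      simp only [clF, List.mem_cons] at hD ⊢
      tauto
    · intro D hD
      simp only [clF, List.mem_cons] at hD ⊢
      tauto
    · intro D hD
      simp only [clF, List.mem_cons] at hD ⊢
      tauto
    · intro D hD
      simp only [clF, List.mem_cons] at hD ⊢
      tauto
    · intro D hD
      simp only [clF, List.mem_cons] at hD ⊢
      tauto
    · intro D hD
      simp only [clF, List.mem_cons] at hD ⊢
      tauto
    · exact List.Subset.trans (ih C hC) hsubB

def Phi (A : Formula) : List Formula :=
  clF (A.box) ++ clF (Formula.falsum.box)

lemma Phi_step {A C D : Formula} (hC : C ∈ Phi A) (hD : D ∈ clF C) :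
    D ∈ Phi A := by
  rcases List.mem_append.1 hC with h | h
  · exact List.mem_append_left _ (clF_sub _ _ h hD)
  · exact List.mem_append_right _ (clF_sub _ _ h hD)

lemma adeq_Phi (A : Formula) : Adeq (Phi A) := by
  constructor
  · intro B h
    exact Phi_step h (List.mem_cons_of_mem _ (mem_clF_self B))
  · intro B C h
    constructor
    · exact Phi_step h (List.mem_cons_of_mem _
        (List.mem_append_left _ (mem_clF_self B)))
    · exact Phi_step h (List.mem_cons_of_mem _
        (List.mem_append_right _ (mem_clF_self C)))
  · intro B h
    exact Phi_step h (List.mem_cons_of_mem _ (mem_clF_self B))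
  · intro B h
    refine ⟨?_, ?_, ?_, ?_, ?_, ?_⟩
    · refine Phi_step h ?_
      simp only [clF, List.mem_cons]
      exact Or.inr (Or.inr (Or.inr (Or.inr (Or.inr (Or.inr
        (Or.inr (mem_clF_self B)))))))
    · exact Phi_step h (by simp [clF])
    · exact Phi_step h (by simp [clF])
    · exact Phi_step h (by simp [clF])
    · exact Phi_step h (by simp [clF])
    · exact Phi_step h (by simp [clF])
  · exact List.mem_append_right _ (by simp [clF])
  · exact List.mem_append_right _ (by simp [clF])

/-! ### The admissibility of the rule `□□A / □A` in GRcirc -/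

lemma unbox {A : Formula} (h2 : GRcirc ((A.box).box)) : GRcirc (A.box) := by
  by_contra h1
  have ad : Adeq (Phi A) := adeq_Phi A
  have hbA : A.box ∈ Phi A := List.mem_append_left _ (mem_clF_self _)
  have hcon : Con ((A.box).neg) := by
    intro hc
    exact h1 (GRcirc.mp (t_neg_imp (A.box)) hc)
  obtain ⟨X₀, hX₀c⟩ := lind_world (Φl := Phi A) ((A.box).neg) hcon
  have hX₀ : A.box ∉ X₀.s := by
    intro hmem
    exact hX₀c (imp_contra (imp_trans (t_and_r _ _) (chi_mem hbA hmem))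
      (t_and_l _ _))
  have hs : sat X₀ ((A.box).box) none := soundness ad hbA hX₀ h2 none
  have hs' : sat X₀ (A.box) (some X₀) := hs (some X₀) (Or.inl rfl)
  exact hX₀ ((truth ad hbA hX₀ (A.box) hbA X₀).1 hs')

end GRProof


/-- For any `L₂`-formula `A`, `GR ⊢ A` iff `GR° ⊢ □A`. -/
theorem GR_iff_GRcirc_box (A : Formula) : GR A ↔ GRcirc A.box := by
  constructor
  · intro h
    induction h with
    | taut h => exact GRcirc.nec (GRcirc.taut h)
    | k => exact GRcirc.nec GRcirc.k
    | loeb => exact GRcirc.nec GRcirc.loeb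
    | bbBox => exact GRcirc.nec GRcirc.bbBox
    | boxBb => exact GRcirc.nec GRcirc.boxBb
    | ros => exact GRcirc.nec GRcirc.ros
    | diaBb => exact GRcirc.nec GRcirc.diaBb
    | mp h1 h2 ih1 ih2 => exact GRcirc.mp (GRcirc.mp GRcirc.k ih1) ih2
    | nec h ih => exact GRcirc.mp GRcirc.bbBox (GRcirc.bbnec ih)
    | boxElim h ih => exact GRProof.unbox ih
  · intro h
    have toGR : ∀ {B : Formula}, GRcirc B → GR B := by
      intro B hB
      induction hB with
      | taut h => exact GR.taut h
      | k => exact GR.k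
      | loeb => exact GR.loeb
      | bbBox => exact GR.bbBox
      | boxBb => exact GR.boxBb
      | ros => exact GR.ros
      | diaBb => exact GR.diaBb
      | mp _ _ ih1 ih2 => exact GR.mp ih1 ih2
      | nec _ ih => exact GR.nec ih
      | bbnec _ ih => exact GR.boxElim (GR.mp GR.boxBb (GR.nec ih))
    exact GR.boxElim (toGR h)
end

section
/- For any formula A of the bimodal language L₂, if GR° ⊢ A, then A is valid on all GR°-frames (i.e., A holds at every world under every satisfaction relation on every GR°-frame). -/
/-- A `GR°`-frame: a nonempty set of worlds `W`, a transitive conversely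
well-founded relation `⊏` (`lt`), and for each formula `B` a relation
`≺_B` (`prec B`) satisfying the four frame conditions. -/
structure GRFrame where
  W : Type
  nonempty : Nonempty W
  lt : W → W → Prop
  lt_trans : ∀ {x y z : W}, lt x y → lt y z → lt x z
  /-- `⊏` is conversely well-founded. -/
  cwf : WellFounded (fun x y : W => lt y x)
  prec : Formula → W → W → Prop
  lt_to_prec : ∀ {B : Formula} {x y : W}, lt x y → prec B x y
  lt_prec_lt : ∀ {B : Formula} {x y z : W}, lt x y → prec B y z → lt x z
  prec_lt_lt : ∀ {B : Formula} {x y z : W}, prec B x y → lt x z → lt x y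
  lt_succ : ∀ {B : Formula} {x y : W}, lt x y → ∃ z : W, prec B y z ∧ lt x z

/-- A satisfaction relation on a `GR°`-frame. -/
structure GRSat (F : GRFrame) where
  frc : F.W → Formula → Prop
  frc_falsum : ∀ w : F.W, ¬ frc w Formula.falsum
  frc_neg : ∀ (w : F.W) (A : Formula), frc w A.neg ↔ ¬ frc w A
  frc_or : ∀ (w : F.W) (A B : Formula), frc w (A.or B) ↔ (frc w A ∨ frc w B)
  frc_box : ∀ (w : F.W) (B : Formula), frc w B.box ↔ ∀ x : F.W, F.lt w x → frc x B
  frc_bb : ∀ (w : F.W) (B : Formula), frc w B.bb ↔ ∀ x : F.W, F.prec B w x → frc x B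

/-- `A` is valid on the frame `F`: it holds at every world under every
satisfaction relation on `F`. -/
def ValidOn (F : GRFrame) (A : Formula) : Prop :=
  ∀ (S : GRSat F) (w : F.W), S.frc w A

/-- A frame is non-trivial iff it has a root `r` (w.r.t. `⊏`) and some world `w ≠ r`. -/
def GRFrame.NonTrivial (F : GRFrame) : Prop :=
  ∃ r w : F.W, (∀ x : F.W, x ≠ r → F.lt r x) ∧ r ≠ w

/-- A frame is `■`-serial iff every `≺_B` is serial. -/
def GRFrame.Serial (F : GRFrame) : Prop :=
  ∀ (B : Formula) (x : F.W), ∃ y : F.W, F.prec B x y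

lemma frc_imp {F : GRFrame} (S : GRSat F) (w : F.W) (A B : Formula) :
    S.frc w (A.imp B) ↔ (S.frc w A → S.frc w B) := by
  rw [Formula.imp, S.frc_or, S.frc_neg]
  tauto

/-- Soundness: every theorem of `GR°` is valid on all `GR°`-frames. -/
theorem GRcirc_sound (A : Formula) (h : GRcirc A) : ∀ F : GRFrame, ValidOn F A := by
  intro F
  induction h with
  | @taut A ht =>
    intro S w
    classical
    have key : ∀ B : Formula, evalProp (fun C => decide (S.frc w C)) B = true ↔ S.frc w B := by
      intro B
      induction B with
      | var n => simp [evalProp]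
      | falsum => simp [evalProp, S.frc_falsum w]
      | neg A ih => simp [evalProp, S.frc_neg, ← ih]
      | or A B ihA ihB => simp [evalProp, S.frc_or, ihA, ihB]
      | box A _ => simp [evalProp]
      | bb A _ => simp [evalProp]
    exact (key A).mp (ht _)
  | @k A B =>
    intro S w
    rw [frc_imp, frc_imp]
    intro h1 h2
    rw [S.frc_box] at *
    intro x hx
    exact (frc_imp S x A B).mp (h1 x hx) (h2 x hx)
  | @loeb A =>
    intro S w
    rw [frc_imp, S.frc_box, S.frc_box]
    intro h1
    intro x
    induction x using F.cwf.induction with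
    | _ x ih =>
      intro hwx
      have hbox : S.frc x A.box := by
        rw [S.frc_box]
        intro z hz
        exact ih z hz (F.lt_trans hwx hz)
      exact (frc_imp S x _ A).mp (h1 x hwx) hbox
  | @bbBox A =>
    intro S w
    rw [frc_imp, S.frc_box, S.frc_bb]
    intro h1 x hx
    exact h1 x (F.lt_to_prec hx)
  | @boxBb A =>
    intro S w
    rw [frc_imp, S.frc_box, S.frc_box]
    intro h1 x hx
    rw [S.frc_bb]
    intro y hy
    exact h1 y (F.lt_prec_lt hx hy)
  | @ros A =>
    intro S w
    rw [frc_imp, S.frc_or]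
    intro h1
    by_cases hb : S.frc w (Formula.falsum.box)
    · exact Or.inl hb
    · right
      rw [S.frc_box] at hb
      push_neg at hb
      obtain ⟨x, hx, -⟩ := hb
      rw [S.frc_bb]
      intro y hy
      rw [S.frc_box] at h1
      exact h1 y (F.prec_lt_lt hy hx)
  | @diaBb A =>
    intro S w
    rw [frc_imp, Formula.dia, Formula.dia, S.frc_neg, S.frc_neg]
    intro h1 h2
    apply h1
    rw [S.frc_box] at h2 ⊢
    intro x hx
    rw [S.frc_neg x A.bb]
    intro hbb
    obtain ⟨z, hz1, hz2⟩ := F.lt_succ (B := A) hx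
    rw [S.frc_bb] at hbb
    exact (S.frc_neg z A).mp (h2 z hz2) (hbb z hz1)
  | mp _ _ ih1 ih2 =>
    intro S w
    exact (frc_imp S w _ _).mp (ih1 S w) (ih2 S w)
  | nec _ ih =>
    intro S w
    rw [S.frc_box]
    intro x _
    exact ih S x
  | bbnec _ ih =>
    intro S w
    rw [S.frc_bb]
    intro x _
    exact ih S x
end

section
/- For every formula B of the bimodal language L₂, the formula ■B is not a theorem of GR⁻. -/
/-- The logic GRminus. -/
inductive GRminus : Formula → Prop
  | taut {A : Formula} : Taut A → GRminus A
  | k {A B : Formula} : GRminus (((A.imp B).box).imp ((A.box).imp (B.box)))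
  | loeb {A : Formula} : GRminus ((((A.box).imp A).box).imp (A.box))
  | bbBox {A : Formula} : GRminus ((A.bb).imp (A.box))
  | boxBb {A : Formula} : GRminus ((A.box).imp ((A.bb).box))
  | ros {A : Formula} : GRminus ((A.box).imp ((Formula.falsum.box).or (A.bb)))
  | diaBb {A : Formula} : GRminus (((A.bb).dia).imp (A.dia))
  | mp {A B : Formula} : GRminus (A.imp B) → GRminus A → GRminus B
  | nec {A : Formula} : GRminus A → GRminus (A.box)


/-- Evaluation making every `□A` true and every `■A` false. -/
def E : Formula → Bool
  | .var _ => true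
  | .falsum => false
  | .neg A => !(E A)
  | .or A B => E A || E B
  | .box _ => true
  | .bb _ => false

lemma evalProp_E (A : Formula) : evalProp E A = E A := by
  induction A with
  | var n => rfl
  | falsum => rfl
  | neg A ih => simp [evalProp, E, ih]
  | or A B ihA ihB => simp [evalProp, E, ihA, ihB]
  | box A => rfl
  | bb A => rfl

lemma GRminus_E {A : Formula} (h : GRminus A) : E A = true := by
  induction h with
  | @taut A ht => have := ht E; rwa [evalProp_E] at this
  | k => simp [Formula.imp, E]
  | loeb => simp [Formula.imp, E]
  | bbBox => simp [Formula.imp, E]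
  | boxBb => simp [Formula.imp, E]
  | ros => simp [Formula.imp, E]
  | diaBb => simp [Formula.imp, Formula.dia, E]
  | mp h1 h2 ih1 ih2 =>
      simp [Formula.imp, E, ih2] at ih1; exact ih1
  | nec _ _ => rfl

/-- For every `L₂`-formula `B`, `■B` is not a theorem of `GR⁻`. -/
theorem GRminus_not_bb (B : Formula) : ¬ GRminus (B.bb) := by
  intro h
  simpa [E] using GRminus_E h
end

section
/- For every formula B of the bimodal language L₂, the formula ¬■B is not a theorem of GR°. -/
lemma GRcirc_sound_true {A : Formula} (h : GRcirc A) :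
    evalProp (fun _ => true) A = true := by
  induction h with
  | taut ht => exact ht _
  | k => simp [Formula.imp, evalProp]
  | loeb => simp [Formula.imp, evalProp]
  | bbBox => simp [Formula.imp, evalProp]
  | boxBb => simp [Formula.imp, evalProp]
  | ros => simp [Formula.imp, evalProp]
  | diaBb => simp [Formula.imp, Formula.dia, evalProp]
  | mp h1 h2 ih1 ih2 => simp [Formula.imp, evalProp, ih2] at ih1; exact ih1
  | nec _ _ => simp [evalProp]
  | bbnec _ _ => simp [evalProp]

/-- For every `L₂`-formula `B`, `¬■B` is not a theorem of `GR°`. -/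
theorem GRcirc_not_neg_bb (B : Formula) : ¬ GRcirc ((B.bb).neg) := by
  intro h
  have := GRcirc_sound_true h
  simp [evalProp] at this
end

section
/- GR° is a conservative extension of N: for any formula A of the ■-fragment L_■ (built from propositional variables, ⊥, ¬, ∨ and ■ only), if GR° ⊢ A then N ⊢ A. -/
/-- `A` belongs to the `■`-fragment `L_■`: it contains no `□`. -/
def BoxFree : Formula → Prop
  | .var _ => True
  | .falsum => True
  | .neg A => BoxFree A
  | .or A B => BoxFree A ∧ BoxFree B
  | .box _ => False
  | .bb A => BoxFree A

/-- The pure logic of necessitation `N` in the language `L_■`: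
all propositional tautologies of `L_■`, modus ponens, and `■`-necessitation. -/
inductive NLogic : Formula → Prop
  | taut {A : Formula} : Taut A → BoxFree A → NLogic A
  | mp {A B : Formula} : NLogic (A.imp B) → NLogic A → NLogic B
  | bbnec {A : Formula} : NLogic A → NLogic (A.bb)


/-- Translation killing `□`: replace every `□B` by `⊤ = ¬⊥`. -/
def tr : Formula → Formula
  | .var n => .var n
  | .falsum => .falsum
  | .neg A => (tr A).neg
  | .or A B => (tr A).or (tr B)
  | .box _ => Formula.falsum.neg
  | .bb A => (tr A).bb

theorem boxFree_tr (A : Formula) : BoxFree (tr A) := by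
  induction A <;> simp_all [tr, BoxFree]

theorem tr_eq_of_boxFree (A : Formula) (h : BoxFree A) : tr A = A := by
  induction A <;> simp_all [tr, BoxFree]

theorem evalProp_tr (v : Formula → Bool) (A : Formula) :
    evalProp v (tr A) = evalProp (fun B => evalProp v (tr B)) A := by
  induction A <;> simp_all [tr, evalProp]

theorem taut_tr {A : Formula} (h : Taut A) : Taut (tr A) := by
  intro v
  rw [evalProp_tr]
  exact h _

theorem nlogic_tr {A : Formula} (h : GRcirc A) : NLogic (tr A) := by
  induction h with
  | taut ht => exact NLogic.taut (taut_tr ht) (boxFree_tr _)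
  | k =>
      exact NLogic.taut (by intro v; simp [tr, Formula.imp, evalProp]) (boxFree_tr _)
  | loeb =>
      exact NLogic.taut (by intro v; simp [tr, Formula.imp, evalProp]) (boxFree_tr _)
  | bbBox =>
      exact NLogic.taut (by intro v; simp [tr, Formula.imp, evalProp]) (boxFree_tr _)
  | boxBb =>
      exact NLogic.taut (by intro v; simp [tr, Formula.imp, evalProp]) (boxFree_tr _)
  | ros =>
      exact NLogic.taut (by intro v; simp [tr, Formula.imp, evalProp]) (boxFree_tr _)
  | diaBb =>
      exact NLogic.taut (by intro v; simp [tr, Formula.imp, Formula.dia, evalProp]) (boxFree_tr _)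
  | mp _ _ ih1 ih2 => exact NLogic.mp ih1 ih2
  | nec _ _ =>
      exact NLogic.taut (by intro v; simp [tr, evalProp]) (boxFree_tr _)
  | bbnec _ ih => exact NLogic.bbnec ih

/-- `GR°` is a conservative extension of `N`. -/
theorem GRcirc_conservative_over_N (A : Formula) (hA : BoxFree A) (h : GRcirc A) :
    NLogic A := by
  have := nlogic_tr h
  rwa [tr_eq_of_boxFree A hA] at this
end

section
/- For any formula A of the bimodal language L₂, the following are equivalent: (1) GR° ⊢ A; (2) A is valid on all GR°-frames; (3) A is valid on all finite GR°-frames (i.e., GR°-frames with finite underlying set W). -/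
deriving instance DecidableEq for Formula

namespace GRproof

section Soundness
variable {F : GRFrame} (S : GRSat F)

lemma frc_imp (w : F.W) (A B : Formula) : S.frc w (A.imp B) ↔ (S.frc w A → S.frc w B) := by
  simp only [Formula.imp, S.frc_or, S.frc_neg]
  tauto

noncomputable def sval (S : GRSat F) (w : F.W) : Formula → Bool :=
  fun C => @decide (S.frc w C) (Classical.propDecidable _)

lemma sval_iff (w : F.W) (C : Formula) : sval S w C = true ↔ S.frc w C :=
  @decide_eq_true_iff _ (Classical.propDecidable _)

lemma frc_eval (w : F.W) (A : Formula) :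
    evalProp (sval S w) A = true ↔ S.frc w A := by
  induction A with
  | var n => simpa [evalProp] using sval_iff S w (.var n)
  | falsum => simpa [evalProp] using (S.frc_falsum w)
  | neg A ih => simp only [evalProp, Bool.not_eq_true', S.frc_neg, ← ih]; simp
  | or A B ih1 ih2 => simp [evalProp, S.frc_or, ← ih1, ← ih2]
  | box A _ => simpa [evalProp] using sval_iff S w (.box A)
  | bb A _ => simpa [evalProp] using sval_iff S w (.bb A)

theorem soundness {A : Formula} (h : GRcirc A) : ∀ F : GRFrame, ValidOn F A := by
  induction h with
  | @taut A ht =>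
    intro F S w
    exact (frc_eval S w A).mp (ht (sval S w))
  | @k A B =>
    intro F S w
    rw [frc_imp, S.frc_box]
    intro h1
    rw [frc_imp, S.frc_box, S.frc_box]
    intro h2 x hx
    exact (frc_imp S x A B).mp (h1 x hx) (h2 x hx)
  | @loeb A =>
    intro F S w
    rw [frc_imp]
    intro h1
    rw [S.frc_box]
    intro x hx
    refine F.cwf.induction (C := fun x => F.lt w x → S.frc x A) x ?_ hx
    intro y IH hwy
    have h2 : S.frc y ((A.box).imp A) := (S.frc_box w _).mp h1 y hwy
    refine (frc_imp S y _ _).mp h2 ?_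
    rw [S.frc_box]
    intro z hz
    exact IH z hz (F.lt_trans hwy hz)
  | @bbBox A =>
    intro F S w
    rw [frc_imp, S.frc_bb, S.frc_box]
    intro h x hx
    exact h x (F.lt_to_prec hx)
  | @boxBb A =>
    intro F S w
    rw [frc_imp, S.frc_box, S.frc_box]
    intro h x hx
    rw [S.frc_bb]
    intro y hy
    exact h y (F.lt_prec_lt hx hy)
  | @ros A =>
    intro F S w
    rw [frc_imp, S.frc_or]
    intro h
    by_cases hc : S.frc w (Formula.falsum.box)
    · exact Or.inl hc
    · refine Or.inr ?_
      rw [S.frc_box] at hc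
      push_neg at hc
      obtain ⟨z, hz, _⟩ := hc
      rw [S.frc_bb]
      intro x hx
      exact (S.frc_box w A).mp h x (F.prec_lt_lt hx hz)
  | @diaBb A =>
    intro F S w
    rw [frc_imp]
    simp only [Formula.dia, S.frc_neg, S.frc_box]
    intro h
    push_neg at h
    obtain ⟨x, hx, hbb⟩ := h
    obtain ⟨z, hz1, hz2⟩ := F.lt_succ (B := A) hx
    intro hall
    exact hall z hz2 ((S.frc_bb x A).mp hbb z hz1)
  | @mp A B h1 h2 ih1 ih2 =>
    intro F S w
    exact (frc_imp S w A B).mp (ih1 F S w) (ih2 F S w)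
  | @nec A h ih =>
    intro F S w
    rw [S.frc_box]
    intro x _
    exact ih F S x
  | @bbnec A h ih =>
    intro F S w
    rw [S.frc_bb]
    intro x _
    exact ih F S x

end Soundness

end GRproof
namespace GRproof

/-! ## Provability toolkit -/

def conj : List Formula → Formula
  | [] => Formula.falsum.neg
  | A :: l => A.and (conj l)

def Prov (Γ : List Formula) (A : Formula) : Prop := GRcirc ((conj Γ).imp A)

def Con (Γ : List Formula) : Prop := ¬ Prov Γ Formula.falsum

section TautLemmas

variable (A B C G S : Formula)

lemma t_const : GRcirc (A.imp (B.imp A)) := by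
  apply GRcirc.taut; intro v
  simp only [Formula.imp, Formula.and, evalProp]
  cases evalProp v A <;> cases evalProp v B <;> rfl

lemma t_dist : GRcirc ((G.imp (A.imp B)).imp ((G.imp A).imp (G.imp B))) := by
  apply GRcirc.taut; intro v
  simp only [Formula.imp, Formula.and, evalProp]
  cases evalProp v A <;> cases evalProp v B <;> cases evalProp v G <;> rfl

lemma t_impTrans : GRcirc ((A.imp B).imp ((B.imp C).imp (A.imp C))) := by
  apply GRcirc.taut; intro v
  simp only [Formula.imp, Formula.and, evalProp]
  cases evalProp v A <;> cases evalProp v B <;> cases evalProp v C <;> rfl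

lemma t_andElimL : GRcirc ((A.and B).imp A) := by
  apply GRcirc.taut; intro v
  simp only [Formula.imp, Formula.and, evalProp]
  cases evalProp v A <;> cases evalProp v B <;> rfl

lemma t_andElimR : GRcirc ((A.and B).imp B) := by
  apply GRcirc.taut; intro v
  simp only [Formula.imp, Formula.and, evalProp]
  cases evalProp v A <;> cases evalProp v B <;> rfl

lemma t_andIntro : GRcirc (A.imp (B.imp (A.and B))) := by
  apply GRcirc.taut; intro v
  simp only [Formula.imp, Formula.and, evalProp]
  cases evalProp v A <;> cases evalProp v B <;> rfl

lemma t_top : GRcirc (Formula.falsum.neg) := by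
  apply GRcirc.taut; intro v
  simp only [Formula.imp, Formula.and, evalProp]
  rfl

lemma t_contrapos : GRcirc (((A.neg).imp (B.neg)).imp (B.imp A)) := by
  apply GRcirc.taut; intro v
  simp only [Formula.imp, Formula.and, evalProp]
  cases evalProp v A <;> cases evalProp v B <;> rfl

lemma t_negElim : GRcirc (A.imp ((A.neg).imp Formula.falsum)) := by
  apply GRcirc.taut; intro v
  simp only [Formula.imp, Formula.and, evalProp]
  cases evalProp v A <;> rfl

lemma t_orElim : GRcirc ((A.or B).imp ((A.neg).imp B)) := by
  apply GRcirc.taut; intro v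
  simp only [Formula.imp, Formula.and, evalProp]
  cases evalProp v A <;> cases evalProp v B <;> rfl

lemma t_orIntroL : GRcirc (A.imp (A.or B)) := by
  apply GRcirc.taut; intro v
  simp only [Formula.imp, Formula.and, evalProp]
  cases evalProp v A <;> cases evalProp v B <;> rfl

lemma t_orIntroR : GRcirc (B.imp (A.or B)) := by
  apply GRcirc.taut; intro v
  simp only [Formula.imp, Formula.and, evalProp]
  cases evalProp v A <;> cases evalProp v B <;> rfl

lemma t_negOr : GRcirc ((A.neg).imp ((B.neg).imp ((A.or B).neg))) := by
  apply GRcirc.taut; intro v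
  simp only [Formula.imp, Formula.and, evalProp]
  cases evalProp v A <;> cases evalProp v B <;> rfl

/-- from `(C ∧ T) → ⊥` and `(¬C ∧ T) → ⊥` conclude `T → ⊥`. -/
lemma t_branch : GRcirc (((C.and G).imp Formula.falsum).imp
    ((((C.neg).and G).imp Formula.falsum).imp (G.imp Formula.falsum))) := by
  apply GRcirc.taut; intro v
  simp only [Formula.imp, Formula.and, evalProp]
  cases evalProp v C <;> cases evalProp v G <;> rfl

/-- seed juggling: `((¬G ∧ (□G ∧ S)) → ⊥) → (S → (□G → G))` with `B := □G`. -/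
lemma t_seed : GRcirc ((((A.neg).and (B.and S)).imp Formula.falsum).imp
    (S.imp (B.imp A))) := by
  apply GRcirc.taut; intro v
  simp only [Formula.imp, Formula.and, evalProp]
  cases evalProp v A <;> cases evalProp v B <;> cases evalProp v S <;> rfl

/-- `((¬A ∧ ¬⊥) → ⊥) → A`. -/
lemma t_single : GRcirc ((((A.neg).and (Formula.falsum.neg)).imp Formula.falsum).imp A) := by
  apply GRcirc.taut; intro v
  simp only [Formula.imp, Formula.and, evalProp]
  cases evalProp v A <;> rfl

end TautLemmas

lemma thmMP {A B : Formula} (h1 : GRcirc (A.imp B)) (h2 : GRcirc A) : GRcirc B :=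
  GRcirc.mp h1 h2

lemma impTrans {A B C : Formula} (h1 : GRcirc (A.imp B)) (h2 : GRcirc (B.imp C)) :
    GRcirc (A.imp C) :=
  thmMP (thmMP (t_impTrans A B C) h1) h2

lemma provOfThm {Γ : List Formula} {A : Formula} (h : GRcirc A) : Prov Γ A :=
  thmMP (t_const A (conj Γ)) h

lemma provMP {Γ : List Formula} {A B : Formula} (h1 : Prov Γ (A.imp B)) (h2 : Prov Γ A) :
    Prov Γ B :=
  thmMP (thmMP (t_dist A B (conj Γ)) h1) h2

lemma provMember {Γ : List Formula} {A : Formula} (h : A ∈ Γ) : Prov Γ A := by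
  induction Γ with
  | nil => cases h
  | cons D l ih =>
    rcases List.mem_cons.mp h with h | h
    · subst h; exact t_andElimL A (conj l)
    · exact impTrans (t_andElimR D (conj l)) (ih h)

lemma provCollect {Γ Δ : List Formula} (h : ∀ D ∈ Δ, Prov Γ D) : Prov Γ (conj Δ) := by
  induction Δ with
  | nil => exact provOfThm (t_top)
  | cons D l ih =>
    exact provMP (provMP (provOfThm (t_andIntro D (conj l)))
      (h D (List.mem_cons_self))) (ih fun E hE => h E (List.mem_cons_of_mem D hE))

lemma provCut {Γ Δ : List Formula} {A : Formula} (h : ∀ D ∈ Γ, Prov Δ D)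
    (hA : Prov Γ A) : Prov Δ A :=
  provMP (provOfThm hA) (provCollect h)

lemma provFalse {Γ : List Formula} {A : Formula} (h1 : Prov Γ A) (h2 : Prov Γ A.neg) :
    Prov Γ Formula.falsum :=
  provMP (provMP (provOfThm (t_negElim A)) h1) h2

lemma conOfSub {Γ Δ : List Formula} (h : ∀ D ∈ Γ, D ∈ Δ) (hc : Con Δ) : Con Γ :=
  fun hP => hc (provCut (fun D hD => provMember (h D hD)) hP)

/-- the derived transitivity axiom `□C → □□C`. -/
lemma thm4 (C : Formula) : GRcirc ((C.box).imp ((C.box).box)) := by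
  set D := C.and (C.box) with hD
  have s1 : GRcirc (D.imp C) := t_andElimL _ _
  have s2 : GRcirc (D.imp (C.box)) := t_andElimR _ _
  have s4 : GRcirc ((D.box).imp (C.box.box)) := thmMP GRcirc.k (GRcirc.nec s2)
  have s4' : GRcirc ((D.box).imp (C.box)) := thmMP GRcirc.k (GRcirc.nec s1)
  -- s5 : C → (□D → D)  propositionally from s4'
  have s5 : GRcirc (C.imp ((D.box).imp D)) := by
    have tt : GRcirc (((D.box).imp (C.box)).imp (C.imp ((D.box).imp (C.and (C.box))))) := by
      apply GRcirc.taut; intro v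
      simp only [Formula.imp, Formula.and, evalProp]
      cases v (D.box) <;> cases v (C.box) <;> cases evalProp v C <;> rfl
    exact thmMP tt s4'
  have s6 : GRcirc ((C.box).imp (((D.box).imp D).box)) := thmMP GRcirc.k (GRcirc.nec s5)
  have s7 : GRcirc ((C.box).imp (D.box)) := impTrans s6 GRcirc.loeb
  exact impTrans s7 s4

/-- contraposed `diaBb`: `□¬A → □¬■A`. -/
lemma thmDiaBb' (A : Formula) : GRcirc (((A.neg).box).imp (((A.bb).neg).box)) := by
  have h := GRcirc.diaBb (A := A)
  simp only [Formula.dia] at h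
  exact thmMP (t_contrapos (((A.bb).neg).box) (((A.neg).box))) h

/-- box distributes over binary conjunction. -/
lemma thmBoxAnd (A B : Formula) : GRcirc ((A.box).imp (((B.box)).imp ((A.and B).box))) := by
  have d1 : GRcirc ((A.imp (B.imp (A.and B))).box) := GRcirc.nec (t_andIntro A B)
  have d2 : GRcirc ((A.box).imp (((B.imp (A.and B))).box)) := thmMP GRcirc.k d1
  have d3 : GRcirc ((((B.imp (A.and B))).box).imp ((B.box).imp ((A.and B).box))) := GRcirc.k
  exact impTrans d2 d3

/-- if every member of `Δ` is boxedly provable from `Γ`, then `□(conj Δ)` is provable. -/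
lemma provBoxCollect {Γ Δ : List Formula} (h : ∀ D ∈ Δ, Prov Γ (D.box)) :
    Prov Γ ((conj Δ).box) := by
  induction Δ with
  | nil => exact provOfThm (GRcirc.nec (t_top))
  | cons D l ih =>
    have h1 : Prov Γ ((D.box)) := h D (List.mem_cons_self)
    have h2 : Prov Γ (((conj l)).box) := ih fun E hE => h E (List.mem_cons_of_mem D hE)
    exact provMP (provMP (provOfThm (thmBoxAnd D (conj l))) h1) h2

end GRproof
namespace GRproof

/-! ## Adequate sets and finite maximal consistent valuations -/

structure Adequate (Φ : List Formula) : Prop where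
  fal : Formula.falsum ∈ Φ
  boxfal : Formula.falsum.box ∈ Φ
  sub_neg : ∀ {C : Formula}, C.neg ∈ Φ → C ∈ Φ
  sub_or : ∀ {C D : Formula}, C.or D ∈ Φ → C ∈ Φ ∧ D ∈ Φ
  sub_box : ∀ {C : Formula}, C.box ∈ Φ → C ∈ Φ
  sub_bb : ∀ {C : Formula}, C.bb ∈ Φ → C ∈ Φ
  bb_box : ∀ {C : Formula}, C.bb ∈ Φ → C.box ∈ Φ
  bb_boxneg : ∀ {C : Formula}, C.bb ∈ Φ → (C.neg).box ∈ Φ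

def lits (Φ : List Formula) (f : Formula → Bool) : List Formula :=
  Φ.map (fun C => if f C then C else C.neg)

def WOK (Φ : List Formula) (f : Formula → Bool) : Prop :=
  Con (lits Φ f) ∧ ∀ C, C ∉ Φ → f C = false

def MW (Φ : List Formula) : Type := {f : Formula → Bool // WOK Φ f}

variable {Φ : List Formula}

lemma mem_lits_pos {f : Formula → Bool} {C : Formula} (hC : C ∈ Φ) (h : f C = true) :
    C ∈ lits Φ f := by
  refine List.mem_map.mpr ⟨C, hC, ?_⟩
  simp [h]

lemma mem_lits_neg {f : Formula → Bool} {C : Formula} (hC : C ∈ Φ) (h : f C = false) :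
    C.neg ∈ lits Φ f := by
  refine List.mem_map.mpr ⟨C, hC, ?_⟩
  simp [h]

lemma closure (f : MW Φ) {C : Formula} (hC : C ∈ Φ) (h : Prov (lits Φ f.1) C) :
    f.1 C = true := by
  by_contra hne
  have hfalse : f.1 C = false := by revert hne; cases f.1 C <;> simp
  exact f.2.1 (provFalse h (provMember (mem_lits_neg hC hfalse)))

lemma valFalsum (f : MW Φ) (h : Formula.falsum ∈ Φ) : f.1 Formula.falsum = false := by
  by_contra hne
  have : f.1 Formula.falsum = true := by revert hne; cases f.1 Formula.falsum <;> simp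
  exact f.2.1 (provMember (mem_lits_pos h this))

lemma valNegFalse (f : MW Φ) {C : Formula} (hn : C.neg ∈ Φ) (hC : C ∈ Φ)
    (h : f.1 C = true) : f.1 C.neg = false := by
  by_contra hne
  have h2 : f.1 C.neg = true := by revert hne; cases f.1 C.neg <;> simp
  exact f.2.1 (provFalse (provMember (mem_lits_pos hC h))
    (provMember (mem_lits_pos hn h2)))

lemma valNegTrue (f : MW Φ) {C : Formula} (hn : C.neg ∈ Φ) (hC : C ∈ Φ)
    (h : f.1 C = false) : f.1 C.neg = true :=
  closure f hn (provMember (mem_lits_neg hC h))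

lemma valOr (f : MW Φ) {C D : Formula} (ho : C.or D ∈ Φ) (hC : C ∈ Φ) (hD : D ∈ Φ) :
    f.1 (C.or D) = (f.1 C || f.1 D) := by
  cases hc : f.1 C with
  | true =>
    have : Prov (lits Φ f.1) (C.or D) :=
      provMP (provOfThm (t_orIntroL C D)) (provMember (mem_lits_pos hC hc))
    simp [closure f ho this]
  | false =>
    cases hd : f.1 D with
    | true =>
      have : Prov (lits Φ f.1) (C.or D) :=
        provMP (provOfThm (t_orIntroR C D)) (provMember (mem_lits_pos hD hd))
      simp [closure f ho this]
    | false =>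
      have hno : Prov (lits Φ f.1) ((C.or D).neg) :=
        provMP (provMP (provOfThm (t_negOr C D)) (provMember (mem_lits_neg hC hc)))
          (provMember (mem_lits_neg hD hd))
      simp only [Bool.or_false]
      by_contra hne
      have h2 : f.1 (C.or D) = true := by revert hne; cases f.1 (C.or D) <;> simp
      exact f.2.1 (provFalse (provMember (mem_lits_pos ho h2)) hno)

/-! ## Lindenbaum -/

open Classical in
noncomputable def extendL : List Formula → List Formula → List Formula
  | [], T => T
  | C :: M, T => extendL M (if Con (C :: T) then C :: T else C.neg :: T)

lemma extend_spec (M : List Formula) (T : List Formula) (hT : Con T) :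
    Con (extendL M T) ∧ (∀ D ∈ T, D ∈ extendL M T) ∧
      (∀ C ∈ M, C ∈ extendL M T ∨ C.neg ∈ extendL M T) := by
  induction M generalizing T with
  | nil => exact ⟨hT, fun D hD => hD, fun C hC => absurd hC List.not_mem_nil⟩
  | cons C M ih =>
    by_cases hc : Con (C :: T)
    · have heq : extendL (C :: M) T = extendL M (C :: T) := by
        rw [extendL, if_pos hc]
      obtain ⟨h1, h2, h3⟩ := ih (C :: T) hc
      rw [heq]
      refine ⟨h1, fun D hD => h2 D (List.mem_cons_of_mem _ hD), fun E hE => ?_⟩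
      rcases List.mem_cons.mp hE with h | h
      · subst h; exact Or.inl (h2 _ List.mem_cons_self)
      · exact h3 E h
    · have hcn : Con (C.neg :: T) := by
        intro hP
        apply hT
        have h1 : Prov (C :: T) Formula.falsum := by
          by_contra h; exact hc h
        exact thmMP (thmMP (t_branch C (conj T)) h1) hP
      have heq : extendL (C :: M) T = extendL M (C.neg :: T) := by
        rw [extendL, if_neg hc]
      obtain ⟨h1, h2, h3⟩ := ih (C.neg :: T) hcn
      rw [heq]
      refine ⟨h1, fun D hD => h2 D (List.mem_cons_of_mem _ hD), fun E hE => ?_⟩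
      rcases List.mem_cons.mp hE with h | h
      · subst h; exact Or.inr (h2 _ List.mem_cons_self)
      · exact h3 E h

lemma lindenbaum (Φ : List Formula) (T : List Formula) (hT : Con T) :
    ∃ f : MW Φ, Con (T ++ lits Φ f.1) := by
  classical
  obtain ⟨hcon, hsub, hdec⟩ := extend_spec Φ T hT
  set T' := extendL Φ T with hT'
  set f : Formula → Bool := fun C => decide (C ∈ Φ) && decide (C ∈ T') with hf
  have hmem : ∀ D ∈ T ++ lits Φ f, D ∈ T' := by
    intro D hD
    rcases List.mem_append.mp hD with h | h
    · exact hsub D h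
    · obtain ⟨C, hCΦ, hCe⟩ := List.mem_map.mp h
      by_cases hft : f C = true
      · have hCT' : C ∈ T' := by
          have := hft
          simp only [hf, Bool.and_eq_true, decide_eq_true_eq] at this
          exact this.2
        rw [if_pos hft] at hCe
        exact hCe ▸ hCT'
      · have hnt : C ∉ T' := by
          intro hC
          exact hft (by simp [hf, hCΦ, hC])
        have : C.neg ∈ T' := (hdec C hCΦ).resolve_left hnt
        rw [if_neg hft] at hCe
        exact hCe ▸ this
  have hconT : Con (T ++ lits Φ f) := by
    intro hP
    exact hcon (provCut (fun D hD => provMember (hmem D hD)) hP)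
  refine ⟨⟨f, ?_, ?_⟩, hconT⟩
  · exact conOfSub (fun D hD => List.mem_append.mpr (Or.inr hD)) hconT
  · intro C hC
    simp [hf, hC]

/-- read membership in the seed list off consistency with a world. -/
lemma seedTrue {T : List Formula} {f : MW Φ} (hcon : Con (T ++ lits Φ f.1))
    {C : Formula} (hC : C ∈ Φ) (hT : C ∈ T) : f.1 C = true := by
  by_contra hne
  have hfalse : f.1 C = false := by revert hne; cases f.1 C <;> simp
  refine hcon (provFalse (provMember (List.mem_append.mpr (Or.inl hT))) ?_)
  exact provMember (List.mem_append.mpr (Or.inr (mem_lits_neg hC hfalse)))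

lemma seedFalse {T : List Formula} {f : MW Φ} (hcon : Con (T ++ lits Φ f.1))
    {C : Formula} (hC : C ∈ Φ) (hT : C.neg ∈ T) : f.1 C = false := by
  by_contra hne
  have htrue : f.1 C = true := by revert hne; cases f.1 C <;> simp
  refine hcon (provFalse ?_ (provMember (List.mem_append.mpr (Or.inl hT))))
  exact provMember (List.mem_append.mpr (Or.inr (mem_lits_pos hC htrue)))

end GRproof
namespace GRproof

/-! ## The step relation and the successor lemma -/

variable {Φ : List Formula}

def step (Φ : List Formula) (x y : Formula → Bool) : Prop :=
  (∀ C : Formula, C.box ∈ Φ → x (C.box) = true → y C = true ∧ y (C.box) = true) ∧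
  (∀ C : Formula, C.bb ∈ Φ → x (C.box) = true → y (C.bb) = true) ∧
  (∀ C : Formula, C.bb ∈ Φ → x ((C.neg).box) = true → y (C.bb) = false) ∧
  (∃ D : Formula, D.box ∈ Φ ∧ y (D.box) = true ∧ x (D.box) = false)

lemma step_trans (hΦ : Adequate Φ) {x y z : Formula → Bool}
    (h1 : step Φ x y) (h2 : step Φ y z) : step Φ x z := by
  obtain ⟨a1, b1, c1, d1⟩ := h1
  obtain ⟨a2, b2, c2, d2⟩ := h2
  refine ⟨?_, ?_, ?_, ?_⟩
  · intro C hC hx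
    exact a2 C hC (a1 C hC hx).2
  · intro C hC hx
    exact b2 C hC (a1 C (hΦ.bb_box hC) hx).2
  · intro C hC hx
    exact c2 C hC (a1 (C.neg) (hΦ.bb_boxneg hC) hx).2
  · obtain ⟨D, hD, hz, hy⟩ := d2
    refine ⟨D, hD, hz, ?_⟩
    by_contra hne
    have hx : x (D.box) = true := by revert hne; cases x (D.box) <;> simp
    rw [(a1 D hD hx).2] at hy
    cases hy

lemma step_irrefl {x : Formula → Bool} (h : step Φ x x) : False := by
  obtain ⟨D, _, h1, h2⟩ := h.2.2.2
  rw [h1] at h2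
  cases h2

lemma topNoStep (hΦ : Adequate Φ) {x : Formula → Bool} {g : MW Φ}
    (htop : x (Formula.falsum.box) = true) (h : step Φ x g.1) : False := by
  have := (h.1 Formula.falsum hΦ.boxfal htop).1
  rw [valFalsum g hΦ.fal] at this
  cases this

/-! ### seed lists -/

def selA (v : Formula → Bool) : Formula → Option Formula
  | .box C => if v (C.box) = true then some C else none
  | _ => none

def selB (v : Formula → Bool) : Formula → Option Formula
  | .bb C => if v (C.box) = true then some (C.bb) else none
  | _ => none

def selC (v : Formula → Bool) : Formula → Option Formula
  | .bb C => if v ((C.neg).box) = true then some ((C.bb).neg) else none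
  | _ => none

lemma selA_eq {v : Formula → Bool} {D E : Formula} (h : selA v D = some E) :
    D = E.box ∧ v (E.box) = true := by
  cases D with
  | var n => simp [selA] at h
  | falsum => simp [selA] at h
  | neg C => simp [selA] at h
  | or C1 C2 => simp [selA] at h
  | bb C => simp [selA] at h
  | box C =>
    simp only [selA] at h
    by_cases hv : v (C.box) = true
    · rw [if_pos hv] at h
      cases h
      exact ⟨rfl, hv⟩
    · rw [if_neg hv] at h
      cases h

lemma selB_eq {v : Formula → Bool} {D E : Formula} (h : selB v D = some E) :
    ∃ C : Formula, D = C.bb ∧ E = C.bb ∧ v (C.box) = true := by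
  cases D with
  | var n => simp [selB] at h
  | falsum => simp [selB] at h
  | neg C => simp [selB] at h
  | or C1 C2 => simp [selB] at h
  | box C => simp [selB] at h
  | bb C =>
    simp only [selB] at h
    by_cases hv : v (C.box) = true
    · rw [if_pos hv] at h
      cases h
      exact ⟨C, rfl, rfl, hv⟩
    · rw [if_neg hv] at h
      cases h

lemma selC_eq {v : Formula → Bool} {D E : Formula} (h : selC v D = some E) :
    ∃ C : Formula, D = C.bb ∧ E = (C.bb).neg ∧ v ((C.neg).box) = true := by
  cases D with
  | var n => simp [selC] at h
  | falsum => simp [selC] at h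
  | neg C => simp [selC] at h
  | or C1 C2 => simp [selC] at h
  | box C => simp [selC] at h
  | bb C =>
    simp only [selC] at h
    by_cases hv : v ((C.neg).box) = true
    · rw [if_pos hv] at h
      cases h
      exact ⟨C, rfl, rfl, hv⟩
    · rw [if_neg hv] at h
      cases h

def seedList (Φ : List Formula) (v : Formula → Bool) : List Formula :=
  (Φ.filterMap (selA v)) ++ ((Φ.filterMap (selA v)).map Formula.box) ++
    (Φ.filterMap (selB v)) ++ (Φ.filterMap (selC v))

lemma seedBoxes (hΦ : Adequate Φ) (v : MW Φ) :
    ∀ ℓ ∈ seedList Φ v.1, Prov (lits Φ v.1) (ℓ.box) := by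
  intro ℓ hℓ
  simp only [seedList, List.mem_append] at hℓ
  rcases hℓ with ((h | h) | h) | h
  · obtain ⟨D, hDΦ, hD⟩ := List.mem_filterMap.mp h
    obtain ⟨hbox, hv⟩ := selA_eq hD
    exact provMember (mem_lits_pos (hbox ▸ hDΦ) hv)
  · obtain ⟨E, hE, hEbox⟩ := List.mem_map.mp h
    obtain ⟨D, hDΦ, hD⟩ := List.mem_filterMap.mp hE
    obtain ⟨hbox, hv⟩ := selA_eq hD
    subst hEbox
    exact provMP (provOfThm (thm4 E)) (provMember (mem_lits_pos (hbox ▸ hDΦ) hv))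
  · obtain ⟨D, hDΦ, hD⟩ := List.mem_filterMap.mp h
    obtain ⟨C, hDb, hEb, hv⟩ := selB_eq hD
    subst hDb; subst hEb
    exact provMP (provOfThm GRcirc.boxBb)
      (provMember (mem_lits_pos (hΦ.bb_box hDΦ) hv))
  · obtain ⟨D, hDΦ, hD⟩ := List.mem_filterMap.mp h
    obtain ⟨C, hDb, hEb, hv⟩ := selC_eq hD
    subst hDb; subst hEb
    exact provMP (provOfThm (thmDiaBb' C))
      (provMember (mem_lits_pos (hΦ.bb_boxneg hDΦ) hv))

end GRproof
namespace GRproof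

variable {Φ : List Formula}

lemma succExists (hΦ : Adequate Φ) (v : MW Φ) {G : Formula} (hG : G.box ∈ Φ)
    (hv : v.1 (G.box) = false) :
    ∃ y : MW Φ, step Φ v.1 y.1 ∧ y.1 G = false := by
  have hGΦ : G ∈ Φ := hΦ.sub_box hG
  set T : List Formula := G.neg :: (G.box) :: seedList Φ v.1 with hT
  have hcon : Con T := by
    intro hP
    have h1 : GRcirc ((conj (seedList Φ v.1)).imp ((G.box).imp G)) :=
      thmMP (t_seed G (G.box) (conj (seedList Φ v.1))) hP
    have h3 : GRcirc (((conj (seedList Φ v.1)).box).imp (((G.box).imp G).box)) :=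
      thmMP GRcirc.k (GRcirc.nec h1)
    have h5 : GRcirc (((conj (seedList Φ v.1)).box).imp (G.box)) :=
      impTrans h3 GRcirc.loeb
    have h6 : Prov (lits Φ v.1) ((conj (seedList Φ v.1)).box) :=
      provBoxCollect (seedBoxes hΦ v)
    have h7 : Prov (lits Φ v.1) (G.box) := provMP (provOfThm h5) h6
    have h8 := closure v hG h7
    rw [hv] at h8
    cases h8
  obtain ⟨y, hy⟩ := lindenbaum Φ T hcon
  have memT : ∀ ℓ ∈ seedList Φ v.1, ℓ ∈ T :=
    fun ℓ h => List.mem_cons_of_mem _ (List.mem_cons_of_mem _ h)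
  have memSA : ∀ C : Formula, C.box ∈ Φ → v.1 (C.box) = true →
      C ∈ Φ.filterMap (selA v.1) := by
    intro C hC hx
    exact List.mem_filterMap.mpr ⟨C.box, hC, by simp [selA, hx]⟩
  refine ⟨y, ⟨?_, ?_, ?_, ?_⟩, ?_⟩
  · intro C hC hx
    constructor
    · refine seedTrue hy (hΦ.sub_box hC) (memT C ?_)
      simp only [seedList, List.mem_append]
      exact Or.inl (Or.inl (Or.inl (memSA C hC hx)))
    · refine seedTrue hy hC (memT (C.box) ?_)
      simp only [seedList, List.mem_append]
      exact Or.inl (Or.inl (Or.inr (List.mem_map.mpr ⟨C, memSA C hC hx, rfl⟩)))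
  · intro C hC hx
    refine seedTrue hy hC (memT (C.bb) ?_)
    simp only [seedList, List.mem_append]
    exact Or.inl (Or.inr (List.mem_filterMap.mpr ⟨C.bb, hC, by simp [selB, hx]⟩))
  · intro C hC hx
    refine seedFalse hy hC (memT ((C.bb).neg) ?_)
    simp only [seedList, List.mem_append]
    exact Or.inr (List.mem_filterMap.mpr ⟨C.bb, hC, by simp [selC, hx]⟩)
  · refine ⟨G, hG, ?_, hv⟩
    exact seedTrue hy hG (List.mem_cons_of_mem _ List.mem_cons_self)
  · exact seedFalse hy hGΦ List.mem_cons_self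

/-- at a non-top world, `■C` and `□C` have the same value. -/
lemma valBBIffBox (hΦ : Adequate Φ) (f : MW Φ) {C : Formula} (hC : C.bb ∈ Φ)
    (hnt : f.1 (Formula.falsum.box) = false) : f.1 (C.bb) = f.1 (C.box) := by
  cases hb : f.1 (C.bb) with
  | true =>
    have : Prov (lits Φ f.1) (C.box) :=
      provMP (provOfThm GRcirc.bbBox) (provMember (mem_lits_pos hC hb))
    exact (closure f (hΦ.bb_box hC) this).symm
  | false =>
    cases hx : f.1 (C.box) with
    | false => rfl
    | true =>
      have h1 : Prov (lits Φ f.1) ((Formula.falsum.box).or (C.bb)) :=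
        provMP (provOfThm GRcirc.ros) (provMember (mem_lits_pos (hΦ.bb_box hC) hx))
      have h2 : Prov (lits Φ f.1) ((Formula.falsum.box).neg) :=
        provMember (mem_lits_neg hΦ.boxfal hnt)
      have h3 : Prov (lits Φ f.1) (C.bb) :=
        provMP (provMP (provOfThm (t_orElim (Formula.falsum.box) (C.bb))) h1) h2
      rw [closure f hC h3] at hb
      cases hb

lemma valBBnec (f : MW Φ) {C : Formula} (hC : C.bb ∈ Φ) (h : GRcirc C) :
    f.1 (C.bb) = true :=
  closure f hC (provOfThm (GRcirc.bbnec h))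

end GRproof
namespace GRproof

variable {Φ : List Formula}

/-! ## The tree-like countermodel -/

def stepR (Φ : List Formula) (a b : MW Φ) : Prop := step Φ b.1 a.1

def WT (Φ : List Formula) : Type :=
  {l : List (MW Φ) // l ≠ [] ∧ l.Chain' (stepR Φ)}

def hd (σ : WT Φ) : MW Φ := σ.1.head σ.2.1

lemma hd_eq {σ : WT Φ} {w : MW Φ} {t : List (MW Φ)} (h : σ.1 = w :: t) : hd σ = w := by
  obtain ⟨l, hl⟩ := σ
  simp only at h
  subst h
  rfl

def ltW (σ τ : WT Φ) : Prop := ∃ ρ : List (MW Φ), ρ ≠ [] ∧ τ.1 = ρ ++ σ.1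

lemma ltW_trans {σ τ υ : WT Φ} (h1 : ltW σ τ) (h2 : ltW τ υ) : ltW σ υ := by
  obtain ⟨ρ1, hρ1, he1⟩ := h1
  obtain ⟨ρ2, hρ2, he2⟩ := h2
  refine ⟨ρ2 ++ ρ1, by simp [hρ2], ?_⟩
  rw [he2, he1, List.append_assoc]

lemma chainStep (hΦ : Adequate Φ) : ∀ (ρ : List (MW Φ)) (z x : MW Φ) (t : List (MW Φ)),
    List.Chain' (stepR Φ) (z :: (ρ ++ x :: t)) → step Φ x.1 z.1 := by
  intro ρ
  induction ρ with
  | nil =>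
    intro z x t hc
    exact (List.isChain_cons_cons.mp hc).1
  | cons w ρ' ih =>
    intro z x t hc
    have h1 : step Φ w.1 z.1 := (List.isChain_cons_cons.mp hc).1
    have h2 := ih w x t (List.isChain_cons_cons.mp hc).2
    exact step_trans hΦ h2 h1

lemma ltStep (hΦ : Adequate Φ) {σ τ : WT Φ} (h : ltW σ τ) :
    step Φ (hd σ).1 (hd τ).1 := by
  obtain ⟨ρ, hρ, he⟩ := h
  obtain ⟨x, t, hσ⟩ : ∃ x t, σ.1 = x :: t := by
    cases hσ : σ.1 with
    | nil => exact absurd hσ σ.2.1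
    | cons x t => exact ⟨x, t, rfl⟩
  obtain ⟨z, ρ', hρ'⟩ : ∃ z ρ', ρ = z :: ρ' := by
    cases hρ2 : ρ with
    | nil => exact absurd hρ2 hρ
    | cons z ρ' => exact ⟨z, ρ', rfl⟩
  have he2 : τ.1 = z :: (ρ' ++ x :: t) := by rw [he, hρ', hσ]; rfl
  rw [hd_eq hσ, hd_eq he2]
  have hc := τ.2.2
  rw [he2] at hc
  exact chainStep hΦ ρ' z x t hc

lemma ltW_irrefl (σ : WT Φ) (h : ltW σ σ) : False := by
  obtain ⟨ρ, hρ, he⟩ := h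
  have hlen := congrArg List.length he
  rw [List.length_append] at hlen
  have h0 : ρ.length = 0 := by omega
  exact hρ (List.length_eq_zero_iff.mp h0)

lemma topNoLt (hΦ : Adequate Φ) {σ τ : WT Φ}
    (htop : (hd σ).1 (Formula.falsum.box) = true) (h : ltW σ τ) : False :=
  topNoStep hΦ htop (ltStep hΦ h)

def precW (Φ : List Formula) (B : Formula) (σ τ : WT Φ) : Prop :=
  ltW σ τ
  ∨ (∃ (w u : MW Φ) (t : List (MW Φ)) (x : MW Φ),
      σ.1 = w :: u :: t ∧ w.1 (Formula.falsum.box) = true ∧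
      τ.1 = x :: u :: t ∧ step Φ u.1 x.1 ∧ (B.bb ∈ Φ → x.1 B = w.1 (B.bb)))
  ∨ (∃ w : MW Φ, σ.1 = [w] ∧ w.1 (Formula.falsum.box) = true ∧
      B.bb ∈ Φ ∧ w.1 (B.bb) = false ∧ (hd τ).1 B = false)

lemma prec_cond2 (hΦ : Adequate Φ) {B : Formula} {x y z : WT Φ}
    (h1 : ltW x y) (h2 : precW Φ B y z) : ltW x z := by
  rcases h2 with h2 | h2 | h2
  · exact ltW_trans h1 h2
  · obtain ⟨w, u, t, m, hy, _, hz, _, _⟩ := h2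
    obtain ⟨ρ, hρ, he⟩ := h1
    obtain ⟨a, ρ', hρ'⟩ : ∃ a ρ', ρ = a :: ρ' := by
      cases hh : ρ with
      | nil => exact absurd hh hρ
      | cons a ρ' => exact ⟨a, ρ', rfl⟩
    rw [hρ'] at he
    rw [hy] at he
    have he' : w :: (u :: t) = a :: (ρ' ++ x.1) := he
    have h3 : u :: t = ρ' ++ x.1 := (List.cons.injEq _ _ _ _ ▸ he').2
    refine ⟨m :: ρ', by simp, ?_⟩
    rw [hz, h3]
    rfl
  · obtain ⟨w, hy, _⟩ := h2
    obtain ⟨ρ, hρ, he⟩ := h1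
    rw [hy] at he
    obtain ⟨a, ρ', hρ'⟩ : ∃ a ρ', ρ = a :: ρ' := by
      cases hh : ρ with
      | nil => exact absurd hh hρ
      | cons a ρ' => exact ⟨a, ρ', rfl⟩
    rw [hρ'] at he
    have he' : [w] = a :: (ρ' ++ x.1) := he
    have h3 : [] = ρ' ++ x.1 := (List.cons.injEq _ _ _ _ ▸ he').2
    rcases List.append_eq_nil_iff.mp h3.symm with ⟨_, h4⟩
    exact absurd h4 x.2.1

lemma prec_cond3 (hΦ : Adequate Φ) {B : Formula} {x y z : WT Φ}
    (h1 : precW Φ B x y) (h2 : ltW x z) : ltW x y := by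
  rcases h1 with h1 | h1 | h1
  · exact h1
  · obtain ⟨w, u, t, m, hx, htop, _, _, _⟩ := h1
    rw [← hd_eq hx] at htop
    exact absurd h2 (fun h => topNoLt hΦ htop h)
  · obtain ⟨w, hx, htop, _⟩ := h1
    rw [← hd_eq hx] at htop
    exact absurd h2 (fun h => topNoLt hΦ htop h)

lemma validCons {σ : WT Φ} {m : MW Φ} (h : step Φ (hd σ).1 m.1) :
    (m :: σ.1) ≠ [] ∧ (m :: σ.1).Chain' (stepR Φ) := by
  refine ⟨by simp, ?_⟩
  obtain ⟨x, t, hσ⟩ : ∃ x t, σ.1 = x :: t := by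
    cases hσ : σ.1 with
    | nil => exact absurd hσ σ.2.1
    | cons x t => exact ⟨x, t, rfl⟩
  rw [hσ, List.Chain', List.isChain_cons_cons]
  constructor
  · show step Φ x.1 m.1
    rw [hd_eq hσ] at h
    exact h
  · rw [← hσ]; exact σ.2.2

lemma prec_cond4 (hΦ : Adequate Φ) {B : Formula} {x y : WT Φ} (h : ltW x y) :
    ∃ z : WT Φ, precW Φ B y z ∧ ltW x z := by
  by_cases htop : (hd y).1 (Formula.falsum.box) = true
  · -- y is a top world with a parent
    obtain ⟨ρ, hρ, he⟩ := h
    obtain ⟨a, ρ', hρ'⟩ : ∃ a ρ', ρ = a :: ρ' := by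
      cases hh : ρ with
      | nil => exact absurd hh hρ
      | cons a ρ' => exact ⟨a, ρ', rfl⟩
    obtain ⟨b, t0, hx1⟩ : ∃ b t0, x.1 = b :: t0 := by
      cases hh : x.1 with
      | nil => exact absurd hh x.2.1
      | cons b t0 => exact ⟨b, t0, rfl⟩
    -- y.1 = a :: (ρ' ++ x.1) and ρ' ++ x.1 ≠ []
    have hy1 : y.1 = a :: (ρ' ++ x.1) := by rw [he, hρ']; rfl
    obtain ⟨u, t, hut⟩ : ∃ u t, ρ' ++ x.1 = u :: t := by
      cases hh : ρ' ++ x.1 with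
      | nil => rcases List.append_eq_nil_iff.mp hh with ⟨_, h4⟩; exact absurd h4 x.2.1
      | cons u t => exact ⟨u, t, rfl⟩
    have hy2 : y.1 = a :: u :: t := by rw [hy1, hut]
    have hw : a.1 (Formula.falsum.box) = true := by rw [← hd_eq hy2]; exact htop
    have hstepua : step Φ u.1 a.1 := by
      have hc := y.2.2
      rw [hy2] at hc
      exact (List.isChain_cons_cons.mp hc).1
    have huNotTop : u.1 (Formula.falsum.box) = false := by
      cases hu : u.1 (Formula.falsum.box) with
      | false => rfl
      | true => exact absurd (topNoStep hΦ hu hstepua) (fun hh => hh)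
    -- find the witness x' with the right guard
    have hwit : ∃ m : MW Φ, step Φ u.1 m.1 ∧ (B.bb ∈ Φ → m.1 B = a.1 (B.bb)) := by
      by_cases hbb : B.bb ∈ Φ
      · cases hwbb : a.1 (B.bb) with
        | true =>
          have hneg : u.1 ((B.neg).box) = false := by
            cases hn : u.1 ((B.neg).box) with
            | false => rfl
            | true =>
              have := hstepua.2.2.1 B hbb hn
              rw [hwbb] at this
              cases this
          obtain ⟨m, hm1, hm2⟩ := succExists hΦ u (hΦ.bb_boxneg hbb) hneg
          refine ⟨m, hm1, fun _ => ?_⟩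
          have hBneg : B.neg ∈ Φ := hΦ.sub_box (hΦ.bb_boxneg hbb)
          have hB : B ∈ Φ := hΦ.sub_neg hBneg
          cases hmB : m.1 B with
          | true => rfl
          | false =>
            have := valNegTrue m hBneg hB hmB
            rw [this] at hm2
            cases hm2
        | false =>
          have hbox : u.1 (B.box) = false := by
            cases hn : u.1 (B.box) with
            | false => rfl
            | true =>
              have := hstepua.2.1 B hbb hn
              rw [hwbb] at this
              cases this
          obtain ⟨m, hm1, hm2⟩ := succExists hΦ u (hΦ.bb_box hbb) hbox
          exact ⟨m, hm1, fun _ => by rw [hm2]⟩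
      · obtain ⟨m, hm1, _⟩ := succExists hΦ u hΦ.boxfal huNotTop
        exact ⟨m, hm1, fun hh => absurd hh hbb⟩
    obtain ⟨m, hm1, hm2⟩ := hwit
    have hvalid : (m :: u :: t) ≠ [] ∧ (m :: u :: t).Chain' (stepR Φ) := by
      refine ⟨by simp, ?_⟩
      rw [List.Chain', List.isChain_cons_cons]
      refine ⟨hm1, ?_⟩
      have hc := y.2.2
      rw [hy2] at hc
      exact (List.isChain_cons_cons.mp hc).2
    refine ⟨⟨m :: u :: t, hvalid⟩, ?_, ?_⟩
    · exact Or.inr (Or.inl ⟨a, u, t, m, hy2, hw, rfl, hm1, hm2⟩)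
    · -- x ⊏ z : u :: t = ρ' ++ x.1 so z.1 = (m :: ρ') ++ x.1
      refine ⟨m :: ρ', by simp, ?_⟩
      show m :: u :: t = (m :: ρ') ++ x.1
      rw [← hut]
      rfl
  · -- y not top: extend y by one step
    have hnt : (hd y).1 (Formula.falsum.box) = false := by
      cases hh : (hd y).1 (Formula.falsum.box) with
      | false => rfl
      | true => exact absurd hh htop
    obtain ⟨m, hm1, _⟩ := succExists hΦ (hd y) hΦ.boxfal hnt
    refine ⟨⟨m :: y.1, validCons hm1⟩, Or.inl ⟨[m], by simp, rfl⟩, ?_⟩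
    obtain ⟨ρ, hρ, he⟩ := h
    refine ⟨m :: ρ, by simp, ?_⟩
    show m :: y.1 = (m :: ρ) ++ x.1
    rw [he]
    rfl

end GRproof
namespace GRproof

variable {Φ : List Formula}

/-! ## Finiteness -/

lemma finMW (Φ : List Formula) : Finite (MW Φ) := by
  apply Finite.of_injective (fun f : MW Φ => (fun i : Fin Φ.length => f.1 (Φ.get i)))
  intro f g hfg
  apply Subtype.ext
  funext C
  by_cases hC : C ∈ Φ
  · obtain ⟨i, hi⟩ := List.mem_iff_get.mp hC
    have := congrFun hfg i
    simp only at this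
    rw [hi] at this
    exact this
  · rw [f.2.2 C hC, g.2.2 C hC]

lemma finWT (hΦ : Adequate Φ) : Finite (WT Φ) := by
  haveI : Finite (MW Φ) := finMW Φ
  haveI : Fintype (MW Φ) := Fintype.ofFinite _
  set N := Fintype.card (MW Φ) with hN
  have hlen : ∀ σ : WT Φ, σ.1.length ≤ N := by
    intro σ
    haveI : IsTrans (MW Φ) (stepR Φ) := ⟨fun a b c h1 h2 => step_trans hΦ h2 h1⟩
    have hpw : σ.1.Pairwise (stepR Φ) := List.isChain_iff_pairwise.mp σ.2.2
    have hnd : σ.1.Nodup := by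
      refine hpw.imp ?_
      intro a b hab he
      subst he
      exact step_irrefl hab
    exact hnd.length_le_card
  apply Finite.of_injective (fun σ : WT Φ => (fun i : Fin (N+1) => σ.1[i.1]?))
  intro σ τ h
  apply Subtype.ext
  apply List.ext_getElem?
  intro n
  by_cases hn : n < N + 1
  · exact congrFun h ⟨n, hn⟩
  · have h1 := hlen σ
    have h2 := hlen τ
    rw [List.getElem?_eq_none (by omega), List.getElem?_eq_none (by omega)]

/-! ## The satisfaction relation and the truth lemma -/

def frc (Φ : List Formula) : Formula → WT Φ → Prop
  | .var n, σ => (hd σ).1 (.var n) = true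
  | .falsum, _ => False
  | .neg A, σ => ¬ frc Φ A σ
  | .or A B, σ => frc Φ A σ ∨ frc Φ B σ
  | .box A, σ => ∀ τ : WT Φ, ltW σ τ → frc Φ A τ
  | .bb A, σ => ∀ τ : WT Φ, precW Φ A σ τ → frc Φ A τ

lemma boxTruth (hΦ : Adequate Φ) {A : Formula} (hbox : A.box ∈ Φ)
    (ih : ∀ τ : WT Φ, frc Φ A τ ↔ (hd τ).1 A = true) (σ : WT Φ) :
    (∀ τ : WT Φ, ltW σ τ → frc Φ A τ) ↔ (hd σ).1 (A.box) = true := by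
  constructor
  · intro h
    by_contra hne
    have hfalse : (hd σ).1 (A.box) = false := by
      revert hne; cases (hd σ).1 (A.box) <;> simp
    obtain ⟨m, hm1, hm2⟩ := succExists hΦ (hd σ) hbox hfalse
    have hτ : ltW σ ⟨m :: σ.1, validCons hm1⟩ := ⟨[m], by simp, rfl⟩
    have := (ih _).mp (h _ hτ)
    rw [hd_eq (σ := ⟨m :: σ.1, validCons hm1⟩) rfl] at this
    rw [hm2] at this
    cases this
  · intro h τ hlt
    exact (ih τ).mpr ((ltStep hΦ hlt).1 A hbox h).1

theorem truthLemma (hΦ : Adequate Φ) :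
    ∀ C : Formula, C ∈ Φ → ∀ σ : WT Φ, frc Φ C σ ↔ (hd σ).1 C = true := by
  intro C
  induction C with
  | var n => intro _ σ; exact Iff.rfl
  | falsum =>
    intro hC σ
    rw [valFalsum (hd σ) hΦ.fal]
    simp [frc]
  | neg A ih =>
    intro hC σ
    have hA := hΦ.sub_neg hC
    have hiff := ih hA σ
    show (¬ frc Φ A σ) ↔ _
    rw [hiff]
    constructor
    · intro h
      refine valNegTrue (hd σ) hC hA ?_
      revert h; cases (hd σ).1 A <;> simp
    · intro h2 hA'
      rw [valNegFalse (hd σ) hC hA hA'] at h2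
      cases h2
  | or A B ihA ihB =>
    intro hC σ
    obtain ⟨hA, hB⟩ := hΦ.sub_or hC
    show (frc Φ A σ ∨ frc Φ B σ) ↔ _
    rw [ihA hA σ, ihB hB σ, valOr (hd σ) hC hA hB]
    simp
  | box A ih =>
    intro hC σ
    exact boxTruth hΦ hC (fun τ => ih (hΦ.sub_box hC) τ) σ
  | bb A ih =>
    intro hC σ
    have hA := hΦ.sub_bb hC
    have hboxA := hΦ.bb_box hC
    have ih' : ∀ τ : WT Φ, frc Φ A τ ↔ (hd τ).1 A = true := fun τ => ih hA τ
    by_cases htop : (hd σ).1 (Formula.falsum.box) = true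
    · -- top world
      obtain ⟨w, rest, hσ⟩ : ∃ w rest, σ.1 = w :: rest := by
        cases hh : σ.1 with
        | nil => exact absurd hh σ.2.1
        | cons w rest => exact ⟨w, rest, rfl⟩
      have hw : hd σ = w := hd_eq hσ
      rw [hw] at htop
      cases rest with
      | nil =>
        -- no parent
        show (∀ τ : WT Φ, precW Φ A σ τ → frc Φ A τ) ↔ _
        rw [hw]
        cases hbbv : w.1 (A.bb) with
        | true =>
          refine iff_of_true ?_ rfl
          intro τ hprec
          rcases hprec with h | h | h
          · rw [← hw] at htop
            exact absurd h (fun hh => topNoLt hΦ htop hh)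
          · obtain ⟨w', u, t, m, hσ', _, _, _, _⟩ := h
            rw [hσ] at hσ'
            injection hσ' with _ h2
            cases h2
          · obtain ⟨w', hσ', _, _, hbb', _⟩ := h
            rw [hσ] at hσ'
            have : w = w' := (List.cons.injEq _ _ _ _ ▸ hσ').1
            rw [← this] at hbb'
            rw [hbbv] at hbb'
            cases hbb'
        | false =>
          refine iff_of_false ?_ (by simp)
          intro hall
          -- find a world where A fails
          have hnA : ¬ GRcirc A := by
            intro hthm
            rw [valBBnec w hC hthm] at hbbv
            cases hbbv
          have hcon : Con [A.neg] := by
            intro hP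
            exact hnA (thmMP (t_single A) hP)
          obtain ⟨f, hf⟩ := lindenbaum Φ [A.neg] hcon
          have hfA : f.1 A = false := seedFalse hf hA List.mem_cons_self
          have hτvalid : ([f] : List (MW Φ)) ≠ [] ∧ ([f] : List (MW Φ)).Chain' (stepR Φ) := by
            simp [List.Chain']
          have hprec : precW Φ A σ ⟨[f], hτvalid⟩ := by
            refine Or.inr (Or.inr ⟨w, hσ, htop, hC, hbbv, ?_⟩)
            rw [hd_eq (σ := ⟨[f], hτvalid⟩) rfl]
            exact hfA
          have := (ih' _).mp (hall _ hprec)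
          rw [hd_eq (σ := ⟨[f], hτvalid⟩) rfl] at this
          rw [hfA] at this
          cases this
      | cons u t =>
        -- top with a parent
        have hstepuw : step Φ u.1 w.1 := by
          have hc := σ.2.2
          rw [hσ] at hc
          exact (List.isChain_cons_cons.mp hc).1
        show (∀ τ : WT Φ, precW Φ A σ τ → frc Φ A τ) ↔ _
        rw [hw]
        have hchar : ∀ τ : WT Φ, precW Φ A σ τ ↔
            ∃ m : MW Φ, τ.1 = m :: u :: t ∧ step Φ u.1 m.1 ∧ m.1 A = w.1 (A.bb) := by
          intro τ
          constructor
          · intro hprec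
            rcases hprec with h | h | h
            · rw [← hw] at htop
              exact absurd h (fun hh => topNoLt hΦ htop hh)
            · obtain ⟨w', u', t', m, hσ', _, hτ', hstep', hguard⟩ := h
              rw [hσ] at hσ'
              have e1 : w = w' := (List.cons.injEq _ _ _ _ ▸ hσ').1
              have e2 : u :: t = u' :: t' := (List.cons.injEq _ _ _ _ ▸ hσ').2
              have e3 : u = u' := (List.cons.injEq _ _ _ _ ▸ e2).1
              have e4 : t = t' := (List.cons.injEq _ _ _ _ ▸ e2).2
              subst e1; subst e3; subst e4  
              exact ⟨m, hτ', hstep', hguard hC⟩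
            · obtain ⟨w', hσ', _, _, _, _⟩ := h
              rw [hσ] at hσ'
              cases (List.cons.injEq _ _ _ _ ▸ hσ').2
          · intro ⟨m, hτ, hstep', hguard⟩
            exact Or.inr (Or.inl ⟨w, u, t, m, hσ, htop, hτ, hstep', fun _ => hguard⟩)
        cases hbbv : w.1 (A.bb) with
        | true =>
          refine iff_of_true ?_ rfl
          intro τ hprec
          obtain ⟨m, hτ, _, hguard⟩ := (hchar τ).mp hprec
          rw [hbbv] at hguard
          exact (ih' τ).mpr (by rw [hd_eq hτ]; exact hguard)
        | false =>
          refine iff_of_false ?_ (by simp)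
          intro hall
          have hubox : u.1 (A.box) = false := by
            cases hn : u.1 (A.box) with
            | false => rfl
            | true =>
              have := hstepuw.2.1 A hC hn
              rw [hbbv] at this
              cases this
          obtain ⟨m, hm1, hm2⟩ := succExists hΦ u hboxA hubox
          have hvalid : (m :: u :: t) ≠ [] ∧ (m :: u :: t).Chain' (stepR Φ) := by
            refine ⟨by simp, ?_⟩
            rw [List.Chain', List.isChain_cons_cons]
            refine ⟨hm1, ?_⟩
            have hc := σ.2.2
            rw [hσ] at hc
            exact (List.isChain_cons_cons.mp hc).2
          have hprec : precW Φ A σ ⟨m :: u :: t, hvalid⟩ :=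
            (hchar _).mpr ⟨m, rfl, hm1, by rw [hm2, hbbv]⟩
          have := (ih' _).mp (hall _ hprec)
          rw [hd_eq (σ := ⟨m :: u :: t, hvalid⟩) rfl] at this
          rw [hm2] at this
          cases this
    · -- non-top world: ■A behaves like □A
      have hnt : (hd σ).1 (Formula.falsum.box) = false := by
        revert htop; cases (hd σ).1 (Formula.falsum.box) <;> simp
      have hchar : ∀ τ : WT Φ, precW Φ A σ τ ↔ ltW σ τ := by
        intro τ
        constructor
        · intro hprec
          rcases hprec with h | h | h
          · exact h
          · obtain ⟨w', u', t', m, hσ', htop', _, _, _⟩ := h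
            rw [hd_eq hσ'] at hnt
            rw [htop'] at hnt
            cases hnt
          · obtain ⟨w', hσ', htop', _, _, _⟩ := h
            rw [hd_eq hσ'] at hnt
            rw [htop'] at hnt
            cases hnt
        · exact Or.inl
      show (∀ τ : WT Φ, precW Φ A σ τ → frc Φ A τ) ↔ _
      have : (∀ τ : WT Φ, precW Φ A σ τ → frc Φ A τ) ↔ (∀ τ : WT Φ, ltW σ τ → frc Φ A τ) := by
        constructor
        · intro h τ hlt; exact h τ ((hchar τ).mpr hlt)
        · intro h τ hp; exact h τ ((hchar τ).mp hp)
      rw [this, boxTruth hΦ hboxA ih' σ, ← valBBIffBox hΦ (hd σ) hC hnt]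

end GRproof
namespace GRproof

/-! ## Construction of an adequate set for a given formula -/

def subf : Formula → List Formula
  | .var n => [.var n]
  | .falsum => [.falsum]
  | .neg A => .neg A :: subf A
  | .or A B => (.or A B) :: (subf A ++ subf B)
  | .box A => .box A :: subf A
  | .bb A => .bb A :: subf A

lemma subf_self (C : Formula) : C ∈ subf C := by
  cases C <;> simp [subf]

lemma subf_trans : ∀ C D : Formula, D ∈ subf C → subf D ⊆ subf C := by
  intro C
  induction C with
  | var n =>
    intro D hD
    simp [subf] at hD
    subst hD
    exact fun x h => h
  | falsum =>
    intro D hD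
    simp [subf] at hD
    subst hD
    exact fun x h => h
  | neg A ih =>
    intro D hD
    rcases List.mem_cons.mp hD with h | h
    · subst h; exact fun x h => h
    · exact fun x hx => List.mem_cons_of_mem _ (ih D h hx)
  | or A B ihA ihB =>
    intro D hD
    rcases List.mem_cons.mp hD with h | h
    · subst h; exact fun x h => h
    · rcases List.mem_append.mp h with h | h
      · exact fun x hx => List.mem_cons_of_mem _ (List.mem_append.mpr (Or.inl (ihA D h hx)))
      · exact fun x hx => List.mem_cons_of_mem _ (List.mem_append.mpr (Or.inr (ihB D h hx)))
  | box A ih =>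
    intro D hD
    rcases List.mem_cons.mp hD with h | h
    · subst h; exact fun x h => h
    · exact fun x hx => List.mem_cons_of_mem _ (ih D h hx)
  | bb A ih =>
    intro D hD
    rcases List.mem_cons.mp hD with h | h
    · subst h; exact fun x h => h
    · exact fun x hx => List.mem_cons_of_mem _ (ih D h hx)

def selbb : Formula → Option Formula
  | .bb B => some B
  | _ => none

lemma selbb_eq {D B : Formula} (h : selbb D = some B) : D = B.bb := by
  cases D with
  | var n => simp [selbb] at h
  | falsum => simp [selbb] at h
  | neg C => simp [selbb] at h
  | or C1 C2 => simp [selbb] at h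
  | box C => simp [selbb] at h
  | bb C =>
    simp only [selbb, Option.some.injEq] at h
    rw [h]

def bbs (A : Formula) : List Formula := (subf A).filterMap selbb

lemma bbs_of_mem {A B : Formula} (h : B.bb ∈ subf A) : B ∈ bbs A :=
  List.mem_filterMap.mpr ⟨B.bb, h, rfl⟩

lemma of_mem_bbs {A B : Formula} (h : B ∈ bbs A) : B.bb ∈ subf A := by
  obtain ⟨D, hD, hsel⟩ := List.mem_filterMap.mp h
  rw [← selbb_eq hsel]
  exact hD

def baseList (A : Formula) : List Formula :=
  A :: Formula.falsum.box :: (bbs A).flatMap (fun B => [B.box, (B.neg).box])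

def PhiList (A : Formula) : List Formula := (baseList A).flatMap subf

lemma mem_Phi_of_base {A D E : Formula} (hD : D ∈ baseList A) (hE : E ∈ subf D) :
    E ∈ PhiList A :=
  List.mem_flatMap.mpr ⟨D, hD, hE⟩

lemma Phi_sub {A X Y : Formula} (hX : X ∈ PhiList A) (hY : Y ∈ subf X) :
    Y ∈ PhiList A := by
  obtain ⟨D, hD, hmem⟩ := List.mem_flatMap.mp hX
  exact mem_Phi_of_base hD (subf_trans D X hmem hY)

lemma A_mem_Phi (A : Formula) : A ∈ PhiList A :=
  mem_Phi_of_base List.mem_cons_self (subf_self A)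

lemma bb_in_subfA {A C : Formula} (h : C.bb ∈ PhiList A) : C.bb ∈ subf A := by
  obtain ⟨D, hD, hmem⟩ := List.mem_flatMap.mp h
  rcases List.mem_cons.mp hD with h1 | h1
  · subst h1; exact hmem
  rcases List.mem_cons.mp h1 with h2 | h2
  · subst h2
    simp [subf] at hmem
  obtain ⟨B, hB, hD'⟩ := List.mem_flatMap.mp h2
  have hBA : subf (B.bb) ⊆ subf A := subf_trans A (B.bb) (of_mem_bbs hB)
  have hsubB : subf B ⊆ subf A := fun x hx =>
    hBA (List.mem_cons_of_mem _ hx)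
  rcases List.mem_cons.mp hD' with h3 | h3
  · subst h3
    rcases List.mem_cons.mp hmem with h4 | h4
    · exact absurd h4 (by simp)
    · exact hsubB h4
  rcases List.mem_cons.mp h3 with h4 | h4
  · subst h4
    rcases List.mem_cons.mp hmem with h5 | h5
    · exact absurd h5 (by simp)
    · rcases List.mem_cons.mp h5 with h6 | h6
      · exact absurd h6 (by simp)
      · exact hsubB h6
  · exact absurd h4 List.not_mem_nil

lemma adequate_Phi (A : Formula) : Adequate (PhiList A) := by
  refine ⟨?_, ?_, ?_, ?_, ?_, ?_, ?_, ?_⟩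
  · exact mem_Phi_of_base (List.mem_cons_of_mem _ List.mem_cons_self)
      (by simp [subf])
  · exact mem_Phi_of_base (List.mem_cons_of_mem _ List.mem_cons_self) (subf_self _)
  · intro C h
    exact Phi_sub h (List.mem_cons_of_mem _ (subf_self C))
  · intro C D h
    constructor
    · exact Phi_sub h (List.mem_cons_of_mem _ (List.mem_append.mpr (Or.inl (subf_self C))))
    · exact Phi_sub h (List.mem_cons_of_mem _ (List.mem_append.mpr (Or.inr (subf_self D))))
  · intro C h
    exact Phi_sub h (List.mem_cons_of_mem _ (subf_self C))
  · intro C h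
    exact Phi_sub h (List.mem_cons_of_mem _ (subf_self C))
  · intro C h
    refine mem_Phi_of_base (A := A) (D := C.box) ?_ (subf_self _)
    refine List.mem_cons_of_mem _ (List.mem_cons_of_mem _ (List.mem_flatMap.mpr ?_))
    exact ⟨C, bbs_of_mem (bb_in_subfA h), by simp⟩
  · intro C h
    refine mem_Phi_of_base (A := A) (D := (C.neg).box) ?_ (subf_self _)
    refine List.mem_cons_of_mem _ (List.mem_cons_of_mem _ (List.mem_flatMap.mpr ?_))
    exact ⟨C, bbs_of_mem (bb_in_subfA h), by simp⟩

/-! ## Completeness -/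

theorem completenessFin (A : Formula)
    (h : ∀ F : GRFrame, Finite F.W → ValidOn F A) : GRcirc A := by
  by_contra hA
  have hΦ : Adequate (PhiList A) := adequate_Phi A
  set Φ := PhiList A with hΦdef
  have hAΦ : A ∈ Φ := A_mem_Phi A
  have hcon : Con [A.neg] := fun hP => hA (thmMP (t_single A) hP)
  obtain ⟨r, hr⟩ := lindenbaum Φ [A.neg] hcon
  have hrA : r.1 A = false := seedFalse hr hAΦ List.mem_cons_self
  have hσvalid : ([r] : List (MW Φ)) ≠ [] ∧ ([r] : List (MW Φ)).Chain' (stepR Φ) := by simp [List.Chain']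
  set σ0 : WT Φ := ⟨[r], hσvalid⟩ with hσ0
  let F : GRFrame := {
    W := WT Φ
    nonempty := ⟨σ0⟩
    lt := ltW
    lt_trans := fun h1 h2 => ltW_trans h1 h2
    cwf := by
      haveI : Finite (WT Φ) := finWT hΦ
      haveI : IsTrans (WT Φ) (fun x y => ltW y x) := ⟨fun a b c h1 h2 => ltW_trans h2 h1⟩
      haveI : IsIrrefl (WT Φ) (fun x y => ltW y x) := ⟨fun a ha => ltW_irrefl a ha⟩
      exact Finite.wellFounded_of_trans_of_irrefl _
    prec := precW Φ
    lt_to_prec := fun h => Or.inl h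
    lt_prec_lt := fun h1 h2 => prec_cond2 hΦ h1 h2
    prec_lt_lt := fun h1 h2 => prec_cond3 hΦ h1 h2
    lt_succ := fun h => prec_cond4 hΦ h }
  let S : GRSat F := {
    frc := fun σ C => frc Φ C σ
    frc_falsum := fun σ hf => hf
    frc_neg := fun σ B => Iff.rfl
    frc_or := fun σ B C => Iff.rfl
    frc_box := fun σ B => Iff.rfl
    frc_bb := fun σ B => Iff.rfl }
  have hval : frc Φ A σ0 := h F (finWT hΦ) S σ0
  have hterm := (truthLemma hΦ A hAΦ σ0).mp hval
  rw [hd_eq (σ := σ0) rfl] at hterm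
  rw [hrA] at hterm
  cases hterm

end GRproof

/-- Completeness and the finite frame property of `GR°`:
`GR° ⊢ A` iff `A` is valid on all `GR°`-frames iff `A` is valid on all
finite `GR°`-frames. -/
theorem GRcirc_ffp (A : Formula) :
    (GRcirc A ↔ ∀ F : GRFrame, ValidOn F A) ∧
    (GRcirc A ↔ ∀ F : GRFrame, Finite F.W → ValidOn F A) := by
  constructor
  · constructor
    · exact fun h => GRproof.soundness h
    · intro h
      exact GRproof.completenessFin A (fun F _ => h F)
  · constructor
    · intro h F _
      exact GRproof.soundness h F
    · exact GRproof.completenessFin A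
end

section
/- The logic GL enjoys the Lyndon interpolation property: for any formulas A and B of the unimodal language L_□, if GL ⊢ A → B, then there exists a formula C with v⁺(C) ⊆ v⁺(A) ∩ v⁺(B), v⁻(C) ⊆ v⁻(A) ∩ v⁻(B), GL ⊢ A → C and GL ⊢ C → B. -/
/-- Formulas of the unimodal language `L_□`. -/
inductive PFormula : Type
  | var : ℕ → PFormula
  | falsum : PFormula
  | neg : PFormula → PFormula
  | or : PFormula → PFormula → PFormula
  | box : PFormula → PFormula

namespace PFormula
/-- `A → B` is defined as `¬A ∨ B`. -/
def imp (A B : PFormula) : PFormula := (A.neg).or B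
end PFormula

/-- Propositional evaluation: variables and `□`-formulas are atoms. -/
def evalP (v : PFormula → Bool) : PFormula → Bool
  | .var n => v (.var n)
  | .falsum => false
  | .neg A => !(evalP v A)
  | .or A B => evalP v A || evalP v B
  | .box A => v (.box A)

/-- Propositional tautologies of `L_□`. -/
def PTaut (A : PFormula) : Prop := ∀ v : PFormula → Bool, evalP v A = true

/-- The provability logic `GL`. -/
inductive GLLogic : PFormula → Prop
  | taut {A : PFormula} : PTaut A → GLLogic A
  | k {A B : PFormula} : GLLogic (((A.imp B).box).imp ((A.box).imp (B.box)))
  | loeb {A : PFormula} : GLLogic ((((A.box).imp A).box).imp (A.box))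
  | mp {A B : PFormula} : GLLogic (A.imp B) → GLLogic A → GLLogic B
  | nec {A : PFormula} : GLLogic A → GLLogic (A.box)

/-- `PS A true = S⁺(A)`, `PS A false = S⁻(A)`. -/
def PS : PFormula → Bool → Set PFormula
  | .var n, b => if b then {PFormula.var n} else ∅
  | .falsum, b => if b then {PFormula.falsum} else ∅
  | .neg A, b => PS A (!b) ∪ (if b then {PFormula.neg A} else ∅)
  | .or A B, b => PS A b ∪ PS B b ∪ (if b then {PFormula.or A B} else ∅)
  | .box A, b => PS A b ∪ (if b then {PFormula.box A} else ∅)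

/-- Positively occurring variables. -/
def pvpos (A : PFormula) : Set ℕ := {n | PFormula.var n ∈ PS A true}
/-- Negatively occurring variables. -/
def pvneg (A : PFormula) : Set ℕ := {n | PFormula.var n ∈ PS A false}

deriving instance DecidableEq for PFormula

namespace GLIP
open PFormula

/-- conjunction -/
def pand (a b : PFormula) : PFormula := ((a.neg).or (b.neg)).neg

def conj : List PFormula → PFormula
  | [] => PFormula.falsum.neg
  | x :: xs => pand x (conj xs)

/-- derivability from a finite list of hypotheses -/
def Der (H : List PFormula) (C : PFormula) : Prop := GLLogic ((conj H).imp C)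

@[simp] lemma evalP_pand (v : PFormula → Bool) (a b : PFormula) :
    evalP v (pand a b) = (evalP v a && evalP v b) := by
  simp [pand, evalP]

@[simp] lemma evalP_imp (v : PFormula → Bool) (a b : PFormula) :
    evalP v (a.imp b) = (!(evalP v a) || evalP v b) := by
  simp [PFormula.imp, evalP]

@[simp] lemma evalP_neg (v : PFormula → Bool) (a : PFormula) :
    evalP v (a.neg) = !(evalP v a) := rfl

@[simp] lemma evalP_or (v : PFormula → Bool) (a b : PFormula) :
    evalP v (a.or b) = (evalP v a || evalP v b) := rfl

@[simp] lemma evalP_falsum (v : PFormula → Bool) : evalP v .falsum = false := rfl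

-- tautology schemas
lemma t_id (a : PFormula) : GLLogic (a.imp a) := by
  apply GLLogic.taut; intro v; cases h : evalP v a <;> simp [h]

lemma t_weak (a x : PFormula) : GLLogic (a.imp (x.imp a)) := by
  apply GLLogic.taut; intro v; cases h : evalP v a <;> cases h2 : evalP v x <;> simp [h, h2]

lemma t_dist (x a b : PFormula) :
    GLLogic ((x.imp (a.imp b)).imp ((x.imp a).imp (x.imp b))) := by
  apply GLLogic.taut; intro v
  cases h : evalP v x <;> cases h1 : evalP v a <;> cases h2 : evalP v b <;> simp [h, h1, h2]

/-- modus ponens under hypotheses -/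
lemma Der.mp {H : List PFormula} {a b : PFormula} (h1 : Der H (a.imp b)) (h2 : Der H a) :
    Der H b :=
  GLLogic.mp (GLLogic.mp (t_dist (conj H) a b) h1) h2

lemma Der.thm {H : List PFormula} {a : PFormula} (h : GLLogic a) : Der H a :=
  GLLogic.mp (t_weak a (conj H)) h

lemma Der.taut {H : List PFormula} {a : PFormula} (h : PTaut a) : Der H a :=
  Der.thm (GLLogic.taut h)

lemma t_and_left (a b : PFormula) : GLLogic ((pand a b).imp a) := by
  apply GLLogic.taut; intro v; cases h : evalP v a <;> cases h2 : evalP v b <;> simp [h, h2]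

lemma t_and_right (a b : PFormula) : GLLogic ((pand a b).imp b) := by
  apply GLLogic.taut; intro v; cases h : evalP v a <;> cases h2 : evalP v b <;> simp [h, h2]

lemma t_and_intro (x a b : PFormula) :
    GLLogic ((x.imp a).imp ((x.imp b).imp (x.imp (pand a b)))) := by
  apply GLLogic.taut; intro v
  cases h : evalP v x <;> cases h1 : evalP v a <;> cases h2 : evalP v b <;> simp [h, h1, h2]

/-- self is derivable -/
lemma Der.id (H : List PFormula) : Der H (conj H) := t_id _

lemma Der.head {H : List PFormula} {x : PFormula} : Der (x :: H) x :=
  t_and_left x (conj H)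

lemma Der.tailconj {H : List PFormula} {x : PFormula} : Der (x :: H) (conj H) :=
  t_and_right x (conj H)

lemma t_trans (a b c : PFormula) : GLLogic ((a.imp b).imp ((b.imp c).imp (a.imp c))) := by
  apply GLLogic.taut; intro v
  cases h : evalP v a <;> cases h1 : evalP v b <;> cases h2 : evalP v c <;> simp [h, h1, h2]

lemma GLLogic.trans {a b c : PFormula} (h1 : GLLogic (a.imp b)) (h2 : GLLogic (b.imp c)) :
    GLLogic (a.imp c) :=
  GLLogic.mp (GLLogic.mp (t_trans a b c) h1) h2

lemma Der.lift {H : List PFormula} {x c : PFormula} (h : Der H c) : Der (x :: H) c :=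
  GLLogic.trans (t_and_right x (conj H)) h

lemma Der.of_mem {H : List PFormula} {x : PFormula} (h : x ∈ H) : Der H x := by
  induction H with
  | nil => cases h
  | cons y H ih =>
    rcases List.mem_cons.1 h with rfl | h
    · exact Der.head
    · exact (ih h).lift

lemma Der.and_intro {H : List PFormula} {a b : PFormula} (h1 : Der H a) (h2 : Der H b) :
    Der H (pand a b) :=
  GLLogic.mp (GLLogic.mp (t_and_intro (conj H) a b) h1) h2

lemma Der.conjAll {G H : List PFormula} (h : ∀ x ∈ H, Der G x) : Der G (conj H) := by
  induction H with
  | nil => exact Der.taut (by intro v; simp [conj, evalP])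
  | cons y H ih =>
    exact Der.and_intro (h y (by simp)) (ih (fun x hx => h x (by simp [hx])))

lemma Der.cut {G H : List PFormula} {c : PFormula} (h : ∀ x ∈ H, Der G x) (hc : Der H c) :
    Der G c :=
  (Der.thm (show GLLogic ((conj H).imp c) from hc)).mp (Der.conjAll h)

lemma Der.weak {G H : List PFormula} {c : PFormula} (h : ∀ x ∈ H, x ∈ G) (hc : Der H c) :
    Der G c :=
  Der.cut (fun x hx => Der.of_mem (h x hx)) hc

lemma t_curry (x a c : PFormula) : GLLogic (((pand a x).imp c).imp (x.imp (a.imp c))) := by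
  apply GLLogic.taut; intro v
  cases h : evalP v a <;> cases h1 : evalP v x <;> cases h2 : evalP v c <;> simp [h, h1, h2]

lemma t_uncurry (x a c : PFormula) : GLLogic ((x.imp (a.imp c)).imp ((pand a x).imp c)) := by
  apply GLLogic.taut; intro v
  cases h : evalP v a <;> cases h1 : evalP v x <;> cases h2 : evalP v c <;> simp [h, h1, h2]

lemma Der.imp_intro {H : List PFormula} {x c : PFormula} (h : Der (x :: H) c) :
    Der H (x.imp c) :=
  GLLogic.mp (t_curry (conj H) x c) h

lemma Der.imp_elim {H : List PFormula} {x c : PFormula} (h : Der H (x.imp c)) :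
    Der (x :: H) c :=
  GLLogic.mp (t_uncurry (conj H) x c) h

lemma t_cases (x a b c : PFormula) :
    GLLogic (((pand a x).imp c).imp (((pand b x).imp c).imp ((x.imp (a.or b)).imp (x.imp c)))) := by
  apply GLLogic.taut; intro v
  cases h : evalP v a <;> cases h1 : evalP v b <;> cases h2 : evalP v x <;>
    cases h3 : evalP v c <;> simp [h, h1, h2, h3]

lemma Der.cases {H : List PFormula} {a b c : PFormula} (h : Der H (a.or b))
    (h1 : Der (a :: H) c) (h2 : Der (b :: H) c) : Der H c :=
  GLLogic.mp (GLLogic.mp (GLLogic.mp (t_cases (conj H) a b c) h1) h2) h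

-- modal lemmas
lemma box_mono {a b : PFormula} (h : GLLogic (a.imp b)) : GLLogic ((a.box).imp (b.box)) :=
  GLLogic.mp GLLogic.k (GLLogic.nec h)

lemma box_collect (a b : PFormula) :
    GLLogic ((pand (a.box) (b.box)).imp ((pand a b).box)) := by
  have h1 : GLLogic (a.imp (b.imp (pand a b))) := by
    apply GLLogic.taut; intro v
    cases h : evalP v a <;> cases h1 : evalP v b <;> simp [h, h1]
  have h2 : GLLogic ((a.box).imp ((b.imp (pand a b)).box)) := box_mono h1
  have h3 : GLLogic ((a.box).imp ((b.box).imp ((pand a b).box))) :=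
    GLLogic.trans h2 GLLogic.k
  have h4 : GLLogic ((b.box).imp ((a.box).imp ((pand a b).box))) := by
    have t : GLLogic (((a.box).imp ((b.box).imp ((pand a b).box))).imp
        ((b.box).imp ((a.box).imp ((pand a b).box)))) := by
      apply GLLogic.taut; intro v
      cases h : evalP v (a.box) <;> cases h1 : evalP v (b.box) <;>
        cases h2 : evalP v ((pand a b).box) <;> simp [h, h1, h2]
    exact GLLogic.mp t h3
  exact GLLogic.mp (t_uncurry (b.box) (a.box) ((pand a b).box)) h4

lemma conj_box (H : List PFormula) :
    GLLogic ((conj (H.map PFormula.box)).imp ((conj H).box)) := by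
  induction H with
  | nil =>
    have : GLLogic (conj ([] : List PFormula)) := by
      apply GLLogic.taut; intro v; simp [conj, evalP]
    have hb : GLLogic ((conj ([] : List PFormula)).box) := GLLogic.nec this
    exact GLLogic.mp (t_weak _ _) hb
  | cons x H ih =>
    show GLLogic ((pand (x.box) (conj (H.map PFormula.box))).imp ((pand x (conj H)).box))
    have h1 : GLLogic ((pand (x.box) (conj (H.map PFormula.box))).imp
        (pand (x.box) ((conj H).box))) := by
      refine GLLogic.mp (GLLogic.mp (t_and_intro _ _ _) (t_and_left _ _)) ?_
      exact GLLogic.trans (t_and_right _ _) ih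
    exact GLLogic.trans h1 (box_collect _ _)

lemma four (a : PFormula) : GLLogic ((a.box).imp (a.box.box)) := by
  set b := pand a (a.box) with hb
  have hba : GLLogic (b.imp a) := t_and_left _ _
  have hbbox : GLLogic (b.imp (a.box)) := t_and_right _ _
  have h1 : GLLogic ((b.box).imp (a.box)) := box_mono hba
  -- a → (□b → b)
  have h2 : GLLogic (a.imp ((b.box).imp b)) := by
    have t : GLLogic (((b.box).imp (a.box)).imp (a.imp ((b.box).imp (pand a (a.box))))) := by
      apply GLLogic.taut; intro v
      cases h : evalP v a <;> cases h1 : evalP v (b.box) <;> cases h2 : evalP v (a.box) <;>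
        simp [h, h1, h2]
    exact GLLogic.mp t h1
  have h3 : GLLogic ((a.box).imp (((b.box).imp b).box)) := box_mono h2
  have h4 : GLLogic ((a.box).imp (b.box)) := GLLogic.trans h3 GLLogic.loeb
  have h5 : GLLogic ((b.box).imp (a.box.box)) := box_mono hbbox
  exact GLLogic.trans h4 h5

/-- the GLR rule : from ⊢ w ∧ □w ∧ □d → d conclude ⊢ □w → □d.
    We phrase the premise as Der [w, w.box, d.box] d. -/
lemma glr {w d : PFormula} (h : Der [w, w.box, d.box] d) : GLLogic ((w.box).imp (d.box)) := by
  -- h : ⊢ (w ∧ (□w ∧ (□d ∧ ¬⊥))) → d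
  -- first get ⊢ (w ∧ □w) → (□d → d)
  have h1 : Der [w, w.box] ((d.box).imp d) := Der.imp_intro (by
    -- Der (d.box :: w :: w.box :: []) d  from h by weakening
    exact Der.weak (by intro x hx; fin_cases hx <;> simp) h)
  have h2 : GLLogic ((conj [w, w.box]).imp ((d.box).imp d)) := h1
  have h3 : GLLogic (((conj [w, w.box]).box).imp ((((d.box).imp d)).box)) := box_mono h2
  have h4 : GLLogic (((conj [w, w.box]).box).imp (d.box)) := GLLogic.trans h3 GLLogic.loeb
  -- ⊢ □w → □(conj [w, □w])
  have h5 : GLLogic ((w.box).imp ((conj [w, w.box]).box)) := by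
    have c1 : GLLogic ((w.box).imp (pand (w.box) (w.box.box))) :=
      GLLogic.mp (GLLogic.mp (t_and_intro _ _ _) (t_id _)) (four w)
    have c2 : GLLogic ((pand (w.box) (w.box.box)).imp ((pand w (w.box)).box)) :=
      box_collect _ _
    have c3 : GLLogic (((pand w (w.box))).imp (conj [w, w.box])) := by
      apply GLLogic.taut; intro v
      cases h : evalP v w <;> cases h1 : evalP v (w.box) <;> simp [conj, h, h1, evalP]
    exact GLLogic.trans (GLLogic.trans c1 c2) (box_mono c3)
  exact GLLogic.trans h5 h4

/-- boxed hypotheses: from Der H c get Der over boxed hypotheses of box c -/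
lemma Der.necList {H : List PFormula} {c : PFormula} (h : Der H c) :
    Der (H.map PFormula.box) (c.box) := by
  have h1 : GLLogic (((conj H).box).imp (c.box)) := box_mono h
  exact GLLogic.trans (conj_box H) h1

-- polarity computation lemmas
@[simp] lemma pvpos_var (n : ℕ) : pvpos (.var n) = {n} := by
  ext m; simp [pvpos, PS]
@[simp] lemma pvneg_var (n : ℕ) : pvneg (.var n) = ∅ := by
  ext m; simp [pvneg, PS]
@[simp] lemma pvpos_falsum : pvpos .falsum = ∅ := by
  ext m; simp [pvpos, PS]
@[simp] lemma pvneg_falsum : pvneg .falsum = ∅ := by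
  ext m; simp [pvneg, PS]
@[simp] lemma pvpos_neg (a : PFormula) : pvpos (a.neg) = pvneg a := by
  ext m; simp [pvpos, pvneg, PS]
@[simp] lemma pvneg_neg (a : PFormula) : pvneg (a.neg) = pvpos a := by
  ext m; simp [pvpos, pvneg, PS]
@[simp] lemma pvpos_or (a b : PFormula) : pvpos (a.or b) = pvpos a ∪ pvpos b := by
  ext m; simp [pvpos, PS]
@[simp] lemma pvneg_or (a b : PFormula) : pvneg (a.or b) = pvneg a ∪ pvneg b := by
  ext m; simp [pvneg, PS]
@[simp] lemma pvpos_box (a : PFormula) : pvpos (a.box) = pvpos a := by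
  ext m; simp [pvpos, PS]
@[simp] lemma pvneg_box (a : PFormula) : pvneg (a.box) = pvneg a := by
  ext m; simp [pvneg, PS]
@[simp] lemma pvpos_pand (a b : PFormula) : pvpos (pand a b) = pvpos a ∪ pvpos b := by
  simp [pand]
@[simp] lemma pvneg_pand (a b : PFormula) : pvneg (pand a b) = pvneg a ∪ pvneg b := by
  simp [pand]

-- signed subformula closure
def scl : PFormula → Bool → Finset (PFormula × Bool)
  | .var n, c => {(.var n, c)}
  | .falsum, c => {(.falsum, c)}
  | .neg a, c => insert (.neg a, c) (scl a (!c))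
  | .or a b, c => insert (.or a b, c) (scl a c ∪ scl b c)
  | .box a, c => insert (.box a, c) (scl a c)

lemma scl_self (a : PFormula) (c : Bool) : (a, c) ∈ scl a c := by
  cases a <;> simp [scl]

lemma mem_scl_PS {F : PFormula} {b : Bool} (a : PFormula) (c : Bool)
    (h : (F, b) ∈ scl a c) : F ∈ PS a (b == c) := by
  induction a generalizing c with
  | var n => simp [scl] at h; simp [h.1, h.2, PS]
  | falsum => simp [scl] at h; simp [h.1, h.2, PS]
  | neg g ih =>
      simp only [scl, Finset.mem_insert] at h
      rcases h with h | h
      · simp only [Prod.mk.injEq] at h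
        obtain ⟨rfl, rfl⟩ := h
        simp [PS]
      · have hx := ih _ h
        rw [show (b == !c) = !(b == c) by cases b <;> cases c <;> rfl] at hx
        exact Set.mem_union_left _ hx
  | or g1 g2 ih1 ih2 =>
      simp only [scl, Finset.mem_insert, Finset.mem_union] at h
      rcases h with h | h | h
      · simp only [Prod.mk.injEq] at h
        obtain ⟨rfl, rfl⟩ := h
        simp [PS]
      · exact Set.mem_union_left _ (Set.mem_union_left _ (ih1 _ h))
      · exact Set.mem_union_left _ (Set.mem_union_right _ (ih2 _ h))
  | box g ih =>
      simp only [scl, Finset.mem_insert] at h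
      rcases h with h | h
      · simp only [Prod.mk.injEq] at h
        obtain ⟨rfl, rfl⟩ := h
        simp [PS]
      · exact Set.mem_union_left _ (ih _ h)

lemma scl_neg {a : PFormula} {c : Bool} {f : PFormula} {s : Bool}
    (h : (PFormula.neg f, s) ∈ scl a c) : (f, !s) ∈ scl a c := by
  induction a generalizing c with
  | var n => simp [scl] at h
  | falsum => simp [scl] at h
  | neg g ih =>
      simp only [scl, Finset.mem_insert] at h ⊢
      rcases h with h | h
      · simp only [Prod.mk.injEq, PFormula.neg.injEq] at h
        obtain ⟨rfl, rfl⟩ := h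
        exact Or.inr (scl_self _ _)
      · exact Or.inr (ih h)
  | or g1 g2 ih1 ih2 =>
      simp only [scl, Finset.mem_insert, Finset.mem_union] at h ⊢
      rcases h with h | h | h
      · exact PFormula.noConfusion (congrArg Prod.fst h)
      · exact Or.inr (Or.inl (ih1 h))
      · exact Or.inr (Or.inr (ih2 h))
  | box g ih =>
      simp only [scl, Finset.mem_insert] at h ⊢
      rcases h with h | h
      · exact PFormula.noConfusion (congrArg Prod.fst h)
      · exact Or.inr (ih h)

lemma scl_or {a : PFormula} {c : Bool} {f g : PFormula} {s : Bool}
    (h : (PFormula.or f g, s) ∈ scl a c) : (f, s) ∈ scl a c ∧ (g, s) ∈ scl a c := by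
  induction a generalizing c with
  | var n => simp [scl] at h
  | falsum => simp [scl] at h
  | neg g1 ih =>
      simp only [scl, Finset.mem_insert] at h ⊢
      rcases h with h | h
      · exact PFormula.noConfusion (congrArg Prod.fst h)
      · exact ⟨Or.inr (ih h).1, Or.inr (ih h).2⟩
  | or g1 g2 ih1 ih2 =>
      simp only [scl, Finset.mem_insert, Finset.mem_union] at h ⊢
      rcases h with h | h | h
      · simp only [Prod.mk.injEq, PFormula.or.injEq] at h
        obtain ⟨⟨rfl, rfl⟩, rfl⟩ := h
        exact ⟨Or.inr (Or.inl (scl_self _ _)), Or.inr (Or.inr (scl_self _ _))⟩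
      · exact ⟨Or.inr (Or.inl (ih1 h).1), Or.inr (Or.inl (ih1 h).2)⟩
      · exact ⟨Or.inr (Or.inr (ih2 h).1), Or.inr (Or.inr (ih2 h).2)⟩
  | box g1 ih =>
      simp only [scl, Finset.mem_insert] at h ⊢
      rcases h with h | h
      · exact PFormula.noConfusion (congrArg Prod.fst h)
      · exact ⟨Or.inr (ih h).1, Or.inr (ih h).2⟩

lemma scl_box {a : PFormula} {c : Bool} {f : PFormula} {s : Bool}
    (h : (PFormula.box f, s) ∈ scl a c) : (f, s) ∈ scl a c := by
  induction a generalizing c with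
  | var n => simp [scl] at h
  | falsum => simp [scl] at h
  | neg g1 ih =>
      simp only [scl, Finset.mem_insert] at h ⊢
      rcases h with h | h
      · exact PFormula.noConfusion (congrArg Prod.fst h)
      · exact Or.inr (ih h)
  | or g1 g2 ih1 ih2 =>
      simp only [scl, Finset.mem_insert, Finset.mem_union] at h ⊢
      rcases h with h | h | h
      · exact PFormula.noConfusion (congrArg Prod.fst h)
      · exact Or.inr (Or.inl (ih1 h))
      · exact Or.inr (Or.inr (ih2 h))
  | box g1 ih =>
      simp only [scl, Finset.mem_insert] at h ⊢
      rcases h with h | h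
      · simp only [Prod.mk.injEq, PFormula.box.injEq] at h
        obtain ⟨rfl, rfl⟩ := h
        exact Or.inr (scl_self _ _)
      · exact Or.inr (ih h)

-- more tautology schemas
lemma t_or_inl (a b : PFormula) : GLLogic (a.imp (a.or b)) := by
  apply GLLogic.taut; intro v; cases h : evalP v a <;> cases h1 : evalP v b <;> simp [h, h1]
lemma t_or_inr (a b : PFormula) : GLLogic (b.imp (a.or b)) := by
  apply GLLogic.taut; intro v; cases h : evalP v a <;> cases h1 : evalP v b <;> simp [h, h1]
lemma t_or_neg (a b : PFormula) : GLLogic ((a.neg).imp ((b.neg).imp ((a.or b).neg))) := by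
  apply GLLogic.taut; intro v; cases h : evalP v a <;> cases h1 : evalP v b <;> simp [h, h1]
lemma t_andneg_l (a b : PFormula) : GLLogic ((a.neg).imp ((pand a b).neg)) := by
  apply GLLogic.taut; intro v; cases h : evalP v a <;> cases h1 : evalP v b <;> simp [h, h1]
lemma t_andneg_r (a b : PFormula) : GLLogic ((b.neg).imp ((pand a b).neg)) := by
  apply GLLogic.taut; intro v; cases h : evalP v a <;> cases h1 : evalP v b <;> simp [h, h1]
lemma t_dne (a : PFormula) : GLLogic ((a.neg.neg).imp a) := by
  apply GLLogic.taut; intro v; cases h : evalP v a <;> simp [h]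
lemma t_dni (a : PFormula) : GLLogic (a.imp (a.neg.neg)) := by
  apply GLLogic.taut; intro v; cases h : evalP v a <;> simp [h]
lemma t_mt (a b : PFormula) : GLLogic ((a.imp b).imp ((b.neg).imp (a.neg))) := by
  apply GLLogic.taut; intro v; cases h : evalP v a <;> cases h1 : evalP v b <;> simp [h, h1]
lemma t_negor_l (a b : PFormula) : GLLogic (((a.or b).neg).imp (a.neg)) := by
  apply GLLogic.taut; intro v; cases h : evalP v a <;> cases h1 : evalP v b <;> simp [h, h1]
lemma t_negor_r (a b : PFormula) : GLLogic (((a.or b).neg).imp (b.neg)) := by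
  apply GLLogic.taut; intro v; cases h : evalP v a <;> cases h1 : evalP v b <;> simp [h, h1]
lemma t_con2 (a c : PFormula) : GLLogic (((a.neg).imp c).imp ((c.neg).imp a)) := by
  apply GLLogic.taut; intro v; cases h : evalP v a <;> cases h1 : evalP v c <;> simp [h, h1]
lemma t_con3 (a c : PFormula) : GLLogic (((a.neg).imp (c.neg)).imp (c.imp a)) := by
  apply GLLogic.taut; intro v; cases h : evalP v a <;> cases h1 : evalP v c <;> simp [h, h1]
lemma t_exf (a : PFormula) : GLLogic ((PFormula.falsum).imp a) := by
  apply GLLogic.taut; intro v; cases h : evalP v a <;> simp [h]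
lemma t_notfalse : GLLogic (PFormula.falsum.neg) := by
  apply GLLogic.taut; intro v; simp

abbrev SForm := PFormula × Bool

/-- reading of a signed formula -/
def interp (p : SForm) : PFormula := if p.2 then p.1 else p.1.neg

@[simp] lemma interp_t (F : PFormula) : interp (F, true) = F := rfl
@[simp] lemma interp_f (F : PFormula) : interp (F, false) = F.neg := rfl

def isBoxT : SForm → Bool
  | (.box _, true) => true
  | _ => false

lemma isBoxT_iff {p : SForm} : isBoxT p = true ↔ ∃ E, p = (PFormula.box E, true) := by
  obtain ⟨f, s⟩ := p
  cases f <;> cases s <;> simp [isBoxT]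

def unbox : PFormula → PFormula
  | .box e => e
  | f => f

@[simp] lemma unbox_box (e : PFormula) : unbox (.box e) = e := rfl

def boxTs (X : Finset SForm) : Finset SForm := X.filter (fun p => isBoxT p)

def contents (X : Finset SForm) : Finset SForm :=
  (X.filter (fun p => isBoxT p)).image (fun p => (unbox p.1, true))

lemma mem_boxTs {X : Finset SForm} {p : SForm} :
    p ∈ boxTs X ↔ p ∈ X ∧ ∃ E, p = (PFormula.box E, true) := by
  simp [boxTs, isBoxT_iff]

lemma mem_contents {X : Finset SForm} {p : SForm} :
    p ∈ contents X ↔ ∃ E, (PFormula.box E, true) ∈ X ∧ p = (E, true) := by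
  simp only [contents, Finset.mem_image, Finset.mem_filter]
  constructor
  · rintro ⟨q, ⟨hq, hb⟩, rfl⟩
    obtain ⟨E, rfl⟩ := isBoxT_iff.1 hb
    exact ⟨E, hq, rfl⟩
  · rintro ⟨E, hE, rfl⟩
    exact ⟨(PFormula.box E, true), ⟨hE, isBoxT_iff.2 ⟨E, rfl⟩⟩, rfl⟩

noncomputable def SList (X : Finset SForm) (T : Finset PFormula) : List PFormula :=
  X.toList.map interp ++ T.toList

lemma mem_SList {x : PFormula} {X : Finset SForm} {T : Finset PFormula} :
    x ∈ SList X T ↔ (∃ p ∈ X, interp p = x) ∨ x ∈ T := by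
  simp [SList]

lemma der_of_memS {X : Finset SForm} {T : Finset PFormula} {p : SForm} (h : p ∈ X) :
    Der (SList X T) (interp p) :=
  Der.of_mem (mem_SList.2 (Or.inl ⟨p, h, rfl⟩))

lemma der_of_memT {X : Finset SForm} {T : Finset PFormula} {x : PFormula} (h : x ∈ T) :
    Der (SList X T) x :=
  Der.of_mem (mem_SList.2 (Or.inr h))

lemma der_SList_insert {X : Finset SForm} {T : Finset PFormula} {p : SForm} {c : PFormula}
    (h : Der (SList (insert p X) T) c) : Der (interp p :: SList X T) c := by
  refine Der.weak ?_ h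
  intro x hx
  rcases mem_SList.1 hx with ⟨q, hq, rfl⟩ | hx
  · rcases Finset.mem_insert.1 hq with rfl | hq
    · simp
    · exact List.mem_cons_of_mem _ (mem_SList.2 (Or.inl ⟨q, hq, rfl⟩))
  · exact List.mem_cons_of_mem _ (mem_SList.2 (Or.inr hx))

/-- discharging an insertion whose reading is derivable -/
lemma der_cut_insert {X : Finset SForm} {T : Finset PFormula} {p : SForm} {c : PFormula}
    (hd : Der (SList X T) (interp p)) (h : Der (SList (insert p X) T) c) :
    Der (SList X T) c := by
  have h1 := der_SList_insert h
  have h2 := Der.imp_intro h1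
  exact h2.mp hd

section Main

variable (A B : PFormula)

def Sep (Γ Δ : Finset SForm) (Θ Λ : Finset PFormula) : Prop :=
  ∃ C : PFormula, pvpos C ⊆ pvpos A ∩ pvpos B ∧ pvneg C ⊆ pvneg A ∩ pvneg B ∧
    Der (SList Γ Θ) C ∧ Der (SList Δ Λ) (C.neg)

variable {A B}

/-- separation by ⊥ when the Γ-side is inconsistent -/
lemma sep_falsum {Γ Δ : Finset SForm} {Θ Λ : Finset PFormula}
    (h : Der (SList Γ Θ) PFormula.falsum) : Sep A B Γ Δ Θ Λ := by
  refine ⟨PFormula.falsum, by simp, by simp, h, Der.thm t_notfalse⟩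

/-- separation by ¬⊥ when the Δ-side is inconsistent -/
lemma sep_notfalsum {Γ Δ : Finset SForm} {Θ Λ : Finset PFormula}
    (h : Der (SList Δ Λ) PFormula.falsum) : Sep A B Γ Δ Θ Λ := by
  refine ⟨PFormula.falsum.neg, by simp, by simp, Der.thm t_notfalse, ?_⟩
  exact (Der.thm (t_dni .falsum)).mp h

-- saturation-step transfer lemmas (stated for one side; used for both)
lemma sep_step_neg {X : Finset SForm} {T : Finset PFormula} {F : PFormula} {s : Bool} {c : PFormula}
    (hm : (PFormula.neg F, s) ∈ X)
    (h : Der (SList (insert (F, !s) X) T) c) : Der (SList X T) c := by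
  refine der_cut_insert ?_ h
  cases s with
  | false =>
      have h1 : Der (SList X T) ((PFormula.neg F).neg) := der_of_memS hm
      exact (Der.thm (t_dne F)).mp h1
  | true =>
      have h1 : Der (SList X T) (interp (PFormula.neg F, true)) := der_of_memS hm
      simpa using h1

lemma sep_step_or_f_l {X : Finset SForm} {T : Finset PFormula} {F G : PFormula} {c : PFormula}
    (hm : (PFormula.or F G, false) ∈ X)
    (h : Der (SList (insert (F, false) X) T) c) : Der (SList X T) c := by
  refine der_cut_insert ?_ h
  exact (Der.thm (t_negor_l F G)).mp (der_of_memS hm)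

lemma sep_step_or_f_r {X : Finset SForm} {T : Finset PFormula} {F G : PFormula} {c : PFormula}
    (hm : (PFormula.or F G, false) ∈ X)
    (h : Der (SList (insert (G, false) X) T) c) : Der (SList X T) c := by
  refine der_cut_insert ?_ h
  exact (Der.thm (t_negor_r F G)).mp (der_of_memS hm)

/-- Γ-side disjunction splitting -/
lemma sep_or_t_G {Γ Δ : Finset SForm} {Θ Λ : Finset PFormula} {F G : PFormula}
    (hm : (PFormula.or F G, true) ∈ Γ)
    (h1 : Sep A B (insert (F, true) Γ) Δ Θ Λ)
    (h2 : Sep A B (insert (G, true) Γ) Δ Θ Λ) : Sep A B Γ Δ Θ Λ := by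
  obtain ⟨C1, hp1, hn1, d1, e1⟩ := h1
  obtain ⟨C2, hp2, hn2, d2, e2⟩ := h2
  refine ⟨C1.or C2, ?_, ?_, ?_, ?_⟩
  · simp only [pvpos_or]; exact Set.union_subset hp1 hp2
  · simp only [pvneg_or]; exact Set.union_subset hn1 hn2
  · -- case split on F ∨ G
    have dd1 : Der (F :: SList Γ Θ) (C1.or C2) :=
      (Der.thm (t_or_inl C1 C2)).mp (der_SList_insert d1)
    have dd2 : Der (G :: SList Γ Θ) (C1.or C2) :=
      (Der.thm (t_or_inr C1 C2)).mp (der_SList_insert d2)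
    exact Der.cases (der_of_memS hm) dd1 dd2
  · exact ((Der.thm (t_or_neg C1 C2)).mp e1).mp e2

/-- Δ-side disjunction splitting -/
lemma sep_or_t_D {Γ Δ : Finset SForm} {Θ Λ : Finset PFormula} {F G : PFormula}
    (hm : (PFormula.or F G, true) ∈ Δ)
    (h1 : Sep A B Γ (insert (F, true) Δ) Θ Λ)
    (h2 : Sep A B Γ (insert (G, true) Δ) Θ Λ) : Sep A B Γ Δ Θ Λ := by
  obtain ⟨C1, hp1, hn1, d1, e1⟩ := h1
  obtain ⟨C2, hp2, hn2, d2, e2⟩ := h2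
  refine ⟨pand C1 C2, ?_, ?_, Der.and_intro d1 d2, ?_⟩
  · simp only [pvpos_pand]; exact Set.union_subset hp1 hp2
  · simp only [pvneg_pand]; exact Set.union_subset hn1 hn2
  · have dd1 : Der (F :: SList Δ Λ) ((pand C1 C2).neg) :=
      (Der.thm (t_andneg_l C1 C2)).mp (der_SList_insert e1)
    have dd2 : Der (G :: SList Δ Λ) ((pand C1 C2).neg) :=
      (Der.thm (t_andneg_r C1 C2)).mp (der_SList_insert e2)
    exact Der.cases (der_of_memS hm) dd1 dd2

end Main

-- boxed transfer machinery
lemma der_box_of_base {X : Finset SForm} {T : Finset PFormula}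
    (hT : ∀ x ∈ T, ∃ y, x = PFormula.box y) :
    ∀ x ∈ SList (boxTs X ∪ contents X) T, Der (SList X T) (x.box) := by
  intro x hx
  rcases mem_SList.1 hx with ⟨p, hp, rfl⟩ | hx
  · rcases Finset.mem_union.1 hp with hp | hp
    · obtain ⟨hpX, E, rfl⟩ := mem_boxTs.1 hp
      have h1 : Der (SList X T) (interp (PFormula.box E, true)) := der_of_memS hpX
      simp only [interp_t] at h1
      exact (Der.thm (four E)).mp h1
    · obtain ⟨E, hE, rfl⟩ := mem_contents.1 hp
      have h1 : Der (SList X T) (interp (PFormula.box E, true)) := der_of_memS hE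
      simpa using h1
  · obtain ⟨y, rfl⟩ := hT x hx
    exact (Der.thm (four y)).mp (der_of_memT hx)

lemma der_box_transfer {X : Finset SForm} {T : Finset PFormula}
    (hT : ∀ x ∈ T, ∃ y, x = PFormula.box y) {c : PFormula}
    (h : Der (SList (boxTs X ∪ contents X) T) c) : Der (SList X T) (c.box) := by
  refine Der.cut ?_ (Der.necList h)
  intro y hy
  obtain ⟨x, hx, rfl⟩ := List.mem_map.1 hy
  exact der_box_of_base hT x hx

lemma der_boxW {X : Finset SForm} {T : Finset PFormula}
    (hT : ∀ x ∈ T, ∃ y, x = PFormula.box y) (c : PFormula) :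
    Der ((c.box) :: SList X T)
      ((conj (c :: SList (boxTs X ∪ contents X) T)).box) := by
  refine Der.cut ?_ (conj_box (c :: SList (boxTs X ∪ contents X) T))
  intro y hy
  simp only [List.map_cons, List.mem_cons] at hy
  rcases hy with rfl | hy
  · exact Der.head
  · obtain ⟨x, hx, rfl⟩ := List.mem_map.1 hy
    exact (der_box_of_base hT x hx).lift

section Main2

variable {A B : PFormula}

/-- Γ-side modal propagation step -/
lemma prop_box_G {Γ Δ : Finset SForm} {Θ Λ : Finset PFormula} {D : PFormula}
    (hth : ∀ x ∈ Θ, ∃ y, x = PFormula.box y)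
    (hlam : ∀ x ∈ Λ, ∃ y, x = PFormula.box y)
    (hD : (PFormula.box D, false) ∈ Γ)
    (h : Sep A B (insert (D, false) (boxTs Γ ∪ contents Γ)) (boxTs Δ ∪ contents Δ)
          (insert (D.box) Θ) Λ) :
    Sep A B Γ Δ Θ Λ := by
  obtain ⟨C, hp, hn, c1, c2⟩ := h
  set base := boxTs Γ ∪ contents Γ with hbase
  -- d0 : push the insertion to the head
  have d0 : Der ((D.neg) :: (D.box) :: SList base Θ) C := by
    refine Der.weak ?_ c1
    intro x hx
    rcases mem_SList.1 hx with ⟨p, hp', rfl⟩ | hx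
    · rcases Finset.mem_insert.1 hp' with rfl | hp'
      · simp
      · exact List.mem_cons_of_mem _ (List.mem_cons_of_mem _ (mem_SList.2 (Or.inl ⟨p, hp', rfl⟩)))
    · rcases Finset.mem_insert.1 hx with rfl | hx
      · simp
      · exact List.mem_cons_of_mem _ (List.mem_cons_of_mem _ (mem_SList.2 (Or.inr hx)))
  have d1 : Der ((C.neg) :: (D.box) :: SList base Θ) D := by
    have e1 : Der ((D.box) :: SList base Θ) ((D.neg).imp C) := Der.imp_intro d0
    have e2 : Der ((D.box) :: SList base Θ) ((C.neg).imp D) :=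
      (Der.thm (t_con2 D C)).mp e1
    exact Der.imp_elim e2
  set LW : List PFormula := (C.neg) :: SList base Θ with hLW
  set W : PFormula := conj LW with hW
  have projW : ∀ x ∈ LW, Der [W, W.box, (D.box)] x := by
    intro x hx
    have h1 : GLLogic (W.imp x) := Der.of_mem hx
    exact (Der.thm h1).mp (Der.of_mem (by simp))
  have d2 : Der [W, W.box, (D.box)] D := by
    refine Der.cut ?_ d1
    intro x hx
    rcases List.mem_cons.1 hx with rfl | hx
    · exact projW _ (by rw [hLW]; simp)
    · rcases List.mem_cons.1 hx with rfl | hx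
      · exact Der.of_mem (by simp)
      · exact projW _ (List.mem_cons_of_mem _ hx)
  have d3 : GLLogic ((W.box).imp (D.box)) := glr d2
  have d4 : Der (SList Γ Θ) ((((C.neg).box)).imp (D.box)) := by
    refine Der.imp_intro ?_
    exact (Der.thm d3).mp (der_boxW hth (C.neg))
  have hnb : Der (SList Γ Θ) ((D.box).neg) := by
    have h1 : Der (SList Γ Θ) (interp (PFormula.box D, false)) := der_of_memS hD
    simpa using h1
  have d5 : Der (SList Γ Θ) (((C.neg).box).neg) :=
    ((Der.thm (t_mt ((C.neg).box) (D.box))).mp d4).mp hnb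
  have d6 : Der (SList Δ Λ) ((C.neg).box) := der_box_transfer hlam c2
  refine ⟨((C.neg).box).neg, ?_, ?_, d5, (Der.thm (t_dni _)).mp d6⟩
  · simp only [pvpos_neg, pvneg_box, pvneg_neg]; exact hp
  · simp only [pvneg_neg, pvpos_box, pvpos_neg]; exact hn

/-- Δ-side modal propagation step -/
lemma prop_box_D {Γ Δ : Finset SForm} {Θ Λ : Finset PFormula} {D : PFormula}
    (hth : ∀ x ∈ Θ, ∃ y, x = PFormula.box y)
    (hlam : ∀ x ∈ Λ, ∃ y, x = PFormula.box y)
    (hD : (PFormula.box D, false) ∈ Δ)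
    (h : Sep A B (boxTs Γ ∪ contents Γ) (insert (D, false) (boxTs Δ ∪ contents Δ))
          Θ (insert (D.box) Λ)) :
    Sep A B Γ Δ Θ Λ := by
  obtain ⟨C, hp, hn, c1, c2⟩ := h
  set base := boxTs Δ ∪ contents Δ with hbase
  have g1 : Der (SList Γ Θ) (C.box) := der_box_transfer hth c1
  have d0 : Der ((D.neg) :: (D.box) :: SList base Λ) (C.neg) := by
    refine Der.weak ?_ c2
    intro x hx
    rcases mem_SList.1 hx with ⟨p, hp', rfl⟩ | hx
    · rcases Finset.mem_insert.1 hp' with rfl | hp'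
      · simp
      · exact List.mem_cons_of_mem _ (List.mem_cons_of_mem _ (mem_SList.2 (Or.inl ⟨p, hp', rfl⟩)))
    · rcases Finset.mem_insert.1 hx with rfl | hx
      · simp
      · exact List.mem_cons_of_mem _ (List.mem_cons_of_mem _ (mem_SList.2 (Or.inr hx)))
  have d1 : Der (C :: (D.box) :: SList base Λ) D := by
    have e1 : Der ((D.box) :: SList base Λ) ((D.neg).imp (C.neg)) := Der.imp_intro d0
    have e2 : Der ((D.box) :: SList base Λ) (C.imp D) :=
      (Der.thm (t_con3 D C)).mp e1
    exact Der.imp_elim e2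
  set LW : List PFormula := C :: SList base Λ with hLW
  set W : PFormula := conj LW with hW
  have projW : ∀ x ∈ LW, Der [W, W.box, (D.box)] x := by
    intro x hx
    have h1 : GLLogic (W.imp x) := Der.of_mem hx
    exact (Der.thm h1).mp (Der.of_mem (by simp))
  have d2 : Der [W, W.box, (D.box)] D := by
    refine Der.cut ?_ d1
    intro x hx
    rcases List.mem_cons.1 hx with rfl | hx
    · exact projW _ (by rw [hLW]; simp)
    · rcases List.mem_cons.1 hx with rfl | hx
      · exact Der.of_mem (by simp)
      · exact projW _ (List.mem_cons_of_mem _ hx)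
  have d3 : GLLogic ((W.box).imp (D.box)) := glr d2
  have d4 : Der (SList Δ Λ) ((C.box).imp (D.box)) := by
    refine Der.imp_intro ?_
    exact (Der.thm d3).mp (der_boxW hlam C)
  have hnb : Der (SList Δ Λ) ((D.box).neg) := by
    have h1 : Der (SList Δ Λ) (interp (PFormula.box D, false)) := der_of_memS hD
    simpa using h1
  have d5 : Der (SList Δ Λ) ((C.box).neg) :=
    ((Der.thm (t_mt (C.box) (D.box))).mp d4).mp hnb
  refine ⟨C.box, ?_, ?_, g1, d5⟩
  · simp only [pvpos_box]; exact hp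
  · simp only [pvneg_box]; exact hn

end Main2

/-- propositional saturation of a set of signed formulas -/
def Saturated (X : Finset SForm) : Prop :=
  (∀ F s, (PFormula.neg F, s) ∈ X → (F, !s) ∈ X) ∧
  (∀ F G, (PFormula.or F G, true) ∈ X → (F, true) ∈ X ∨ (G, true) ∈ X) ∧
  (∀ F G, (PFormula.or F G, false) ∈ X → (F, false) ∈ X ∧ (G, false) ∈ X)

section Main3

variable {A B : PFormula}

open scoped Classical

lemma exists_sat_ext {Γ₀ Δ₀ : Finset SForm} {Θ Λ : Finset PFormula}
    (hG : Γ₀ ⊆ scl A true) (hD : Δ₀ ⊆ scl B false)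
    (hins : ¬ Sep A B Γ₀ Δ₀ Θ Λ) :
    ∃ Γ Δ : Finset SForm, Γ₀ ⊆ Γ ∧ Δ₀ ⊆ Δ ∧ Γ ⊆ scl A true ∧ Δ ⊆ scl B false ∧
      ¬ Sep A B Γ Δ Θ Λ ∧ Saturated Γ ∧ Saturated Δ := by
  set S : Finset (Finset SForm × Finset SForm) :=
    ((scl A true).powerset ×ˢ (scl B false).powerset).filter
      (fun q => Γ₀ ⊆ q.1 ∧ Δ₀ ⊆ q.2 ∧ ¬ Sep A B q.1 q.2 Θ Λ) with hS
  have hmemS : ∀ q : Finset SForm × Finset SForm,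
      q ∈ S ↔ (q.1 ⊆ scl A true ∧ q.2 ⊆ scl B false) ∧
        (Γ₀ ⊆ q.1 ∧ Δ₀ ⊆ q.2 ∧ ¬ Sep A B q.1 q.2 Θ Λ) := by
    intro q
    simp only [hS, Finset.mem_filter, Finset.mem_product, Finset.mem_powerset]
  have hne : S.Nonempty := ⟨(Γ₀, Δ₀), (hmemS _).2 ⟨⟨hG, hD⟩, subset_rfl, subset_rfl, hins⟩⟩
  obtain ⟨q, hqS, hmax⟩ := S.exists_max_image (fun q => q.1.card + q.2.card) hne
  obtain ⟨⟨hq1, hq2⟩, hq3, hq4, hq5⟩ := (hmemS q).1 hqS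
  -- addition lemmas
  have addG : ∀ p ∈ scl A true, p ∉ q.1 → Sep A B (insert p q.1) q.2 Θ Λ := by
    intro p hp hnot
    by_contra hsep
    have hmem : (insert p q.1, q.2) ∈ S := (hmemS _).2
      ⟨⟨Finset.insert_subset hp hq1, hq2⟩, hq3.trans (Finset.subset_insert _ _), hq4, hsep⟩
    have := hmax _ hmem
    simp only [Finset.card_insert_of_notMem hnot] at this
    omega
  have addD : ∀ p ∈ scl B false, p ∉ q.2 → Sep A B q.1 (insert p q.2) Θ Λ := by
    intro p hp hnot
    by_contra hsep
    have hmem : (q.1, insert p q.2) ∈ S := (hmemS _).2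
      ⟨⟨hq1, Finset.insert_subset hp hq2⟩, hq3, hq4.trans (Finset.subset_insert _ _), hsep⟩
    have := hmax _ hmem
    simp only [Finset.card_insert_of_notMem hnot] at this
    omega
  refine ⟨q.1, q.2, hq3, hq4, hq1, hq2, hq5, ⟨?_, ?_, ?_⟩, ⟨?_, ?_, ?_⟩⟩
  · -- Γ neg saturation
    intro F s hm
    by_contra hnot
    obtain ⟨C, c1, c2, c3, c4⟩ := addG (F, !s) (scl_neg (hq1 hm)) hnot
    exact hq5 ⟨C, c1, c2, sep_step_neg hm c3, c4⟩
  · -- Γ or-true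
    intro F G hm
    by_contra hnot
    push_neg at hnot
    have s1 := addG (F, true) (scl_or (hq1 hm)).1 hnot.1
    have s2 := addG (G, true) (scl_or (hq1 hm)).2 hnot.2
    exact hq5 (sep_or_t_G hm s1 s2)
  · -- Γ or-false
    intro F G hm
    constructor
    · by_contra hnot
      obtain ⟨C, c1, c2, c3, c4⟩ := addG (F, false) (scl_or (hq1 hm)).1 hnot
      exact hq5 ⟨C, c1, c2, sep_step_or_f_l hm c3, c4⟩
    · by_contra hnot
      obtain ⟨C, c1, c2, c3, c4⟩ := addG (G, false) (scl_or (hq1 hm)).2 hnot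
      exact hq5 ⟨C, c1, c2, sep_step_or_f_r hm c3, c4⟩
  · -- Δ neg saturation
    intro F s hm
    by_contra hnot
    obtain ⟨C, c1, c2, c3, c4⟩ := addD (F, !s) (scl_neg (hq2 hm)) hnot
    exact hq5 ⟨C, c1, c2, c3, sep_step_neg hm c4⟩
  · -- Δ or-true
    intro F G hm
    by_contra hnot
    push_neg at hnot
    have s1 := addD (F, true) (scl_or (hq2 hm)).1 hnot.1
    have s2 := addD (G, true) (scl_or (hq2 hm)).2 hnot.2
    exact hq5 (sep_or_t_D hm s1 s2)
  · -- Δ or-false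
    intro F G hm
    constructor
    · by_contra hnot
      obtain ⟨C, c1, c2, c3, c4⟩ := addD (F, false) (scl_or (hq2 hm)).1 hnot
      exact hq5 ⟨C, c1, c2, c3, sep_step_or_f_l hm c4⟩
    · by_contra hnot
      obtain ⟨C, c1, c2, c3, c4⟩ := addD (G, false) (scl_or (hq2 hm)).2 hnot
      exact hq5 ⟨C, c1, c2, c3, sep_step_or_f_r hm c4⟩

end Main3

lemma t_contradiction (a : PFormula) : GLLogic (a.imp ((a.neg).imp PFormula.falsum)) := by
  apply GLLogic.taut; intro v; cases h : evalP v a <;> simp [h]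

lemma der_contra {X : Finset SForm} {T : Finset PFormula} {F : PFormula}
    (h1 : (F, true) ∈ X) (h2 : (F, false) ∈ X) : Der (SList X T) PFormula.falsum := by
  have d1 : Der (SList X T) F := der_of_memS h1
  have d2 : Der (SList X T) (F.neg) := der_of_memS h2
  exact ((Der.thm (t_contradiction F)).mp d1).mp d2

section Sound

variable {W : Type} (R : W → W → Prop) (val : W → ℕ → Prop)

def force : PFormula → W → Prop
  | .var n, w => val w n
  | .falsum, _ => False
  | .neg a, w => ¬ force a w
  | .or a b, w => force a w ∨ force b w
  | .box a, w => ∀ w', R w w' → force a w'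

lemma force_imp {a b : PFormula} {w : W} :
    force R val (a.imp b) w ↔ (force R val a w → force R val b w) := by
  simp only [PFormula.imp, force]
  tauto

theorem gl_sound (htrans : Transitive R)
    (hwf : WellFounded (fun x y : W => R y x)) {a : PFormula} (h : GLLogic a) :
    ∀ w : W, force R val a w := by
  induction h with
  | @taut a h =>
      intro w
      classical
      let vv : PFormula → Bool := fun G => decide (force R val G w)
      have key : ∀ F : PFormula, evalP vv F = true ↔ force R val F w := by
        intro F
        induction F with
        | var n => simp [evalP, vv, force]; exact decide_eq_true_iff
        | falsum => simp [evalP, force]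
        | neg a iha => simp only [evalP, force, Bool.not_eq_true', ← iha]; simp [Bool.not_eq_true]
        | or a b iha ihb => simp [evalP, force, iha, ihb]
        | box a _ => simp [evalP, vv]
      exact (key a).1 (h vv)
  | @k a b =>
      intro w
      rw [force_imp]
      intro h1
      rw [force_imp]
      intro h2 w' hr
      have := h1 w' hr
      rw [force_imp] at this
      exact this (h2 w' hr)
  | @loeb a =>
      intro w
      rw [force_imp]
      intro h1 w' hr
      revert hr
      refine hwf.induction (C := fun u => R w u → force R val a u) w' ?_
      intro x ih hr
      have hx := h1 x hr
      rw [force_imp] at hx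
      exact hx (fun y hy => ih y hy (htrans hr hy))
  | mp h1 h2 ih1 ih2 =>
      intro w
      exact (force_imp R val).1 (ih1 w) (ih2 w)
  | nec h ih =>
      intro w w' _
      exact ih w'

end Sound

structure MWorld (A B : PFormula) where
  sG : Finset SForm
  sD : Finset SForm
  sT : Finset PFormula
  sL : Finset PFormula
  hG : sG ⊆ scl A true
  hD : sD ⊆ scl B false
  hTsub : sT ⊆ (scl A true).image Prod.fst
  hLsub : sL ⊆ (scl B false).image Prod.fst
  hTbox : ∀ x ∈ sT, ∃ y, x = PFormula.box y
  hLbox : ∀ x ∈ sL, ∃ y, x = PFormula.box y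
  satG : Saturated sG
  satD : Saturated sD
  insep : ¬ Sep A B sG sD sT sL

section Main4

variable {A B : PFormula}

def MR (w w' : MWorld A B) : Prop :=
  (∀ E, (PFormula.box E, true) ∈ w.sG → (E, true) ∈ w'.sG ∧ (PFormula.box E, true) ∈ w'.sG) ∧
  (∀ E, (PFormula.box E, true) ∈ w.sD → (E, true) ∈ w'.sD ∧ (PFormula.box E, true) ∈ w'.sD) ∧
  w.sT ⊆ w'.sT ∧ w.sL ⊆ w'.sL ∧ w.sT.card + w.sL.card < w'.sT.card + w'.sL.card

lemma MR_trans : Transitive (MR (A := A) (B := B)) := by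
  rintro x y z ⟨h1, h2, h3, h4, h5⟩ ⟨g1, g2, g3, g4, g5⟩
  refine ⟨?_, ?_, h3.trans g3, h4.trans g4, h5.trans g5⟩
  · intro E hE
    exact ⟨(g1 E (h1 E hE).2).1, (g1 E (h1 E hE).2).2⟩
  · intro E hE
    exact ⟨(g2 E (h2 E hE).2).1, (g2 E (h2 E hE).2).2⟩

noncomputable def mrank (w : MWorld A B) : ℕ :=
  ((scl A true).image Prod.fst).card + ((scl B false).image Prod.fst).card
    - (w.sT.card + w.sL.card)

lemma MR_rank {w w' : MWorld A B} (h : MR w w') : mrank w' < mrank w := by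
  obtain ⟨_, _, _, _, h5⟩ := h
  have b1 : w.sT.card ≤ ((scl A true).image Prod.fst).card := Finset.card_le_card w.hTsub
  have b2 : w.sL.card ≤ ((scl B false).image Prod.fst).card := Finset.card_le_card w.hLsub
  have b3 : w'.sT.card ≤ ((scl A true).image Prod.fst).card := Finset.card_le_card w'.hTsub
  have b4 : w'.sL.card ≤ ((scl B false).image Prod.fst).card := Finset.card_le_card w'.hLsub
  unfold mrank
  omega

lemma MR_cwf : WellFounded (fun x y : MWorld A B => MR y x) :=
  Subrelation.wf (fun h => MR_rank h) (measure mrank).wf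

lemma base_sub {X : Finset SForm} {a : PFormula} {c : Bool} (hX : X ⊆ scl a c) :
    boxTs X ∪ contents X ⊆ scl a c := by
  intro p hp
  rcases Finset.mem_union.1 hp with hp | hp
  · exact hX (Finset.filter_subset _ _ hp)
  · obtain ⟨E, hE, rfl⟩ := mem_contents.1 hp
    exact scl_box (hX hE)

lemma exists_succ_G (w : MWorld A B) {D0 : PFormula}
    (hD0 : (PFormula.box D0, false) ∈ w.sG) :
    ∃ w' : MWorld A B, MR w w' ∧ (D0, false) ∈ w'.sG := by
  have hTD : PFormula.box D0 ∉ w.sT := by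
    intro hmem
    apply w.insep
    apply sep_falsum
    have d1 : Der (SList w.sG w.sT) (interp (PFormula.box D0, false)) := der_of_memS hD0
    simp only [interp_f] at d1
    have d2 : Der (SList w.sG w.sT) (PFormula.box D0) := der_of_memT hmem
    exact ((Der.thm (t_contradiction _)).mp d2).mp d1
  have hins : ¬ Sep A B (insert (D0, false) (boxTs w.sG ∪ contents w.sG))
      (boxTs w.sD ∪ contents w.sD) (insert (D0.box) w.sT) w.sL :=
    fun h => w.insep (prop_box_G w.hTbox w.hLbox hD0 h)
  have hΓ0 : insert (D0, false) (boxTs w.sG ∪ contents w.sG) ⊆ scl A true :=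
    Finset.insert_subset (scl_box (w.hG hD0)) (base_sub w.hG)
  have hΔ0 : boxTs w.sD ∪ contents w.sD ⊆ scl B false := base_sub w.hD
  obtain ⟨Γ, Δ, hs1, hs2, hc1, hc2, hins', sat1, sat2⟩ := exists_sat_ext hΓ0 hΔ0 hins
  refine ⟨⟨Γ, Δ, insert (D0.box) w.sT, w.sL, hc1, hc2, ?_, w.hLsub, ?_, w.hLbox,
      sat1, sat2, hins'⟩, ⟨?_, ?_, ?_, ?_, ?_⟩, ?_⟩
  · refine Finset.insert_subset ?_ w.hTsub
    exact Finset.mem_image.2 ⟨(PFormula.box D0, false), w.hG hD0, rfl⟩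
  · intro x hx
    rcases Finset.mem_insert.1 hx with rfl | hx
    · exact ⟨D0, rfl⟩
    · exact w.hTbox x hx
  · intro E hE
    constructor
    · exact hs1 (Finset.mem_insert_of_mem (Finset.mem_union_right _
        (mem_contents.2 ⟨E, hE, rfl⟩)))
    · exact hs1 (Finset.mem_insert_of_mem (Finset.mem_union_left _
        (mem_boxTs.2 ⟨hE, E, rfl⟩)))
  · intro E hE
    constructor
    · exact hs2 (Finset.mem_union_right _ (mem_contents.2 ⟨E, hE, rfl⟩))
    · exact hs2 (Finset.mem_union_left _ (mem_boxTs.2 ⟨hE, E, rfl⟩))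
  · exact Finset.subset_insert _ _
  · exact subset_rfl
  · simp [Finset.card_insert_of_notMem hTD]
  · exact hs1 (Finset.mem_insert_self _ _)

lemma exists_succ_D (w : MWorld A B) {D0 : PFormula}
    (hD0 : (PFormula.box D0, false) ∈ w.sD) :
    ∃ w' : MWorld A B, MR w w' ∧ (D0, false) ∈ w'.sD := by
  have hTD : PFormula.box D0 ∉ w.sL := by
    intro hmem
    apply w.insep
    apply sep_notfalsum
    have d1 : Der (SList w.sD w.sL) (interp (PFormula.box D0, false)) := der_of_memS hD0
    simp only [interp_f] at d1
    have d2 : Der (SList w.sD w.sL) (PFormula.box D0) := der_of_memT hmem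
    exact ((Der.thm (t_contradiction _)).mp d2).mp d1
  have hins : ¬ Sep A B (boxTs w.sG ∪ contents w.sG)
      (insert (D0, false) (boxTs w.sD ∪ contents w.sD)) w.sT (insert (D0.box) w.sL) :=
    fun h => w.insep (prop_box_D w.hTbox w.hLbox hD0 h)
  have hΓ0 : boxTs w.sG ∪ contents w.sG ⊆ scl A true := base_sub w.hG
  have hΔ0 : insert (D0, false) (boxTs w.sD ∪ contents w.sD) ⊆ scl B false :=
    Finset.insert_subset (scl_box (w.hD hD0)) (base_sub w.hD)
  obtain ⟨Γ, Δ, hs1, hs2, hc1, hc2, hins', sat1, sat2⟩ := exists_sat_ext hΓ0 hΔ0 hins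
  refine ⟨⟨Γ, Δ, w.sT, insert (D0.box) w.sL, hc1, hc2, w.hTsub, ?_, w.hTbox, ?_,
      sat1, sat2, hins'⟩, ⟨?_, ?_, ?_, ?_, ?_⟩, ?_⟩
  · refine Finset.insert_subset ?_ w.hLsub
    exact Finset.mem_image.2 ⟨(PFormula.box D0, false), w.hD hD0, rfl⟩
  · intro x hx
    rcases Finset.mem_insert.1 hx with rfl | hx
    · exact ⟨D0, rfl⟩
    · exact w.hLbox x hx
  · intro E hE
    constructor
    · exact hs1 (Finset.mem_union_right _ (mem_contents.2 ⟨E, hE, rfl⟩))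
    · exact hs1 (Finset.mem_union_left _ (mem_boxTs.2 ⟨hE, E, rfl⟩))
  · intro E hE
    constructor
    · exact hs2 (Finset.mem_insert_of_mem (Finset.mem_union_right _
        (mem_contents.2 ⟨E, hE, rfl⟩)))
    · exact hs2 (Finset.mem_insert_of_mem (Finset.mem_union_left _
        (mem_boxTs.2 ⟨hE, E, rfl⟩)))
  · exact subset_rfl
  · exact Finset.subset_insert _ _
  · simp [Finset.card_insert_of_notMem hTD]
  · exact hs2 (Finset.mem_insert_self _ _)

def mval (w : MWorld A B) (n : ℕ) : Prop :=
  (PFormula.var n, true) ∈ w.sG ∨ (PFormula.var n, true) ∈ w.sD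

lemma clash {w : MWorld A B} {n : ℕ}
    (h1 : (PFormula.var n, true) ∈ w.sG ∨ (PFormula.var n, true) ∈ w.sD)
    (h2 : (PFormula.var n, false) ∈ w.sG ∨ (PFormula.var n, false) ∈ w.sD) : False := by
  rcases h1 with h1 | h1 <;> rcases h2 with h2 | h2
  · exact w.insep (sep_falsum (der_contra h1 h2))
  · -- (var n, true) ∈ sG, (var n, false) ∈ sD : separate by var n
    apply w.insep
    refine ⟨PFormula.var n, ?_, ?_, der_of_memS h1, ?_⟩
    · simp only [pvpos_var]
      rw [Set.singleton_subset_iff]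
      constructor
      · have := mem_scl_PS A true (w.hG h1)
        simpa [pvpos] using this
      · have := mem_scl_PS B false (w.hD h2)
        simpa [pvpos] using this
    · simp
    · have d := der_of_memS (T := w.sL) h2
      simpa using d
  · -- (var n, false) ∈ sG, (var n, true) ∈ sD : separate by ¬ var n
    apply w.insep
    refine ⟨(PFormula.var n).neg, ?_, ?_, ?_, ?_⟩
    · simp
    · simp only [pvneg_neg, pvpos_var]
      rw [Set.singleton_subset_iff]
      constructor
      · have := mem_scl_PS A true (w.hG h2)
        simpa [pvneg] using this
      · have := mem_scl_PS B false (w.hD h1)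
        simpa [pvneg] using this
    · have d := der_of_memS (T := w.sT) h2
      simpa using d
    · have d := der_of_memS (T := w.sL) h1
      simp only [interp_t] at d
      exact (Der.thm (t_dni _)).mp d
  · exact w.insep (sep_notfalsum (der_contra h1 h2))

theorem truth (F : PFormula) : ∀ w : MWorld A B,
    (((F, true) ∈ w.sG ∨ (F, true) ∈ w.sD) → force MR mval F w) ∧
    (((F, false) ∈ w.sG ∨ (F, false) ∈ w.sD) → ¬ force MR mval F w) := by
  induction F with
  | var n =>
      intro w
      exact ⟨fun h => h, fun h hf => clash hf h⟩
  | falsum =>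
      intro w
      constructor
      · rintro (h | h)
        · exact absurd (sep_falsum (by simpa using der_of_memS (T := w.sT) h)) w.insep
        · exact absurd (sep_notfalsum (by simpa using der_of_memS (T := w.sL) h)) w.insep
      · intro _ hf
        exact hf
  | neg F ih =>
      intro w
      constructor
      · intro h
        have h' : (F, false) ∈ w.sG ∨ (F, false) ∈ w.sD := by
          rcases h with h | h
          · exact Or.inl (by simpa using w.satG.1 F true h)
          · exact Or.inr (by simpa using w.satD.1 F true h)
        exact (ih w).2 h'
      · intro h hf
        have h' : (F, true) ∈ w.sG ∨ (F, true) ∈ w.sD := by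
          rcases h with h | h
          · exact Or.inl (by simpa using w.satG.1 F false h)
          · exact Or.inr (by simpa using w.satD.1 F false h)
        exact hf ((ih w).1 h')
  | or F G ihF ihG =>
      intro w
      constructor
      · intro h
        have h' : ((F, true) ∈ w.sG ∨ (F, true) ∈ w.sD) ∨
            ((G, true) ∈ w.sG ∨ (G, true) ∈ w.sD) := by
          rcases h with h | h
          · rcases w.satG.2.1 F G h with h' | h'
            · exact Or.inl (Or.inl h')
            · exact Or.inr (Or.inl h')
          · rcases w.satD.2.1 F G h with h' | h'
            · exact Or.inl (Or.inr h')
            · exact Or.inr (Or.inr h')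
        rcases h' with h' | h'
        · exact Or.inl ((ihF w).1 h')
        · exact Or.inr ((ihG w).1 h')
      · intro h hf
        have hF : (F, false) ∈ w.sG ∨ (F, false) ∈ w.sD := by
          rcases h with h | h
          · exact Or.inl (w.satG.2.2 F G h).1
          · exact Or.inr (w.satD.2.2 F G h).1
        have hG : (G, false) ∈ w.sG ∨ (G, false) ∈ w.sD := by
          rcases h with h | h
          · exact Or.inl (w.satG.2.2 F G h).2
          · exact Or.inr (w.satD.2.2 F G h).2
        rcases hf with hf | hf
        · exact (ihF w).2 hF hf
        · exact (ihG w).2 hG hf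
  | box F ih =>
      intro w
      constructor
      · intro h w' hr
        rcases h with h | h
        · exact (ih w').1 (Or.inl (hr.1 F h).1)
        · exact (ih w').1 (Or.inr (hr.2.1 F h).1)
      · intro h hf
        rcases h with h | h
        · obtain ⟨w', hr, hmem⟩ := exists_succ_G w h
          exact (ih w').2 (Or.inl hmem) (hf w' hr)
        · obtain ⟨w', hr, hmem⟩ := exists_succ_D w h
          exact (ih w').2 (Or.inr hmem) (hf w' hr)

end Main4

theorem main (A B : PFormula) (h : GLLogic (A.imp B)) :
    ∃ C : PFormula,
      pvpos C ⊆ pvpos A ∩ pvpos B ∧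
      pvneg C ⊆ pvneg A ∩ pvneg B ∧
      GLLogic (A.imp C) ∧ GLLogic (C.imp B) := by
  by_cases hsep : Sep A B {(A, true)} {(B, false)} ∅ ∅
  · obtain ⟨C, hp, hn, d1, d2⟩ := hsep
    refine ⟨C, hp, hn, ?_, ?_⟩
    · have e : SList ({(A, true)} : Finset SForm) (∅ : Finset PFormula) = [A] := by
        simp [SList]
      rw [e] at d1
      have h1 : GLLogic (A.imp (conj [A])) := by
        apply GLLogic.taut; intro v
        cases hv : evalP v A <;> simp [conj, hv]
      exact GLLogic.trans h1 d1
    · have e : SList ({(B, false)} : Finset SForm) (∅ : Finset PFormula) = [B.neg] := by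
        simp [SList]
      rw [e] at d2
      have h1 : GLLogic ((B.neg).imp (conj [B.neg])) := by
        apply GLLogic.taut; intro v
        cases hv : evalP v B <;> simp [conj, hv]
      exact GLLogic.mp (t_con3 B C) (GLLogic.trans h1 d2)
  · exfalso
    have hGsub : ({(A, true)} : Finset SForm) ⊆ scl A true := by
      intro p hp
      rw [Finset.mem_singleton] at hp
      subst hp
      exact scl_self A true
    have hDsub : ({(B, false)} : Finset SForm) ⊆ scl B false := by
      intro p hp
      rw [Finset.mem_singleton] at hp
      subst hp
      exact scl_self B false
    obtain ⟨Γ, Δ, hs1, hs2, hc1, hc2, hins, sat1, sat2⟩ := exists_sat_ext hGsub hDsub hsep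
    let w0 : MWorld A B := ⟨Γ, Δ, ∅, ∅, hc1, hc2, by simp, by simp, by simp, by simp,
      sat1, sat2, hins⟩
    have hforce : force MR mval (A.imp B) w0 := gl_sound MR mval MR_trans MR_cwf h w0
    rw [force_imp] at hforce
    have hA : force MR mval A w0 := (truth A w0).1 (Or.inl (hs1 (Finset.mem_singleton.2 rfl)))
    have hB : ¬ force MR mval B w0 := (truth B w0).2 (Or.inr (hs2 (Finset.mem_singleton.2 rfl)))
    exact hB (hforce hA)

end GLIP
/-- `GL` enjoys the Lyndon interpolation property. -/
theorem GL_LIP (A B : PFormula) (h : GLLogic (A.imp B)) :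
    ∃ C : PFormula,
      pvpos C ⊆ pvpos A ∩ pvpos B ∧
      pvneg C ⊆ pvneg A ∩ pvneg B ∧
      GLLogic (A.imp C) ∧ GLLogic (C.imp B) := by
  exact GLIP.main A B h
end
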